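/- arXiv:2203.10700 — 7 statements merged into one kernel-verified Lean document; each statement's English description precedes it below -/
import Mathlib

section
/- Let $T \in (0, \infty]$, let $p : \mathbb{R}^3 \to \mathbb{R}$ be measurable with $3 \le p^- \le p(x) \le p^+ < \infty$ for a.e. $x$, and let $V : (0,T) \times \mathbb{R}^3 \to \mathbb{R}^{3\times 3}$ be measurable. Define $G(t,x) = \big((1+|V(t,x)|^2)^{(p(x)-2)/2} - 1\big) V(t,x)$. If the three quantities $M_1 = \int_0^T\!\!\int_{\mathbb{R}^3} (1+|V|^2)^{(p(x)-2)/2} |V|^2 \,dx\,dt$, $M_2 = \int_0^T\!\!\int_{\mathbb{R}^3} |V|^2 \,dx\,dt$ and $M_3 = \int_0^T\!\!\int_{\mathbb{R}^3} |V|^{p^-} \,dx\,dt$ are finite, then $\int_0^T\!\!\int_{\mathbb{R}^3} |G(t,x)| \,dx\,dt \le C$ for a constant $C$ depending only on $p^-$, $p^+$, $M_1$, $M_2$ and $M_3$. -/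
open MeasureTheory
open scoped ENNReal NNReal

lemma key_ineq (u α : ℝ) (hu : 0 ≤ u) (hα : 0 ≤ α) :
    (1+u) ^ α - 1 ≤ max 1 α * u * (1+u) ^ α := by
  have hx : (1:ℝ) ≤ 1 + u := by linarith
  have hA1 : (1:ℝ) ≤ (1+u) ^ α := Real.one_le_rpow hx hα
  have hm : (1:ℝ) ≤ max 1 α := le_max_left _ _
  rcases le_total α 1 with h1 | h1
  · have h2 : (1+u) ^ α ≤ (1+u) ^ (1:ℝ) := Real.rpow_le_rpow_of_exponent_le hx h1
    rw [Real.rpow_one] at h2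
    nlinarith [mul_nonneg hu (sub_nonneg.2 hA1)]
  · have hαpos : (0:ℝ) < α := lt_of_lt_of_le one_pos h1
    have hw : (α-1)/α + 1/α = 1 := by field_simp; ring
    have hy := Real.geom_mean_le_arith_mean2_weighted
      (div_nonneg (by linarith) hαpos.le) (by positivity : (0:ℝ) ≤ 1/α)
      (by positivity : (0:ℝ) ≤ (1+u) ^ α) (zero_le_one) hw
    rw [Real.one_rpow, mul_one, mul_one] at hy
    have hb : ((1+u) ^ α) ^ ((α-1)/α) = (1+u) ^ (α-1) := by
      rw [← Real.rpow_mul (by linarith : (0:ℝ) ≤ 1+u)]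
      congr 1
      field_simp
    rw [hb] at hy
    have hBA : (1+u) ^ (α-1) * (1+u) = (1+u) ^ α := by
      rw [← Real.rpow_add_one (by positivity : (1:ℝ)+u ≠ 0)]
      ring_nf
    have hB0 : (0:ℝ) ≤ (1+u) ^ (α-1) := Real.rpow_nonneg (by linarith) _
    have hmax : max 1 α = α := max_eq_right h1
    rw [hmax]
    have hy' : α * (1+u) ^ (α-1) ≤ (α-1) * (1+u) ^ α + 1 := by
      have h := mul_le_mul_of_nonneg_left hy hαpos.le
      calc α * (1+u) ^ (α-1) = α * ((α-1)/α * (1+u)^α + 1/α) - ((α-1)*(1+u)^α + 1) + ((α-1)*(1+u)^α + 1) - (α * ((α-1)/α * (1+u)^α + 1/α) - α * (1+u)^(α-1)) := by ring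
        _ ≤ (α-1) * (1+u) ^ α + 1 := by
            have e : α * ((α-1)/α * (1+u)^α + 1/α) = (α-1)*(1+u)^α + 1 := by field_simp
            nlinarith [h]
    nlinarith [hy', hBA, mul_nonneg hB0 hu, mul_nonneg hαpos.le (mul_nonneg (mul_nonneg hB0 hu) hu)]

/-- Case 1 (`p⁻ ≥ 3`) of the key lemma: if `G = ((1+|V|²)^((p(x)-2)/2) - 1) V` and the
energies `M₁ = ∬ (1+|V|²)^((p(x)-2)/2) |V|²`, `M₂ = ∬ |V|²`, `M₃ = ∬ |V|^{p⁻}` are finite,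
then `∬_{(0,T)×ℝ³} |G| ≤ C` with `C` depending only on `p⁻, p⁺, M₁, M₂, M₃`.
Here `3 × 3` matrices are identified with `ℝ^{3×3}` carrying the (fixed) Euclidean norm,
and `T ∈ (0,∞]`. -/
theorem perturbation_L1_bound_case1 (pminus pplus : ℝ) (hpm : 3 ≤ pminus)
    (hpmM : pminus ≤ pplus) (M1 M2 M3 : ℝ≥0∞) (hM1 : M1 < ⊤) (hM2 : M2 < ⊤) (hM3 : M3 < ⊤) :
    ∃ C : ℝ≥0∞, C < ⊤ ∧
      ∀ (T : ℝ≥0∞), 0 < T →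
      ∀ (p : EuclideanSpace ℝ (Fin 3) → ℝ), Measurable p →
        (∀ᵐ x ∂(volume : Measure (EuclideanSpace ℝ (Fin 3))), pminus ≤ p x ∧ p x ≤ pplus) →
      ∀ (V : ℝ × EuclideanSpace ℝ (Fin 3) → EuclideanSpace ℝ (Fin (3 * 3))), Measurable V →
        (∫⁻ z in {z : ℝ × EuclideanSpace ℝ (Fin 3) | 0 < z.1 ∧ ENNReal.ofReal z.1 < T},
            ENNReal.ofReal ((1 + ‖V z‖ ^ 2) ^ ((p z.2 - 2) / 2) * ‖V z‖ ^ 2)) ≤ M1 →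
        (∫⁻ z in {z : ℝ × EuclideanSpace ℝ (Fin 3) | 0 < z.1 ∧ ENNReal.ofReal z.1 < T},
            ENNReal.ofReal (‖V z‖ ^ 2)) ≤ M2 →
        (∫⁻ z in {z : ℝ × EuclideanSpace ℝ (Fin 3) | 0 < z.1 ∧ ENNReal.ofReal z.1 < T},
            ENNReal.ofReal (‖V z‖ ^ pminus)) ≤ M3 →
        (∫⁻ z in {z : ℝ × EuclideanSpace ℝ (Fin 3) | 0 < z.1 ∧ ENNReal.ofReal z.1 < T},
            ENNReal.ofReal ‖((1 + ‖V z‖ ^ 2) ^ ((p z.2 - 2) / 2) - 1) • V z‖) ≤ C := by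
  set K : ℝ := max 1 ((pplus - 2) / 2) with hK
  have hK1 : (1:ℝ) ≤ K := le_max_left _ _
  refine ⟨ENNReal.ofReal K * M1, ENNReal.mul_lt_top ENNReal.ofReal_lt_top hM1, ?_⟩
  intro T hT p hpmeas hp V hV h1 h2 h3
  set S : Set (ℝ × EuclideanSpace ℝ (Fin 3)) :=
    {z | 0 < z.1 ∧ ENNReal.ofReal z.1 < T}
  -- transfer a.e. bound on p to the product space
  have hnull : (volume : Measure (ℝ × EuclideanSpace ℝ (Fin 3)))
      {z | ¬ (pminus ≤ p z.2 ∧ p z.2 ≤ pplus)} = 0 := by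
    have h0 : (volume : Measure (EuclideanSpace ℝ (Fin 3)))
        {x | ¬ (pminus ≤ p x ∧ p x ≤ pplus)} = 0 := ae_iff.1 hp
    have hset : {z : ℝ × EuclideanSpace ℝ (Fin 3) | ¬ (pminus ≤ p z.2 ∧ p z.2 ≤ pplus)}
        = Set.univ ×ˢ {x | ¬ (pminus ≤ p x ∧ p x ≤ pplus)} := by
      ext z; simp [Set.mem_prod]
    rw [hset, Measure.volume_eq_prod, Measure.prod_prod, h0, mul_zero]
  have hae : ∀ᵐ z ∂((volume : Measure (ℝ × EuclideanSpace ℝ (Fin 3))).restrict S),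
      pminus ≤ p z.2 ∧ p z.2 ≤ pplus := by
    refine Filter.Eventually.filter_mono (ae_mono Measure.restrict_le_self) ?_
    exact ae_iff.2 hnull
  calc (∫⁻ z in S, ENNReal.ofReal ‖((1 + ‖V z‖ ^ 2) ^ ((p z.2 - 2) / 2) - 1) • V z‖)
      ≤ ∫⁻ z in S, ENNReal.ofReal K *
          ENNReal.ofReal ((1 + ‖V z‖ ^ 2) ^ ((p z.2 - 2) / 2) * ‖V z‖ ^ 2) := by
        refine lintegral_mono_ae (hae.mono ?_)
        intro z hz
        obtain ⟨hz1, hz2⟩ := hz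
        set n : ℝ := ‖V z‖ with hn
        set α : ℝ := (p z.2 - 2) / 2 with hα
        have hn0 : 0 ≤ n := norm_nonneg _
        have hα0 : (0:ℝ) ≤ α := by simp only [hα]; linarith
        have hαK : max 1 α ≤ K := by
          apply max_le hK1
          apply le_max_of_le_right
          simp only [hα]; linarith
        have hu0 : (0:ℝ) ≤ n ^ 2 := sq_nonneg n
        have hA1 : (1:ℝ) ≤ (1 + n ^ 2) ^ α := Real.one_le_rpow (by linarith) hα0
        have hkey := key_ineq (n ^ 2) α hu0 hα0
        rw [← ENNReal.ofReal_mul (by positivity)]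
        apply ENNReal.ofReal_le_ofReal
        rw [norm_smul, Real.norm_eq_abs, abs_of_nonneg (by linarith)]
        rcases le_total n 1 with hle | hle
        · nlinarith [mul_nonneg (mul_nonneg (le_trans zero_le_one hK1) hu0) (sub_nonneg.2 hA1),
            mul_le_mul_of_nonneg_right hkey hn0,
            mul_le_mul_of_nonneg_right (mul_le_mul_of_nonneg_right hαK hu0)
              (le_trans zero_le_one hA1 : (0:ℝ) ≤ (1+n^2)^α)]
        · nlinarith [mul_le_mul_of_nonneg_left (mul_le_mul_of_nonneg_left hle
              (le_trans zero_le_one hA1 : (0:ℝ) ≤ (1+n^2)^α)) hn0,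
            mul_nonneg (le_trans zero_le_one hA1 : (0:ℝ) ≤ (1+n^2)^α) hu0]
    _ = ENNReal.ofReal K * ∫⁻ z in S,
          ENNReal.ofReal ((1 + ‖V z‖ ^ 2) ^ ((p z.2 - 2) / 2) * ‖V z‖ ^ 2) :=
        lintegral_const_mul' _ _ ENNReal.ofReal_ne_top
    _ ≤ ENNReal.ofReal K * M1 := mul_le_mul_right h1 _
end

section
/- Let $v : [0,\infty) \times \mathbb{R}^3 \to \mathbb{C}$ be measurable with $v(t,\cdot) \in L^2(\mathbb{R}^3;\mathbb{C})$ for every $t$, set $E(t) = \int_{\mathbb{R}^3} |v(t,\xi)|^2\,d\xi$, and suppose $E$ is locally absolutely continuous, $\int_{\mathbb{R}^3}|\xi|^2 |v(t,\xi)|^2\,d\xi < \infty$ for a.e. $t$, and there is $C_0 > 0$ with $E'(t) + C_0 \int_{\mathbb{R}^3} |\xi|^2 |v(t,\xi)|^2\,d\xi \le 0$ for a.e. $t > 0$. Let $f : [0,\infty) \to \mathbb{R}$ be continuously differentiable with $f(0) = 1$, $f(t) > 0$ and $f'(t) > 0$ for all $t$. Then for every $t \ge 0$: $f(t)\,E(t)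 \le E(0) + \int_0^t f'(s) \int_{L(s)} |v(s,\xi)|^2\,d\xi\,ds$, where $L(s) = \{\xi \in \mathbb{R}^3 : C_0 |\xi|^2 f(s) \le f'(s)\}$. -/
open MeasureTheory Set

lemma fsm_parts (f f' g : ℝ → ℝ) (t c : ℝ) (ht : 0 ≤ t)
    (hf : ∀ s ∈ Set.Icc (0:ℝ) t, HasDerivAt f (f' s) s)
    (hf'c : ContinuousOn f' (Set.Icc 0 t))
    (hg : IntervalIntegrable g volume 0 t) :
    ∫ s in (0:ℝ)..t, (f' s * (c + ∫ r in (0:ℝ)..s, g r) + f s * g s)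
      = f t * (c + ∫ s in (0:ℝ)..t, g s) - f 0 * c := by
  have huI : Set.uIcc (0:ℝ) t = Set.Icc 0 t := Set.uIcc_of_le ht
  have hfc : ContinuousOn f (Set.Icc 0 t) := fun x hx =>
    (hf x hx).continuousAt.continuousWithinAt
  set P : ℝ → ℝ := fun s => ∫ r in (0:ℝ)..s, g r with hP
  have hPc : ContinuousOn P (Set.Icc 0 t) := by
    rw [← huI]
    exact intervalIntegral.continuousOn_primitive_interval' hg
      (by rw [huI]; exact ⟨le_rfl, ht⟩)
  have hgInt : IntegrableOn g (Set.Ioc 0 t) := by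
    rw [← intervalIntegrable_iff_integrableOn_Ioc_of_le ht]; exact hg
  have I2 : IntervalIntegrable (fun s => f s * g s) volume 0 t :=
    hg.continuousOn_mul (by rw [huI]; exact hfc)
  have hfgInt : IntegrableOn (fun s => f s * g s) (Set.Ioc 0 t) := by
    rw [← intervalIntegrable_iff_integrableOn_Ioc_of_le ht]; exact I2
  have hf'Int : IntegrableOn f' (Set.Ioc 0 t) :=
    (hf'c.integrableOn_Icc).mono_set Set.Ioc_subset_Icc_self
  have I1a : IntervalIntegrable (fun s => f' s * c) volume 0 t :=
    (ContinuousOn.intervalIntegrable (by rw [huI]; exact hf'c.mul continuousOn_const))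
  have I1b : IntervalIntegrable (fun s => f' s * P s) volume 0 t :=
    (ContinuousOn.intervalIntegrable (by rw [huI]; exact hf'c.mul hPc))
  -- FTC for f' on [0,t]
  have hFTC : ∫ s in (0:ℝ)..t, f' s = f t - f 0 :=
    intervalIntegral.integral_eq_sub_of_hasDerivAt
      (fun x hx => hf x (by rwa [huI] at hx))
      (ContinuousOn.intervalIntegrable (by rw [huI]; exact hf'c))
  -- Fubini: ∫₀ᵗ f' s * P s = f t * P t - ∫₀ᵗ f s * g s
  have K : ∫ s in (0:ℝ)..t, f' s * P s = f t * P t - ∫ s in (0:ℝ)..t, f s * g s := by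
    set μ0 := (volume : Measure ℝ).restrict (Set.Ioc (0:ℝ) t) with hμ0
    set A : Set (ℝ × ℝ) := {p : ℝ × ℝ | p.2 ≤ p.1} with hA
    have hAmeas : MeasurableSet A := measurableSet_le measurable_snd measurable_fst
    have hprod : Integrable (fun p : ℝ × ℝ => f' p.1 * g p.2) (μ0.prod μ0) :=
      Integrable.mul_prod hf'Int hgInt
    have hind : Integrable
        (Function.uncurry fun s r => A.indicator (fun p : ℝ × ℝ => f' p.1 * g p.2) (s, r))
        (μ0.prod μ0) := by
      have := hprod.indicator hAmeas
      exact this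
    have swap := MeasureTheory.integral_integral_swap hind
    have hLHS : (∫ s, (∫ r, A.indicator (fun p : ℝ × ℝ => f' p.1 * g p.2) (s, r) ∂μ0) ∂μ0)
        = ∫ s in Set.Ioc (0:ℝ) t, f' s * P s := by
      refine setIntegral_congr_fun measurableSet_Ioc (fun s hs => ?_)
      have h1 : (fun r => A.indicator (fun p : ℝ × ℝ => f' p.1 * g p.2) (s, r))
          = Set.indicator (Set.Iic s) (fun r => f' s * g r) := by
        funext r
        by_cases h : r ≤ s <;>
          simp [Set.indicator_apply, hA, h, Set.mem_Iic]
      rw [h1, integral_indicator measurableSet_Iic,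
        Measure.restrict_restrict measurableSet_Iic]
      have h2 : Set.Iic s ∩ Set.Ioc 0 t = Set.Ioc 0 s := by
        ext r
        simp only [Set.mem_inter_iff, Set.mem_Iic, Set.mem_Ioc]
        constructor
        · rintro ⟨h1', h2', _⟩; exact ⟨h2', h1'⟩
        · rintro ⟨h1', h2'⟩; exact ⟨h2', h1', h2'.trans hs.2⟩
      rw [h2, MeasureTheory.integral_const_mul]
      exact congrArg (f' s * ·) (intervalIntegral.integral_of_le hs.1.le).symm
    have hRHS : (∫ r, (∫ s, A.indicator (fun p : ℝ × ℝ => f' p.1 * g p.2) (s, r) ∂μ0) ∂μ0)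
        = ∫ r in Set.Ioc (0:ℝ) t, (f t - f r) * g r := by
      refine setIntegral_congr_fun measurableSet_Ioc (fun r hr => ?_)
      have h1 : (fun s => A.indicator (fun p : ℝ × ℝ => f' p.1 * g p.2) (s, r))
          = Set.indicator (Set.Ici r) (fun s => f' s * g r) := by
        funext s
        by_cases h : r ≤ s <;>
          simp [Set.indicator_apply, hA, h, Set.mem_Ici]
      rw [h1, integral_indicator measurableSet_Ici,
        Measure.restrict_restrict measurableSet_Ici]
      have h2 : Set.Ici r ∩ Set.Ioc 0 t = Set.Icc r t := by
        ext s
        simp only [Set.mem_inter_iff, Set.mem_Ici, Set.mem_Ioc, Set.mem_Icc]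
        constructor
        · rintro ⟨h1', _, h3'⟩; exact ⟨h1', h3'⟩
        · rintro ⟨h1', h2'⟩; exact ⟨h1', hr.1.trans_le h1', h2'⟩
      rw [h2, MeasureTheory.integral_mul_const]
      have h3 : ∫ s in Set.Icc r t, f' s = f t - f r := by
        rw [MeasureTheory.integral_Icc_eq_integral_Ioc,
          ← intervalIntegral.integral_of_le hr.2]
        refine intervalIntegral.integral_eq_sub_of_hasDerivAt (fun x hx => ?_) ?_
        · rw [Set.uIcc_of_le hr.2] at hx
          exact hf x ⟨hr.1.le.trans hx.1, hx.2⟩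
        · refine ContinuousOn.intervalIntegrable ?_
          rw [Set.uIcc_of_le hr.2]
          exact hf'c.mono (Set.Icc_subset_Icc hr.1.le le_rfl)
      rw [h3]
    have step : ∫ s in Set.Ioc (0:ℝ) t, f' s * P s
        = ∫ r in Set.Ioc (0:ℝ) t, (f t - f r) * g r := by
      rw [← hLHS, ← hRHS]; exact swap
    have expand : ∫ r in Set.Ioc (0:ℝ) t, (f t - f r) * g r
        = f t * (∫ r in Set.Ioc (0:ℝ) t, g r) - ∫ r in Set.Ioc (0:ℝ) t, f r * g r := by
      have h4 : ∀ r, (f t - f r) * g r = f t * g r - f r * g r := fun r => by ring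
      simp_rw [h4]
      rw [MeasureTheory.integral_sub (hgInt.const_mul (f t)) hfgInt,
        MeasureTheory.integral_const_mul]
    rw [intervalIntegral.integral_of_le ht, step, expand]
    show f t * (∫ r in Set.Ioc (0:ℝ) t, g r) - ∫ r in Set.Ioc (0:ℝ) t, f r * g r
      = f t * (∫ r in (0:ℝ)..t, g r) - ∫ s in (0:ℝ)..t, f s * g s
    rw [intervalIntegral.integral_of_le ht, intervalIntegral.integral_of_le ht]
  -- assemble
  have split1 : (fun s => f' s * (c + P s) + f s * g s)
      = fun s => (f' s * c + f' s * P s) + f s * g s := by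
    funext s; ring
  show (∫ s in (0:ℝ)..t, (f' s * (c + P s) + f s * g s)) = f t * (c + P t) - f 0 * c
  calc ∫ s in (0:ℝ)..t, (f' s * (c + P s) + f s * g s)
      = (∫ s in (0:ℝ)..t, (f' s * c + f' s * P s)) + ∫ s in (0:ℝ)..t, f s * g s := by
        rw [split1]; exact intervalIntegral.integral_add (I1a.add I1b) I2
    _ = ((∫ s in (0:ℝ)..t, f' s * c) + ∫ s in (0:ℝ)..t, f' s * P s)
          + ∫ s in (0:ℝ)..t, f s * g s := by
        rw [intervalIntegral.integral_add I1a I1b]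
    _ = f t * (c + P t) - f 0 * c := by
        rw [K, intervalIntegral.integral_mul_const, hFTC]; ring

/-- The master inequality of the Fourier splitting method. If `E(t) = ∫ |v(t,ξ)|² dξ` is
locally absolutely continuous (encoded by `E t = E 0 + ∫₀ᵗ E'` with `E'` locally integrable)
and satisfies `E'(t) + C₀ ∫ |ξ|²|v(t,ξ)|² dξ ≤ 0` a.e., and `f` is `C¹` on `[0,∞)` with
`f(0)=1`, `f>0`, `f'>0`, then
`f(t) E(t) ≤ E(0) + ∫₀ᵗ f'(s) ∫_{L(s)} |v(s,ξ)|² dξ ds` with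
`L(s) = {ξ : C₀ |ξ|² f(s) ≤ f'(s)}`. -/
theorem fourier_splitting_master
    (v : ℝ → EuclideanSpace ℝ (Fin 3) → ℂ) (hv : Measurable (Function.uncurry v))
    (hL2 : ∀ t : ℝ, Integrable (fun ξ : EuclideanSpace ℝ (Fin 3) => ‖v t ξ‖ ^ 2))
    (C0 : ℝ) (hC0 : 0 < C0) (E' : ℝ → ℝ)
    (hE'int : ∀ t : ℝ, 0 ≤ t → IntervalIntegrable E' volume 0 t)
    (hEAC : ∀ t : ℝ, 0 ≤ t →
      (∫ ξ, ‖v t ξ‖ ^ 2) = (∫ ξ, ‖v 0 ξ‖ ^ 2) + ∫ s in (0:ℝ)..t, E' s)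
    (hDfin : ∀ᵐ t ∂(volume : Measure ℝ), 0 < t →
      Integrable (fun ξ : EuclideanSpace ℝ (Fin 3) => ‖ξ‖ ^ 2 * ‖v t ξ‖ ^ 2))
    (hdiss : ∀ᵐ t ∂(volume : Measure ℝ), 0 < t →
      E' t + C0 * ∫ ξ, ‖ξ‖ ^ 2 * ‖v t ξ‖ ^ 2 ≤ 0)
    (f f' : ℝ → ℝ) (hf : ∀ t : ℝ, 0 ≤ t → HasDerivAt f (f' t) t)
    (hf'c : ContinuousOn f' (Set.Ici 0))
    (hf0 : f 0 = 1) (hfpos : ∀ t : ℝ, 0 ≤ t → 0 < f t)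
    (hf'pos : ∀ t : ℝ, 0 ≤ t → 0 < f' t) :
    ∀ t : ℝ, 0 ≤ t →
      f t * ∫ ξ, ‖v t ξ‖ ^ 2 ≤
        (∫ ξ, ‖v 0 ξ‖ ^ 2) +
        ∫ s in (0:ℝ)..t, f' s *
          ∫ ξ in {ξ : EuclideanSpace ℝ (Fin 3) | C0 * ‖ξ‖ ^ 2 * f s ≤ f' s}, ‖v s ξ‖ ^ 2 := by
  intro t ht
  have huI : Set.uIcc (0:ℝ) t = Set.Icc 0 t := Set.uIcc_of_le ht
  set E0 : ℝ := ∫ ξ, ‖v 0 ξ‖ ^ 2 with hE0def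
  set P : ℝ → ℝ := fun s => ∫ r in (0:ℝ)..s, E' r with hPdef
  set G : ℝ → ℝ := fun s =>
    f' s * ∫ ξ in {ξ : EuclideanSpace ℝ (Fin 3) | C0 * ‖ξ‖ ^ 2 * f s ≤ f' s}, ‖v s ξ‖ ^ 2
    with hGdef
  have hfc : ContinuousOn f (Set.Ici 0) := fun x hx =>
    (hf x hx).continuousAt.continuousWithinAt
  have hfcIcc : ContinuousOn f (Set.Icc 0 t) := hfc.mono (fun x hx => hx.1)
  have hf'cIcc : ContinuousOn f' (Set.Icc 0 t) := hf'c.mono (fun x hx => hx.1)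
  have hvs : ∀ s : ℝ, Measurable fun ξ : EuclideanSpace ℝ (Fin 3) => ‖v s ξ‖ ^ 2 := by
    intro s
    exact ((hv.comp measurable_prodMk_left).norm).pow_const 2
  have hLmeas : ∀ s : ℝ,
      MeasurableSet {ξ : EuclideanSpace ℝ (Fin 3) | C0 * ‖ξ‖ ^ 2 * f s ≤ f' s} := by
    intro s
    exact measurableSet_le (((measurable_norm.pow_const 2).const_mul C0).mul_const (f s))
      measurable_const
  -- primitive continuity and integrability pieces
  have hPc : ContinuousOn P (Set.Icc 0 t) := by
    rw [← huI]
    exact intervalIntegral.continuousOn_primitive_interval' (hE'int t ht)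
      (by rw [huI]; exact ⟨le_rfl, ht⟩)
  have hI1 : IntervalIntegrable (fun s => f' s * (E0 + P s)) volume 0 t :=
    ContinuousOn.intervalIntegrable
      (by rw [huI]; exact hf'cIcc.mul (continuousOn_const.add hPc))
  have hI2 : IntervalIntegrable (fun s => f s * E' s) volume 0 t :=
    (hE'int t ht).continuousOn_mul (by rw [huI]; exact hfcIcc)
  have hI : IntervalIntegrable (fun s => f' s * (E0 + P s) + f s * E' s) volume 0 t :=
    hI1.add hI2
  -- nonnegativity helpers
  have hEfrm : ∀ s : ℝ, 0 ≤ s → E0 + P s = ∫ ξ, ‖v s ξ‖ ^ 2 := fun s hs => (hEAC s hs).symm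
  have hEnn : ∀ s : ℝ, (0:ℝ) ≤ ∫ ξ, ‖v s ξ‖ ^ 2 := fun s =>
    integral_nonneg (fun ξ => by positivity)
  have hGnn : ∀ s : ℝ, 0 ≤ s → 0 ≤ G s := by
    intro s hs
    exact mul_nonneg (hf'pos s hs).le (setIntegral_nonneg (hLmeas s) (fun ξ _ => by positivity))
  have hGle : ∀ s : ℝ, 0 ≤ s → G s ≤ f' s * (E0 + P s) := by
    intro s hs
    rw [hEfrm s hs]
    exact mul_le_mul_of_nonneg_left
      (setIntegral_le_integral (hL2 s) (Filter.Eventually.of_forall fun ξ => by positivity))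
      (hf'pos s hs).le
  -- measurability of G on (0, t]
  have hGaesm : AEStronglyMeasurable G ((volume : Measure ℝ).restrict (Set.Ioc 0 t)) := by
    set fe : ℝ → ℝ := fun s => f (max s 0) with hfe
    set f'e : ℝ → ℝ := fun s => f' (max s 0) with hf'e
    have hfec : Continuous fe :=
      hfc.comp_continuous (continuous_id.max continuous_const) (fun x => Set.mem_Ici.mpr (le_max_right _ _))
    have hf'ec : Continuous f'e :=
      hf'c.comp_continuous (continuous_id.max continuous_const) (fun x => Set.mem_Ici.mpr (le_max_right _ _))
    set A : Set (ℝ × EuclideanSpace ℝ (Fin 3)) :=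
      {p | C0 * ‖p.2‖ ^ 2 * fe p.1 ≤ f'e p.1} with hA
    have hAmeas : MeasurableSet A := by
      apply measurableSet_le
      · exact (((continuous_const.mul ((continuous_norm.comp continuous_snd).pow 2)).mul
          (hfec.comp continuous_fst)).measurable)
      · exact (hf'ec.comp continuous_fst).measurable
    have hW : Measurable fun p : ℝ × EuclideanSpace ℝ (Fin 3) => ‖v p.1 p.2‖ ^ 2 :=
      (hv.norm).pow_const 2
    have hH : StronglyMeasurable (A.indicator fun p => ‖v p.1 p.2‖ ^ 2) :=
      (hW.indicator hAmeas).stronglyMeasurable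
    have hinner : StronglyMeasurable fun s : ℝ =>
        ∫ ξ, A.indicator (fun p : ℝ × EuclideanSpace ℝ (Fin 3) => ‖v p.1 p.2‖ ^ 2) (s, ξ) :=
      hH.integral_prod_right'
    have hGm : AEStronglyMeasurable (fun s : ℝ =>
        f'e s * ∫ ξ, A.indicator (fun p : ℝ × EuclideanSpace ℝ (Fin 3) => ‖v p.1 p.2‖ ^ 2) (s, ξ))
        ((volume : Measure ℝ).restrict (Set.Ioc 0 t)) :=
      (hf'ec.aestronglyMeasurable.mul hinner.aestronglyMeasurable)
    refine hGm.congr ?_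
    refine (ae_restrict_mem measurableSet_Ioc).mono (fun s hs => ?_)
    have hmax : max s 0 = s := max_eq_left hs.1.le
    have h1 : (fun ξ => A.indicator
        (fun p : ℝ × EuclideanSpace ℝ (Fin 3) => ‖v p.1 p.2‖ ^ 2) (s, ξ))
        = Set.indicator {ξ : EuclideanSpace ℝ (Fin 3) | C0 * ‖ξ‖ ^ 2 * f s ≤ f' s}
          (fun ξ => ‖v s ξ‖ ^ 2) := by
      funext ξ
      by_cases h : C0 * ‖ξ‖ ^ 2 * f s ≤ f' s <;>
        simp [Set.indicator_apply, hA, hfe, hf'e, hmax, h]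
    show f'e s * (∫ ξ, A.indicator
        (fun p : ℝ × EuclideanSpace ℝ (Fin 3) => ‖v p.1 p.2‖ ^ 2) (s, ξ)) = G s
    rw [h1, integral_indicator (hLmeas s)]
    show f' (s ⊔ 0) * _ = _
    rw [hmax]
  have hGIoc : IntegrableOn G (Set.Ioc 0 t) := by
    refine Integrable.mono
      ((intervalIntegrable_iff_integrableOn_Ioc_of_le ht).mp hI1) hGaesm ?_
    refine (ae_restrict_mem measurableSet_Ioc).mono (fun s hs => ?_)
    have h1 : 0 ≤ G s := hGnn s hs.1.le
    have h2 : G s ≤ f' s * (E0 + P s) := hGle s hs.1.le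
    have h3 : 0 ≤ f' s * (E0 + P s) := by
      rw [hEfrm s hs.1.le]; exact mul_nonneg (hf'pos s hs.1.le).le (hEnn s)
    rw [Real.norm_eq_abs, Real.norm_eq_abs, abs_of_nonneg h1, abs_of_nonneg h3]
    exact h2
  have hJ : IntervalIntegrable G volume 0 t := by
    rw [intervalIntegrable_iff_integrableOn_Ioc_of_le ht]; exact hGIoc
  -- a.e. pointwise bound
  have hae : ∀ᵐ s ∂((volume : Measure ℝ).restrict (Set.Icc 0 t)),
      f' s * (E0 + P s) + f s * E' s ≤ G s := by
    have hne : ∀ᵐ s ∂(volume : Measure ℝ), s ≠ (0:ℝ) := by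
      rw [ae_iff]
      simp only [not_not]
      have : {a : ℝ | a = 0} = {0} := by ext x; simp
      rw [this]
      exact Real.volume_singleton
    filter_upwards [ae_restrict_of_ae hDfin, ae_restrict_of_ae hdiss,
      ae_restrict_of_ae hne, ae_restrict_mem measurableSet_Icc] with s hD hd hsne hsIcc
    have hs0 : 0 < s := lt_of_le_of_ne hsIcc.1 (Ne.symm hsne)
    specialize hD hs0
    specialize hd hs0
    rw [hEfrm s hs0.le]
    set Ls := {ξ : EuclideanSpace ℝ (Fin 3) | C0 * ‖ξ‖ ^ 2 * f s ≤ f' s} with hLs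
    have hsplit : (∫ ξ in Ls, ‖v s ξ‖ ^ 2) + ∫ ξ in Lsᶜ, ‖v s ξ‖ ^ 2 = ∫ ξ, ‖v s ξ‖ ^ 2 :=
      integral_add_compl (hLmeas s) (hL2 s)
    have hDnn : (0:ℝ) ≤ ∫ ξ, ‖ξ‖ ^ 2 * ‖v s ξ‖ ^ 2 :=
      integral_nonneg (fun ξ => by positivity)
    have hcompl : f' s * ∫ ξ in Lsᶜ, ‖v s ξ‖ ^ 2
        ≤ C0 * f s * ∫ ξ, ‖ξ‖ ^ 2 * ‖v s ξ‖ ^ 2 := by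
      calc f' s * ∫ ξ in Lsᶜ, ‖v s ξ‖ ^ 2
          = ∫ ξ in Lsᶜ, f' s * ‖v s ξ‖ ^ 2 := (MeasureTheory.integral_const_mul _ _).symm
        _ ≤ ∫ ξ in Lsᶜ, C0 * f s * (‖ξ‖ ^ 2 * ‖v s ξ‖ ^ 2) := by
            refine setIntegral_mono_on ((hL2 s).const_mul _).integrableOn
              ((hD.const_mul _).integrableOn) (hLmeas s).compl (fun ξ hξ => ?_)
            have hlt : f' s < C0 * ‖ξ‖ ^ 2 * f s := lt_of_not_ge hξ
            nlinarith [sq_nonneg ‖v s ξ‖, norm_nonneg (v s ξ)]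
        _ = C0 * f s * ∫ ξ in Lsᶜ, ‖ξ‖ ^ 2 * ‖v s ξ‖ ^ 2 := MeasureTheory.integral_const_mul _ _
        _ ≤ C0 * f s * ∫ ξ, ‖ξ‖ ^ 2 * ‖v s ξ‖ ^ 2 := by
            refine mul_le_mul_of_nonneg_left
              (setIntegral_le_integral hD (Filter.Eventually.of_forall fun ξ => by positivity))
              ?_
            have := hfpos s hs0.le
            positivity
    have hd2 : E' s ≤ -(C0 * ∫ ξ, ‖ξ‖ ^ 2 * ‖v s ξ‖ ^ 2) := by linarith
    have hdiss' : f s * E' s ≤ -(C0 * f s * ∫ ξ, ‖ξ‖ ^ 2 * ‖v s ξ‖ ^ 2) := by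
      have h := mul_le_mul_of_nonneg_left hd2 (hfpos s hs0.le).le
      nlinarith [h]
    have hexpand : f' s * ∫ ξ, ‖v s ξ‖ ^ 2
        = f' s * (∫ ξ in Ls, ‖v s ξ‖ ^ 2) + f' s * ∫ ξ in Lsᶜ, ‖v s ξ‖ ^ 2 := by
      rw [← hsplit]; ring
    have hGs : G s = f' s * ∫ ξ in Ls, ‖v s ξ‖ ^ 2 := rfl
    rw [hGs]
    linarith [hexpand, hcompl, hdiss']
  -- combine
  have hmono : (∫ s in (0:ℝ)..t, (f' s * (E0 + P s) + f s * E' s)) ≤ ∫ s in (0:ℝ)..t, G s :=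
    intervalIntegral.integral_mono_ae_restrict ht hI hJ hae
  have parts := fsm_parts f f' E' t E0 ht (fun s hs => hf s hs.1) hf'cIcc (hE'int t ht)
  rw [hEAC t ht]
  have : (∫ s in (0:ℝ)..t, G s)
      = ∫ s in (0:ℝ)..t, f' s *
        ∫ ξ in {ξ : EuclideanSpace ℝ (Fin 3) | C0 * ‖ξ‖ ^ 2 * f s ≤ f' s}, ‖v s ξ‖ ^ 2 := rfl
  rw [← this]
  rw [hf0] at parts
  linarith [parts, hmono]
end

section
/- Let $v : [0,\infty) \times \mathbb{R}^3 \to \mathbb{C}$ be measurable with $v(t,\cdot) \in L^2(\mathbb{R}^3;\mathbb{C})$ for every $t$, set $E(t) = \int_{\mathbb{R}^3} |v(t,\xi)|^2\,d\xi$, and suppose $E$ is locally absolutely continuous, $\int_{\mathbb{R}^3}|\xi|^2 |v(t,\xi)|^2\,d\xi < \infty$ for a.e. $t$, and there is $C_0 > 0$ with $E'(t) + C_0 \int_{\mathbb{R}^3} |\xi|^2 |v(t,\xi)|^2\,d\xi \le 0$ for a.e. $t > 0$. Assume moreover there is $K > 0$ such that for every $t \ge 0$ and almost every $\xi$: $|v(t,\xi)|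 \le K\big(1 + |\xi|(1+t)\big)$. Then there is a constant $C$, depending only on $K$, $C_0$ and $E(0)$, such that $E(t) \le C (1+t)^{-1/2}$ for all $t \ge 0$. -/
open MeasureTheory Set


private lemma G_hasDeriv {s : ℝ} (hs : 0 ≤ s) :
    HasDerivAt (fun x : ℝ => (1 + x) * Real.sqrt (1 + x)) ((3/2) * Real.sqrt (1 + s)) s := by
  have h0 : (0:ℝ) < 1 + s := by linarith
  have h1 : HasDerivAt (fun x : ℝ => 1 + x) 1 s := by
    simpa using (hasDerivAt_id s).const_add (1:ℝ)
  have h2 : HasDerivAt (fun x : ℝ => Real.sqrt (1 + x)) (1 / (2 * Real.sqrt (1 + s)) * 1) s :=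
    (Real.hasDerivAt_sqrt (ne_of_gt h0)).comp s h1
  have h3 : HasDerivAt (fun x : ℝ => (1 + x) * Real.sqrt (1 + x))
      (1 * Real.sqrt (1 + s) + (1 + s) * (1 / (2 * Real.sqrt (1 + s)) * 1)) s := h1.mul h2
  convert h3 using 1
  have hsq : 0 < Real.sqrt (1 + s) := Real.sqrt_pos.mpr h0
  have hss : Real.sqrt (1 + s) * Real.sqrt (1 + s) = 1 + s := Real.mul_self_sqrt h0.le
  field_simp
  nlinarith [hss]

private lemma ftcG {u t : ℝ} (hu : 0 ≤ u) (ht : 0 ≤ t) :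
    ∫ s in u..t, (3/2) * Real.sqrt (1 + s)
      = (1 + t) * Real.sqrt (1 + t) - (1 + u) * Real.sqrt (1 + u) := by
  refine intervalIntegral.integral_eq_sub_of_hasDerivAt (fun s hs => G_hasDeriv ?_) ?_
  · rcases Set.mem_uIcc.mp hs with ⟨h1, _⟩ | ⟨h1, _⟩ <;> linarith
  · exact (continuous_const.mul (Real.continuous_sqrt.comp
      (continuous_const.add continuous_id))).intervalIntegrable _ _

private lemma aux_swap (f : ℝ → ℝ) {t : ℝ} (ht : 0 ≤ t)
    (hint : IntervalIntegrable f volume 0 t)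
    (ftc : ∀ u : ℝ, 0 ≤ u → ∫ s in u..t, (3/2) * Real.sqrt (1 + s)
      = (1 + t) * Real.sqrt (1 + t) - (1 + u) * Real.sqrt (1 + u)) :
    ∫ s in (0:ℝ)..t, (3/2) * Real.sqrt (1 + s) * (∫ u in (0:ℝ)..s, f u)
      = ∫ u in (0:ℝ)..t, ((1+t) * Real.sqrt (1+t) - (1+u) * Real.sqrt (1+u)) * f u := by
  set g : ℝ → ℝ := fun s => (3/2) * Real.sqrt (1 + s) with hg
  have hgc : Continuous g := continuous_const.mul (Real.continuous_sqrt.comp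
      (continuous_const.add continuous_id))
  have hf' : IntegrableOn f (Ioc 0 t) volume :=
    (intervalIntegrable_iff_integrableOn_Ioc_of_le ht).mp hint
  have hg' : IntegrableOn g (Ioc 0 t) volume :=
    hgc.integrableOn_Ioc
  set μ := volume.restrict (Ioc (0:ℝ) t) with hμ
  have hbase : Integrable (fun p : ℝ × ℝ => g p.1 * f p.2) (μ.prod μ) :=
    Integrable.mul_prod hg' hf'
  set S : Set (ℝ × ℝ) := {p : ℝ × ℝ | p.2 ≤ p.1} with hSdef
  have hS : MeasurableSet S := measurableSet_le measurable_snd measurable_fst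
  have hF : Integrable (S.indicator fun p : ℝ × ℝ => g p.1 * f p.2) (μ.prod μ) :=
    hbase.indicator hS
  have key := integral_integral_swap (f := fun s u => S.indicator
      (fun p : ℝ × ℝ => g p.1 * f p.2) (s, u)) (μ := μ) (ν := μ) (by exact hF)
  have left : ∫ s in (0:ℝ)..t, g s * (∫ u in (0:ℝ)..s, f u)
      = ∫ s, ∫ u, S.indicator (fun p : ℝ × ℝ => g p.1 * f p.2) (s, u) ∂μ ∂μ := by
    rw [intervalIntegral.integral_of_le ht]
    refine setIntegral_congr_fun measurableSet_Ioc (fun s hs => ?_)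
    have h2 : ∀ u, S.indicator (fun p : ℝ × ℝ => g p.1 * f p.2) (s, u)
        = g s * (Iic s).indicator f u := by
      intro u; by_cases h : u ≤ s
      · simp [Set.indicator_apply, hSdef, h]
      · simp [Set.indicator_apply, hSdef, h]
    simp_rw [h2]
    rw [integral_const_mul, hμ, integral_indicator measurableSet_Iic,
      Measure.restrict_restrict measurableSet_Iic]
    have : Iic s ∩ Ioc 0 t = Ioc 0 s := by
      ext x; simp only [mem_inter_iff, mem_Iic, mem_Ioc]
      constructor
      · rintro ⟨h1, h2, h3⟩; exact ⟨h2, h1⟩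
      · rintro ⟨h1, h2⟩; exact ⟨h2, h1, h2.trans hs.2⟩
    rw [this, intervalIntegral.integral_of_le hs.1.le]
  have right : ∫ u, ∫ s, S.indicator (fun p : ℝ × ℝ => g p.1 * f p.2) (s, u) ∂μ ∂μ
      = ∫ u in (0:ℝ)..t, ((1+t) * Real.sqrt (1+t) - (1+u) * Real.sqrt (1+u)) * f u := by
    rw [intervalIntegral.integral_of_le ht]
    refine setIntegral_congr_fun measurableSet_Ioc (fun u hu => ?_)
    have h2 : ∀ s, S.indicator (fun p : ℝ × ℝ => g p.1 * f p.2) (s, u)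
        = (Ici u).indicator g s * f u := by
      intro s; by_cases h : u ≤ s
      · simp [Set.indicator_apply, hSdef, h]
      · simp [Set.indicator_apply, hSdef, h]
    simp_rw [h2]
    rw [integral_mul_const, hμ, integral_indicator measurableSet_Ici,
      Measure.restrict_restrict measurableSet_Ici]
    have : Ici u ∩ Ioc 0 t = Icc u t := by
      ext x; simp only [mem_inter_iff, mem_Ici, mem_Icc, mem_Ioc]
      constructor
      · rintro ⟨h1, _, h3⟩; exact ⟨h1, h3⟩
      · rintro ⟨h1, h2⟩; exact ⟨h1, lt_of_lt_of_le hu.1 h1, h2⟩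
    rw [this, integral_Icc_eq_integral_Ioc, ← intervalIntegral.integral_of_le hu.2,
      ftc u hu.1.le]
  rw [left, key, right]

private lemma aux_ibp (f : ℝ → ℝ) (E0 : ℝ) {t : ℝ} (ht : 0 ≤ t)
    (hint : IntervalIntegrable f volume 0 t)
    (ftc : ∀ u : ℝ, 0 ≤ u → ∫ s in u..t, (3/2) * Real.sqrt (1 + s)
      = (1 + t) * Real.sqrt (1 + t) - (1 + u) * Real.sqrt (1 + u))
    (swap : ∫ s in (0:ℝ)..t, (3/2) * Real.sqrt (1 + s) * (∫ u in (0:ℝ)..s, f u)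
      = ∫ u in (0:ℝ)..t, ((1+t) * Real.sqrt (1+t) - (1+u) * Real.sqrt (1+u)) * f u) :
    ∫ s in (0:ℝ)..t,
        ((3/2) * Real.sqrt (1+s) * (E0 + ∫ u in (0:ℝ)..s, f u) + (1+s) * Real.sqrt (1+s) * f s)
      = (1+t) * Real.sqrt (1+t) * (E0 + ∫ u in (0:ℝ)..t, f u) - E0 := by
  have hgc : Continuous fun s : ℝ => (3/2) * Real.sqrt (1 + s) :=
    continuous_const.mul (Real.continuous_sqrt.comp (continuous_const.add continuous_id))
  have hGc : Continuous fun s : ℝ => (1 + s) * Real.sqrt (1 + s) :=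
    (continuous_const.add continuous_id).mul
      (Real.continuous_sqrt.comp (continuous_const.add continuous_id))
  have hΦc : ContinuousOn (fun s => ∫ u in (0:ℝ)..s, f u) (uIcc 0 t) :=
    intervalIntegral.continuousOn_primitive_interval' hint left_mem_uIcc
  have I1 : IntervalIntegrable (fun s => (3/2) * Real.sqrt (1+s) * E0) volume 0 t :=
    ((hgc.mul continuous_const)).intervalIntegrable _ _
  have I2 : IntervalIntegrable (fun s => (3/2) * Real.sqrt (1+s) * (∫ u in (0:ℝ)..s, f u))
      volume 0 t := (ContinuousOn.mul (hgc.continuousOn) hΦc).intervalIntegrable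
  have I3 : IntervalIntegrable (fun s => (1+s) * Real.sqrt (1+s) * f s) volume 0 t :=
    hint.continuousOn_mul hGc.continuousOn
  have I4 : IntervalIntegrable (fun s => (1+t) * Real.sqrt (1+t) * f s) volume 0 t :=
    hint.const_mul _
  have split : ∀ s : ℝ, (3/2) * Real.sqrt (1+s) * (E0 + ∫ u in (0:ℝ)..s, f u)
        + (1+s) * Real.sqrt (1+s) * f s
      = ((3/2) * Real.sqrt (1+s) * E0)
        + ((3/2) * Real.sqrt (1+s) * (∫ u in (0:ℝ)..s, f u) + (1+s) * Real.sqrt (1+s) * f s) := by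
    intro s; ring
  simp_rw [split]
  rw [intervalIntegral.integral_add I1 (I2.add I3), intervalIntegral.integral_add I2 I3,
    intervalIntegral.integral_mul_const, ftc 0 le_rfl, swap]
  have splitsub : ∀ u : ℝ, ((1+t) * Real.sqrt (1+t) - (1+u) * Real.sqrt (1+u)) * f u
      = (1+t) * Real.sqrt (1+t) * f u - (1+u) * Real.sqrt (1+u) * f u := fun u => by ring
  simp_rw [splitsub]
  rw [intervalIntegral.integral_sub I4 I3, intervalIntegral.integral_const_mul]
  simp only [add_zero, Real.sqrt_one, mul_one]
  ring

private lemma stepA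
    (w : EuclideanSpace ℝ (Fin 3) → ℂ)
    (hL2 : Integrable (fun ξ : EuclideanSpace ℝ (Fin 3) => ‖w ξ‖ ^ 2))
    (hfin : Integrable (fun ξ : EuclideanSpace ℝ (Fin 3) => ‖ξ‖ ^ 2 * ‖w ξ‖ ^ 2))
    {C0 : ℝ} (hC0 : 0 < C0) {K : ℝ} (hK : 0 < K) {s : ℝ} (hs : 0 < s)
    (hptw : ∀ᵐ ξ ∂(volume : Measure (EuclideanSpace ℝ (Fin 3))),
      ‖w ξ‖ ≤ K * (1 + ‖ξ‖ * (1 + s)))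
    {e' : ℝ} (hd : e' + C0 * ∫ ξ, ‖ξ‖ ^ 2 * ‖w ξ‖ ^ 2 ≤ 0) :
    (3/2) * Real.sqrt (1+s) * (∫ ξ, ‖w ξ‖ ^ 2) + (1+s) * Real.sqrt (1+s) * e'
      ≤ (3/2) * (K ^ 2 * (1 + Real.sqrt (3/(2*C0))) ^ 2 * (Real.sqrt (3/(2*C0))) ^ 3 *
          (volume (Metric.ball (0 : EuclideanSpace ℝ (Fin 3)) 1)).toReal) := by
  obtain ⟨r, hrdef⟩ : ∃ x : ℝ, x = Real.sqrt (3 / (2 * C0)) := ⟨_, rfl⟩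
  have hr : 0 < r := hrdef ▸ Real.sqrt_pos.mpr (by positivity)
  have hr2 : r * r = 3 / (2 * C0) := hrdef ▸ Real.mul_self_sqrt (by positivity)
  obtain ⟨V, hVdef⟩ : ∃ x : ℝ, x = (volume (Metric.ball (0 : EuclideanSpace ℝ (Fin 3)) 1)).toReal := ⟨_, rfl⟩
  have hV : 0 ≤ V := hVdef ▸ ENNReal.toReal_nonneg
  obtain ⟨A, hAdef⟩ : ∃ x : ℝ, x = K ^ 2 * (1 + r) ^ 2 * r ^ 3 * V := ⟨_, rfl⟩
  have hA : 0 ≤ A := by rw [hAdef]; positivity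
  obtain ⟨Es, hEsdef⟩ : ∃ x : ℝ, x = ∫ ξ, ‖w ξ‖ ^ 2 := ⟨_, rfl⟩
  have h1s : (0:ℝ) < 1 + s := by linarith
  obtain ⟨σ, hσdef⟩ : ∃ x : ℝ, x = Real.sqrt (1 + s) := ⟨_, rfl⟩
  have hσ0 : 0 < σ := hσdef ▸ Real.sqrt_pos.mpr h1s
  have hσ2 : σ * σ = 1 + s := hσdef ▸ Real.mul_self_sqrt h1s.le
  have hσ1 : 1 ≤ σ := by nlinarith [hσ0, hσ2, hs]
  obtain ⟨ρ, hρdef⟩ : ∃ x : ℝ, x = r / σ := ⟨_, rfl⟩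
  have hρ : 0 < ρ := hρdef ▸ div_pos hr hσ0
  obtain ⟨S, hSdef⟩ : ∃ x : Set (EuclideanSpace ℝ (Fin 3)), x = Metric.closedBall 0 ρ := ⟨_, rfl⟩
  have hSm : MeasurableSet S := hSdef ▸ measurableSet_closedBall
  obtain ⟨B, hBdef⟩ : ∃ x : ℝ, x = ∫ ξ in S, ‖w ξ‖ ^ 2 := ⟨_, rfl⟩
  have hBnn : 0 ≤ B := hBdef ▸ integral_nonneg fun ξ => sq_nonneg _
  have hvol : (volume S).toReal = ρ ^ 3 * V := by
    rw [hSdef, Measure.addHaar_closedBall volume (0 : EuclideanSpace ℝ (Fin 3)) hρ.le,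
      finrank_euclideanSpace_fin, ENNReal.toReal_mul, ENNReal.toReal_ofReal (by positivity),
      ← hVdef]
  have hball : B ≤ (K * (1 + ρ * (1 + s))) ^ 2 * (ρ ^ 3 * V) := by
    have hb : ∀ᵐ ξ ∂(volume.restrict S), ‖w ξ‖ ^ 2 ≤ (K * (1 + ρ * (1 + s))) ^ 2 := by
      filter_upwards [ae_restrict_of_ae hptw, ae_restrict_mem hSm] with ξ h1 h2
      have hξ : ‖ξ‖ ≤ ρ := by
        rw [hSdef] at h2
        simpa [Metric.mem_closedBall, dist_zero_right] using h2
      have h3 : ‖w ξ‖ ≤ K * (1 + ρ * (1 + s)) := by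
        have hm := mul_le_mul_of_nonneg_left
          (mul_le_mul_of_nonneg_right hξ h1s.le) hK.le
        calc ‖w ξ‖ ≤ K * (1 + ‖ξ‖ * (1 + s)) := h1
          _ ≤ K * (1 + ρ * (1 + s)) := by nlinarith [hm]
      exact pow_le_pow_left₀ (norm_nonneg _) h3 2
    rw [hBdef]
    calc (∫ ξ in S, ‖w ξ‖ ^ 2) ≤ ∫ _ξ in S, (K * (1 + ρ * (1 + s))) ^ 2 :=
          integral_mono_ae (hL2.restrict)
            (integrableOn_const (hSdef ▸ measure_closedBall_lt_top.ne)) hb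
      _ = (volume S).toReal * (K * (1 + ρ * (1 + s))) ^ 2 := by
          rw [setIntegral_const, smul_eq_mul]; rfl
      _ = (K * (1 + ρ * (1 + s))) ^ 2 * (ρ ^ 3 * V) := by rw [hvol]; ring
  have hsplit : ρ ^ 2 * (Es - B) ≤ ∫ ξ, ‖ξ‖ ^ 2 * ‖w ξ‖ ^ 2 := by
    have hcomp : (∫ ξ in Sᶜ, ‖w ξ‖ ^ 2) = Es - B := by
      have h := integral_add_compl hSm hL2
      rw [hEsdef, hBdef, ← h]
      ring
    have h1 : ∫ ξ in Sᶜ, ρ ^ 2 * ‖w ξ‖ ^ 2 ≤ ∫ ξ in Sᶜ, ‖ξ‖ ^ 2 * ‖w ξ‖ ^ 2 := by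
      refine setIntegral_mono_on ((hL2.const_mul _).integrableOn)
        hfin.integrableOn hSm.compl (fun ξ hξ => ?_)
      have hρξ : ρ ≤ ‖ξ‖ := by
        by_contra hcon
        push_neg at hcon
        exact hξ (by rw [hSdef]; simp [Metric.mem_closedBall, dist_zero_right, hcon.le])
      exact mul_le_mul_of_nonneg_right (pow_le_pow_left₀ hρ.le hρξ 2) (sq_nonneg _)
    have h2 : ∫ ξ in Sᶜ, ‖ξ‖ ^ 2 * ‖w ξ‖ ^ 2 ≤ ∫ ξ, ‖ξ‖ ^ 2 * ‖w ξ‖ ^ 2 :=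
      setIntegral_le_integral hfin (Filter.Eventually.of_forall fun ξ => by positivity)
    have h3 : ∫ ξ in Sᶜ, ρ ^ 2 * ‖w ξ‖ ^ 2 = ρ ^ 2 * (Es - B) := by
      rw [integral_const_mul, hcomp]
    linarith
  have hd3 : e' ≤ -C0 * (ρ ^ 2 * (Es - B)) := by
    have hm := mul_le_mul_of_nonneg_left hsplit hC0.le
    linarith
  have hρσ : ρ * σ = r := by rw [hρdef]; field_simp
  have hρ1s : ρ * (1 + s) = r * σ := by rw [← hσ2, hρdef]; field_simp
  have hC0ρ : C0 * (ρ * ρ) * (σ * σ) = 3 / 2 := by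
    have h : ρ * ρ * (σ * σ) = r * r := by linear_combination (ρ * σ + r) * hρσ
    rw [mul_assoc C0, h, hr2]; field_simp
  have hσB : σ * B ≤ A := by
    have h4a : 1 + ρ * (1 + s) ≤ (1 + r) * σ := by rw [hρ1s]; linarith
    have h4nn : (0:ℝ) ≤ 1 + ρ * (1 + s) := by positivity
    have h4 : (1 + ρ * (1 + s)) ^ 2 ≤ (1 + r) ^ 2 * (σ * σ) := by
      calc (1 + ρ * (1 + s)) ^ 2 ≤ ((1 + r) * σ) ^ 2 := pow_le_pow_left₀ h4nn h4a 2
        _ = (1 + r) ^ 2 * (σ * σ) := by ring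
    have hρ3 : ρ ^ 3 * (σ * σ * σ) = r ^ 3 := by
      linear_combination (ρ ^ 2 * σ ^ 2 + ρ * σ * r + r ^ 2) * hρσ
    have expand : σ * ((K * (1 + ρ * (1 + s))) ^ 2 * (ρ ^ 3 * V))
        = K ^ 2 * ((1 + ρ * (1 + s)) ^ 2) * (σ * ρ ^ 3) * V := by ring
    have h6 : K ^ 2 * ((1 + ρ * (1 + s)) ^ 2) * (σ * ρ ^ 3) * V
        ≤ K ^ 2 * ((1 + r) ^ 2 * (σ * σ)) * (σ * ρ ^ 3) * V := by
      have hnn : (0:ℝ) ≤ K ^ 2 * (σ * ρ ^ 3) * V := by positivity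
      have hm := mul_le_mul_of_nonneg_right h4 hnn
      calc K ^ 2 * ((1 + ρ * (1 + s)) ^ 2) * (σ * ρ ^ 3) * V
          = (1 + ρ * (1 + s)) ^ 2 * (K ^ 2 * (σ * ρ ^ 3) * V) := by ring
        _ ≤ ((1 + r) ^ 2 * (σ * σ)) * (K ^ 2 * (σ * ρ ^ 3) * V) := hm
        _ = K ^ 2 * ((1 + r) ^ 2 * (σ * σ)) * (σ * ρ ^ 3) * V := by ring
    calc σ * B ≤ σ * ((K * (1 + ρ * (1 + s))) ^ 2 * (ρ ^ 3 * V)) :=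
          mul_le_mul_of_nonneg_left hball hσ0.le
      _ = K ^ 2 * ((1 + ρ * (1 + s)) ^ 2) * (σ * ρ ^ 3) * V := expand
      _ ≤ K ^ 2 * ((1 + r) ^ 2 * (σ * σ)) * (σ * ρ ^ 3) * V := h6
      _ = K ^ 2 * (1 + r) ^ 2 * (ρ ^ 3 * (σ * σ * σ)) * V := by ring
      _ = A := by rw [hρ3, hAdef]
  have hmain : (1 + s) * σ * e' ≤ -(3/2) * σ * Es + (3/2) * (σ * B) := by
    have hpos : 0 < (1 + s) * σ := by positivity
    have h8 : (1 + s) * σ * e' ≤ (1 + s) * σ * (-C0 * (ρ ^ 2 * (Es - B))) :=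
      mul_le_mul_of_nonneg_left hd3 hpos.le
    have h9 : (1 + s) * σ * (-C0 * (ρ ^ 2 * (Es - B)))
        = -(C0 * (ρ * ρ) * (σ * σ)) * σ * (Es - B) := by rw [← hσ2]; ring
    rw [h9, hC0ρ] at h8
    linarith
  have hfinal : (3/2) * (σ * B) ≤ (3/2) * A := by linarith
  rw [← hσdef, ← hEsdef, ← hrdef, ← hVdef, ← hAdef]
  calc (3/2) * σ * Es + (1 + s) * σ * e'
      ≤ (3/2) * σ * Es + (-(3/2) * σ * Es + (3/2) * (σ * B)) := by linarith
    _ = (3/2) * (σ * B) := by ring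
    _ ≤ (3/2) * A := hfinal


/-- First bootstrap step of the Fourier splitting argument. If `E(t) = ∫ |v(t,ξ)|² dξ` is
locally absolutely continuous (encoded by `E t = E 0 + ∫₀ᵗ E'` with `E'` locally integrable),
satisfies the dissipation inequality `E'(t) + C₀ ∫ |ξ|²|v(t,ξ)|² dξ ≤ 0` a.e., and
`|v(t,ξ)| ≤ K (1 + |ξ|(1+t))` for all `t ≥ 0` and a.e. `ξ`, then
`E(t) ≤ C (1+t)^{-1/2}` for a constant `C = C(K, C₀, E(0))`. -/
theorem decay_first_step
    (v : ℝ → EuclideanSpace ℝ (Fin 3) → ℂ) (hv : Measurable (Function.uncurry v))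
    (hL2 : ∀ t : ℝ, Integrable (fun ξ : EuclideanSpace ℝ (Fin 3) => ‖v t ξ‖ ^ 2))
    (C0 : ℝ) (hC0 : 0 < C0) (E' : ℝ → ℝ)
    (hE'int : ∀ t : ℝ, 0 ≤ t → IntervalIntegrable E' volume 0 t)
    (hEAC : ∀ t : ℝ, 0 ≤ t →
      (∫ ξ, ‖v t ξ‖ ^ 2) = (∫ ξ, ‖v 0 ξ‖ ^ 2) + ∫ s in (0:ℝ)..t, E' s)
    (hDfin : ∀ᵐ t ∂(volume : Measure ℝ), 0 < t →
      Integrable (fun ξ : EuclideanSpace ℝ (Fin 3) => ‖ξ‖ ^ 2 * ‖v t ξ‖ ^ 2))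
    (hdiss : ∀ᵐ t ∂(volume : Measure ℝ), 0 < t →
      E' t + C0 * ∫ ξ, ‖ξ‖ ^ 2 * ‖v t ξ‖ ^ 2 ≤ 0)
    (K : ℝ) (hK : 0 < K)
    (hptw : ∀ t : ℝ, 0 ≤ t →
      ∀ᵐ ξ ∂(volume : Measure (EuclideanSpace ℝ (Fin 3))),
        ‖v t ξ‖ ≤ K * (1 + ‖ξ‖ * (1 + t))) :
    ∃ C : ℝ, 0 < C ∧ ∀ t : ℝ, 0 ≤ t →
      (∫ ξ, ‖v t ξ‖ ^ 2) ≤ C * (1 + t) ^ (-(1 / 2) : ℝ) := by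
  obtain ⟨A, hAdef⟩ : ∃ x : ℝ, x = K ^ 2 * (1 + Real.sqrt (3/(2*C0))) ^ 2 *
      (Real.sqrt (3/(2*C0))) ^ 3 *
      (volume (Metric.ball (0 : EuclideanSpace ℝ (Fin 3)) 1)).toReal := ⟨_, rfl⟩
  have hA : 0 ≤ A := by
    rw [hAdef]
    positivity
  obtain ⟨E0, hE0def⟩ : ∃ x : ℝ, x = ∫ ξ, ‖v 0 ξ‖ ^ 2 := ⟨_, rfl⟩
  have hE0 : 0 ≤ E0 := hE0def ▸ integral_nonneg fun _ => sq_nonneg _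
  refine ⟨E0 + (3/2) * A + 1, by linarith, fun t ht => ?_⟩
  have hae : ∀ᵐ s ∂(volume : Measure ℝ), 0 < s →
      (3/2) * Real.sqrt (1+s) * (∫ ξ, ‖v s ξ‖ ^ 2)
        + (1+s) * Real.sqrt (1+s) * E' s ≤ (3/2) * A := by
    filter_upwards [hDfin, hdiss] with s h1 h2 hs
    rw [hAdef]
    exact stepA (v s) (hL2 s) (h1 hs) hC0 hK hs (hptw s hs.le) (h2 hs)
  have hint := hE'int t ht
  have hftc : ∀ u : ℝ, 0 ≤ u → ∫ s in u..t, (3/2) * Real.sqrt (1 + s)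
      = (1 + t) * Real.sqrt (1 + t) - (1 + u) * Real.sqrt (1 + u) := fun u hu => ftcG hu ht
  have hident := aux_ibp E' E0 ht hint hftc (aux_swap E' ht hint hftc)
  have hEt : (∫ ξ, ‖v t ξ‖ ^ 2) = E0 + ∫ u in (0:ℝ)..t, E' u := by
    rw [hE0def]; exact hEAC t ht
  have hgc : Continuous fun s : ℝ => (3/2) * Real.sqrt (1 + s) :=
    continuous_const.mul (Real.continuous_sqrt.comp (continuous_const.add continuous_id))
  have hGc : Continuous fun s : ℝ => (1 + s) * Real.sqrt (1 + s) :=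
    (continuous_const.add continuous_id).mul
      (Real.continuous_sqrt.comp (continuous_const.add continuous_id))
  have hΦc : ContinuousOn (fun s => E0 + ∫ u in (0:ℝ)..s, E' u) (Set.uIcc 0 t) :=
    continuousOn_const.add
      (intervalIntegral.continuousOn_primitive_interval' hint left_mem_uIcc)
  have IL : IntervalIntegrable (fun s =>
      (3/2) * Real.sqrt (1+s) * (E0 + ∫ u in (0:ℝ)..s, E' u)
        + (1+s) * Real.sqrt (1+s) * E' s) volume 0 t :=
    ((hgc.continuousOn.mul hΦc).intervalIntegrable).add
      (hint.continuousOn_mul hGc.continuousOn)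
  have h0ne : ∀ᵐ x ∂(volume : Measure ℝ), x ≠ (0:ℝ) := by
    refine ae_iff.mpr ?_
    simpa [not_not] using measure_singleton (0:ℝ)
  have hmono : (∫ s in (0:ℝ)..t,
        ((3/2) * Real.sqrt (1+s) * (E0 + ∫ u in (0:ℝ)..s, E' u)
          + (1+s) * Real.sqrt (1+s) * E' s))
      ≤ ∫ _s in (0:ℝ)..t, (3/2) * A := by
    refine intervalIntegral.integral_mono_ae_restrict ht IL intervalIntegrable_const ?_
    filter_upwards [ae_restrict_mem measurableSet_Icc, ae_restrict_of_ae hae,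
      ae_restrict_of_ae h0ne] with s hmem h1 h2
    have hs : 0 < s := lt_of_le_of_ne hmem.1 (Ne.symm h2)
    have hEs : E0 + (∫ u in (0:ℝ)..s, E' u) = ∫ ξ, ‖v s ξ‖ ^ 2 := by
      rw [hE0def]; exact (hEAC s hmem.1).symm
    calc (3/2) * Real.sqrt (1+s) * (E0 + ∫ u in (0:ℝ)..s, E' u)
          + (1+s) * Real.sqrt (1+s) * E' s
        = (3/2) * Real.sqrt (1+s) * (∫ ξ, ‖v s ξ‖ ^ 2)
          + (1+s) * Real.sqrt (1+s) * E' s := by rw [hEs]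
      _ ≤ (3/2) * A := h1 hs
  rw [hident, intervalIntegral.integral_const, smul_eq_mul, sub_zero] at hmono
  have hfin : (1+t) * Real.sqrt (1+t) * (∫ ξ, ‖v t ξ‖ ^ 2) ≤ E0 + t * ((3/2) * A) := by
    rw [hEt]; linarith
  have h1t : (0:ℝ) < 1 + t := by linarith
  have hst : 0 < Real.sqrt (1+t) := Real.sqrt_pos.mpr h1t
  obtain ⟨Et, hEtdef⟩ : ∃ x : ℝ, x = ∫ ξ, ‖v t ξ‖ ^ 2 := ⟨_, rfl⟩
  rw [← hEtdef] at hfin ⊢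
  have hC1 : E0 + t * ((3/2) * A) ≤ (E0 + (3/2) * A + 1) * (1+t) := by
    nlinarith [mul_nonneg hE0 ht, mul_nonneg hA ht]
  have hprod : (1+t) * (Real.sqrt (1+t) * Et) ≤ (1+t) * (E0 + (3/2) * A + 1) := by
    calc (1+t) * (Real.sqrt (1+t) * Et) = (1+t) * Real.sqrt (1+t) * Et := by ring
      _ ≤ E0 + t * ((3/2) * A) := hfin
      _ ≤ (E0 + (3/2) * A + 1) * (1+t) := hC1
      _ = (1+t) * (E0 + (3/2) * A + 1) := by ring
  have h3 : Real.sqrt (1+t) * Et ≤ E0 + (3/2) * A + 1 :=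
    le_of_mul_le_mul_left hprod h1t
  have hrw : (1+t) ^ (-(1 / 2) : ℝ) = (Real.sqrt (1+t))⁻¹ := by
    rw [Real.rpow_neg h1t.le, ← Real.sqrt_eq_rpow]
  rw [hrw, ← div_eq_mul_inv, le_div_iff₀ hst]
  linarith
end

section
/- Let $v : [0,\infty) \times \mathbb{R}^3 \to \mathbb{C}$ be measurable with $v(t,\cdot) \in L^2(\mathbb{R}^3;\mathbb{C})$ for every $t$, set $E(t) = \int_{\mathbb{R}^3} |v(t,\xi)|^2\,d\xi$, and suppose $E$ is locally absolutely continuous, $\int_{\mathbb{R}^3}|\xi|^2 |v(t,\xi)|^2\,d\xi < \infty$ for a.e. $t$, and there is $C_0 > 0$ with $E'(t) + C_0 \int_{\mathbb{R}^3} |\xi|^2 |v(t,\xi)|^2\,d\xi \le 0$ for a.e. $t > 0$. Assume moreover there is $K > 0$ such that for every $t \ge 0$ and almost every $\xi$: $|v(t,\xi)| \le K\big(1 + |\xi|(1+t)^{1/2}\big)$. Then there is a constant $C$, depending only on $K$, $C_0$ and $E(0)$, such that $E(t) \le C (1+t)^{-3/2}$ for all $t \ge 0$. -/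
open MeasureTheory Metric

/-- Fundamental step: if `E t = E 0 + ∫₀ᵗ E'` and `E' ≤ M` a.e. on `(t₁,t₂]`, then
`E t₂ ≤ E t₁ + M (t₂ - t₁)`. -/
private lemma aux_step (E E' : ℝ → ℝ)
    (hint : ∀ t : ℝ, 0 ≤ t → IntervalIntegrable E' volume 0 t)
    (hAC : ∀ t : ℝ, 0 ≤ t → E t = E 0 + ∫ s in (0:ℝ)..t, E' s)
    {t₁ t₂ M : ℝ} (h0 : 0 ≤ t₁) (h12 : t₁ ≤ t₂)
    (hM : ∀ᵐ s ∂(volume : Measure ℝ), s ∈ Set.Ioc t₁ t₂ → E' s ≤ M) :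
    E t₂ ≤ E t₁ + M * (t₂ - t₁) := by
  have h02 : (0:ℝ) ≤ t₂ := h0.trans h12
  have i1 : IntervalIntegrable E' volume 0 t₁ := hint t₁ h0
  have i2 : IntervalIntegrable E' volume 0 t₂ := hint t₂ h02
  have i12 : IntervalIntegrable E' volume t₁ t₂ := by
    refine i2.mono_set ?_
    rw [Set.uIcc_of_le h12, Set.uIcc_of_le h02]
    exact Set.Icc_subset_Icc h0 le_rfl
  have hadd := intervalIntegral.integral_add_adjacent_intervals i1 i12
  have hsplit : E t₂ - E t₁ = ∫ s in t₁..t₂, E' s := by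
    rw [hAC t₂ h02, hAC t₁ h0]; linarith
  have hle : (∫ s in t₁..t₂, E' s) ≤ M * (t₂ - t₁) := by
    rw [intervalIntegral.integral_of_le h12]
    have hres : E' ≤ᵐ[volume.restrict (Set.Ioc t₁ t₂)] fun _ => M :=
      (ae_restrict_iff' measurableSet_Ioc).2 hM
    have hconst : IntegrableOn (fun _ : ℝ => M) (Set.Ioc t₁ t₂) volume := by
      refine integrableOn_const (ne_of_lt ?_)
      rw [Real.volume_Ioc]; exact ENNReal.ofReal_lt_top
    calc (∫ s in Set.Ioc t₁ t₂, E' s) ≤ ∫ _ in Set.Ioc t₁ t₂, M :=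
          integral_mono_ae i12.1 hconst hres
      _ = M * (t₂ - t₁) := by
          rw [setIntegral_const, measureReal_def, Real.volume_Ioc, ENNReal.toReal_ofReal (by linarith)]
          rw [smul_eq_mul]; ring
  linarith

/-- ODE comparison: from the a.e. differential inequality
`E' ≤ -16/(1+s) E + B (1+s)^{-5/2}` we derive `E t ≤ C (1+t)^{-3/2}`. -/
private lemma aux_ode (E E' : ℝ → ℝ) (B : ℝ) (hB : 0 ≤ B)
    (hEnn : ∀ t, 0 ≤ E t)
    (hint : ∀ t : ℝ, 0 ≤ t → IntervalIntegrable E' volume 0 t)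
    (hAC : ∀ t : ℝ, 0 ≤ t → E t = E 0 + ∫ s in (0:ℝ)..t, E' s)
    (hneg : ∀ᵐ s ∂(volume : Measure ℝ), 0 < s → E' s ≤ 0)
    (key : ∀ᵐ s ∂(volume : Measure ℝ), 0 < s →
      E' s ≤ -(16/(1+s)) * E s + B * (1+s) ^ (-(5/2) : ℝ)) :
    ∃ C : ℝ, 0 < C ∧ ∀ t : ℝ, 0 ≤ t → E t ≤ C * (1 + t) ^ (-(3/2) : ℝ) := by
  -- monotonicity
  have mono : ∀ t₁ t₂ : ℝ, 0 ≤ t₁ → t₁ ≤ t₂ → E t₂ ≤ E t₁ := by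
    intro t₁ t₂ h0 h12
    have h := aux_step E E' hint hAC h0 h12 (M := 0) ?_
    · linarith
    · filter_upwards [hneg] with s hs hmem
      exact hs (lt_of_le_of_lt h0 hmem.1)
  -- doubling step
  have dbl : ∀ t₁ : ℝ, 0 ≤ t₁ →
      9 * E (2*t₁ + 1) ≤ E t₁ + B * (1 + t₁) ^ (-(3/2) : ℝ) := by
    intro t₁ h0
    set t₂ : ℝ := 2*t₁ + 1 with ht₂
    have h12 : t₁ ≤ t₂ := by rw [ht₂]; linarith
    have h1t : (0:ℝ) < 1 + t₁ := by linarith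
    have h2t : (0:ℝ) < 1 + t₂ := by rw [ht₂]; linarith
    have hMae : ∀ᵐ s ∂(volume : Measure ℝ), s ∈ Set.Ioc t₁ t₂ →
        E' s ≤ -(16/(1+t₂)) * E t₂ + B * (1+t₁) ^ (-(5/2) : ℝ) := by
      filter_upwards [key] with s hk hs
      have hs0 : 0 < s := lt_of_le_of_lt h0 hs.1
      have hk' := hk hs0
      have hmono := mono s t₂ hs0.le hs.2
      have h1s : (0:ℝ) < 1 + s := by linarith
      have g1 : 16/(1+t₂) ≤ 16/(1+s) := by
        rw [div_le_div_iff₀ h2t h1s]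
        nlinarith [hs.2]
      have g0 : (0:ℝ) ≤ 16/(1+s) := by positivity
      have c1 : 16/(1+t₂) * E t₂ ≤ 16/(1+s) * E s :=
        mul_le_mul g1 hmono (hEnn t₂) g0
      have c2 : (1+s) ^ (-(5/2) : ℝ) ≤ (1+t₁) ^ (-(5/2) : ℝ) :=
        Real.rpow_le_rpow_of_nonpos h1t (by linarith [hs.1]) (by norm_num)
      nlinarith [c1, c2]
    have hstep := aux_step E E' hint hAC h0 h12 hMae
    have hdiff : t₂ - t₁ = 1 + t₁ := by rw [ht₂]; ring
    have h8 : 16/(1+t₂) * (1+t₁) = 8 := by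
      rw [ht₂, div_mul_eq_mul_div, div_eq_iff (by linarith : (1:ℝ) + (2*t₁+1) ≠ 0)]
      ring
    have e5 : (1+t₁) * (1+t₁) ^ (-(5/2) : ℝ) = (1+t₁) ^ (-(3/2) : ℝ) := by
      nth_rewrite 1 [← Real.rpow_one (1+t₁)]
      rw [← Real.rpow_add h1t]; norm_num
    have expand : (-(16/(1+t₂)) * E t₂ + B * (1+t₁) ^ (-(5/2) : ℝ)) * (t₂ - t₁)
        = -8 * E t₂ + B * (1+t₁) ^ (-(3/2) : ℝ) := by
      rw [hdiff]
      calc (-(16/(1+t₂)) * E t₂ + B * (1+t₁) ^ (-(5/2) : ℝ)) * (1+t₁)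
          = -((16/(1+t₂)) * (1+t₁)) * E t₂
            + B * ((1+t₁) * (1+t₁) ^ (-(5/2) : ℝ)) := by ring
        _ = -8 * E t₂ + B * (1+t₁) ^ (-(3/2) : ℝ) := by rw [h8, e5]
    rw [expand] at hstep
    linarith
  -- the constant
  set C : ℝ := E 0 + B with hC
  have hCnn : 0 ≤ C := add_nonneg (hEnn 0) hB
  -- numeric fact : 2/9 ≤ 2^{-3/2}
  have hsqrt2 : Real.sqrt 2 ≤ 3/2 := by
    nlinarith [Real.sq_sqrt (by norm_num : (0:ℝ) ≤ 2), Real.sqrt_nonneg 2]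
  have h2pow : (2:ℝ) ^ ((3:ℝ)/2) = 2 * Real.sqrt 2 := by
    rw [show (3:ℝ)/2 = 1 + 1/2 by norm_num, Real.rpow_add (by norm_num : (0:ℝ) < 2),
      Real.rpow_one, ← Real.sqrt_eq_rpow]
  have h2pos : (0:ℝ) < (2:ℝ) ^ ((3:ℝ)/2) := Real.rpow_pos_of_pos (by norm_num) _
  have hnum : (2:ℝ)/9 ≤ (2:ℝ) ^ (-(3/2) : ℝ) := by
    have hneg' : (2:ℝ) ^ (-(3/2) : ℝ) = ((2:ℝ) ^ ((3:ℝ)/2))⁻¹ := by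
      rw [← Real.rpow_neg (by norm_num : (0:ℝ) ≤ 2)]
    rw [hneg', le_inv_comm₀ (by norm_num) h2pos]
    rw [h2pow]
    nlinarith [hsqrt2]
  -- induction
  have ind : ∀ n : ℕ, E ((2:ℝ)^n - 1) ≤ C * ((2:ℝ)^n) ^ (-(3/2) : ℝ) := by
    intro n
    induction n with
    | zero =>
        have h0 : (2:ℝ)^(0:ℕ) - 1 = 0 := by norm_num
        rw [h0]
        simp only [pow_zero, Real.one_rpow, mul_one, hC]
        linarith
    | succ n ih =>
        have hpn : (0:ℝ) < (2:ℝ)^n := by positivity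
        have h1n : (1:ℝ) ≤ (2:ℝ)^n := one_le_pow₀ (by norm_num)
        have ht0 : (0:ℝ) ≤ (2:ℝ)^n - 1 := by linarith
        have hd := dbl ((2:ℝ)^n - 1) ht0
        have harg : 2*((2:ℝ)^n - 1) + 1 = (2:ℝ)^(n+1) - 1 := by ring
        have h1p : (1:ℝ) + ((2:ℝ)^n - 1) = (2:ℝ)^n := by ring
        rw [harg, h1p] at hd
        have hxnn : (0:ℝ) ≤ ((2:ℝ)^n) ^ (-(3/2) : ℝ) := Real.rpow_nonneg hpn.le _
        have step1 : 9 * E ((2:ℝ)^(n+1) - 1) ≤ (C + B) * ((2:ℝ)^n) ^ (-(3/2) : ℝ) := by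
          nlinarith [ih, hd]
        have hx : ((2:ℝ)^(n+1)) ^ (-(3/2) : ℝ)
            = (2:ℝ) ^ (-(3/2) : ℝ) * ((2:ℝ)^n) ^ (-(3/2) : ℝ) := by
          rw [pow_succ, Real.mul_rpow hpn.le (by norm_num)]
          ring
        have hCB : C + B ≤ 2 * C := by rw [hC]; linarith [hEnn 0]
        have h29 : (C + B) * ((2:ℝ)^n) ^ (-(3/2) : ℝ)
            ≤ 9 * (C * ((2:ℝ)^(n+1)) ^ (-(3/2) : ℝ)) := by
          rw [hx]
          have h1 : (C + B) ≤ 9 * (C * (2:ℝ) ^ (-(3/2) : ℝ)) := by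
            nlinarith [hnum, hCnn]
          calc (C + B) * ((2:ℝ)^n) ^ (-(3/2) : ℝ)
              ≤ (9 * (C * (2:ℝ) ^ (-(3/2) : ℝ))) * ((2:ℝ)^n) ^ (-(3/2) : ℝ) :=
                mul_le_mul_of_nonneg_right h1 hxnn
            _ = 9 * (C * ((2:ℝ) ^ (-(3/2) : ℝ) * ((2:ℝ)^n) ^ (-(3/2) : ℝ))) := by ring
        linarith
  -- conclusion
  refine ⟨(2:ℝ) ^ ((3:ℝ)/2) * C + 1,
    add_pos_of_nonneg_of_pos (mul_nonneg h2pos.le hCnn) one_pos, ?_⟩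
  intro t ht
  have h1t : (1:ℝ) ≤ 1 + t := by linarith
  have hp : (0:ℝ) < 1 + t := by linarith
  set m : ℕ := Nat.floor (1 + t) with hm
  have hm1 : 1 ≤ m := Nat.le_floor (by exact_mod_cast h1t)
  set n : ℕ := Nat.log 2 m with hn
  have hlow : (2:ℝ)^n ≤ 1 + t := by
    have h1 : 2^n ≤ m := Nat.pow_log_le_self 2 (by omega)
    calc (2:ℝ)^n = ((2^n : ℕ) : ℝ) := by push_cast; ring
      _ ≤ (m:ℝ) := by exact_mod_cast h1
      _ ≤ 1 + t := Nat.floor_le (by linarith)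
  have hhigh : 1 + t < (2:ℝ)^(n+1) := by
    have h2 : m < 2^(n+1) := Nat.lt_pow_succ_log_self (by norm_num) m
    have h3 : 1 + t < (m:ℝ) + 1 := Nat.lt_floor_add_one _
    have h4 : ((m:ℝ) + 1) ≤ ((2^(n+1) : ℕ) : ℝ) := by exact_mod_cast Nat.succ_le_of_lt h2
    push_cast at h4 ⊢
    linarith
  have h1n : (1:ℝ) ≤ (2:ℝ)^n := one_le_pow₀ (by norm_num)
  have hmono := mono ((2:ℝ)^n - 1) t (by linarith) (by linarith)
  have hind := ind n
  have hcomp : ((2:ℝ)^n) ^ (-(3/2) : ℝ) ≤ (2:ℝ) ^ ((3:ℝ)/2) * (1+t) ^ (-(3/2) : ℝ) := by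
    have hhalf : (1+t)/2 ≤ (2:ℝ)^n := by
      rw [pow_succ] at hhigh; linarith
    have h1 : ((2:ℝ)^n) ^ (-(3/2) : ℝ) ≤ ((1+t)/2) ^ (-(3/2) : ℝ) :=
      Real.rpow_le_rpow_of_nonpos (by positivity) hhalf (by norm_num)
    have h2 : ((1+t)/2) ^ (-(3/2) : ℝ) = (2:ℝ) ^ ((3:ℝ)/2) * (1+t) ^ (-(3/2) : ℝ) := by
      rw [Real.div_rpow hp.le (by norm_num : (0:ℝ) ≤ 2)]
      rw [show (-(3/2) : ℝ) = -((3:ℝ)/2) by norm_num, Real.rpow_neg (by norm_num : (0:ℝ) ≤ 2)]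
      rw [div_eq_mul_inv, inv_inv]
      ring
    rw [h2] at h1
    exact h1
  have hfin : (0:ℝ) ≤ (1+t) ^ (-(3/2) : ℝ) := Real.rpow_nonneg hp.le _
  calc E t ≤ E ((2:ℝ)^n - 1) := hmono
    _ ≤ C * ((2:ℝ)^n) ^ (-(3/2) : ℝ) := hind
    _ ≤ C * ((2:ℝ) ^ ((3:ℝ)/2) * (1+t) ^ (-(3/2) : ℝ)) := mul_le_mul_of_nonneg_left hcomp hCnn
    _ ≤ ((2:ℝ) ^ ((3:ℝ)/2) * C + 1) * (1+t) ^ (-(3/2) : ℝ) := by nlinarith [hfin]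
/-- Second bootstrap step of the Fourier splitting argument. If `E(t) = ∫ |v(t,ξ)|² dξ` is
locally absolutely continuous (encoded by `E t = E 0 + ∫₀ᵗ E'` with `E'` locally integrable),
satisfies the dissipation inequality `E'(t) + C₀ ∫ |ξ|²|v(t,ξ)|² dξ ≤ 0` a.e., and
`|v(t,ξ)| ≤ K (1 + |ξ|(1+t)^{1/2})` for all `t ≥ 0` and a.e. `ξ`, then
`E(t) ≤ C (1+t)^{-3/2}` for a constant `C = C(K, C₀, E(0))`. -/
theorem decay_second_step
    (v : ℝ → EuclideanSpace ℝ (Fin 3) → ℂ) (hv : Measurable (Function.uncurry v))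
    (hL2 : ∀ t : ℝ, Integrable (fun ξ : EuclideanSpace ℝ (Fin 3) => ‖v t ξ‖ ^ 2))
    (C0 : ℝ) (hC0 : 0 < C0) (E' : ℝ → ℝ)
    (hE'int : ∀ t : ℝ, 0 ≤ t → IntervalIntegrable E' volume 0 t)
    (hEAC : ∀ t : ℝ, 0 ≤ t →
      (∫ ξ, ‖v t ξ‖ ^ 2) = (∫ ξ, ‖v 0 ξ‖ ^ 2) + ∫ s in (0:ℝ)..t, E' s)
    (hDfin : ∀ᵐ t ∂(volume : Measure ℝ), 0 < t →
      Integrable (fun ξ : EuclideanSpace ℝ (Fin 3) => ‖ξ‖ ^ 2 * ‖v t ξ‖ ^ 2))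
    (hdiss : ∀ᵐ t ∂(volume : Measure ℝ), 0 < t →
      E' t + C0 * ∫ ξ, ‖ξ‖ ^ 2 * ‖v t ξ‖ ^ 2 ≤ 0)
    (K : ℝ) (hK : 0 < K)
    (hptw : ∀ t : ℝ, 0 ≤ t →
      ∀ᵐ ξ ∂(volume : Measure (EuclideanSpace ℝ (Fin 3))),
        ‖v t ξ‖ ≤ K * (1 + ‖ξ‖ * (1 + t) ^ ((1 : ℝ) / 2))) :
    ∃ C : ℝ, 0 < C ∧ ∀ t : ℝ, 0 ≤ t →
      (∫ ξ, ‖v t ξ‖ ^ 2) ≤ C * (1 + t) ^ (-(3 / 2) : ℝ) := by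
  have hEnn : ∀ t : ℝ, 0 ≤ ∫ ξ, ‖v t ξ‖ ^ 2 :=
    fun t => integral_nonneg fun ξ => sq_nonneg _
  -- constants
  set a : ℝ := Real.sqrt (16 / C0) with ha
  have ha0 : 0 < a := Real.sqrt_pos.2 (by positivity)
  have ha2 : a ^ 2 = 16 / C0 := Real.sq_sqrt (by positivity)
  set V₁ : ℝ := (volume (ball (0 : EuclideanSpace ℝ (Fin 3)) 1)).toReal with hV
  have hV0 : 0 ≤ V₁ := ENNReal.toReal_nonneg
  set B : ℝ := 16 * (K * (1 + a)) ^ 2 * a ^ 3 * V₁ with hB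
  have hB0 : 0 ≤ B := by positivity
  -- E' ≤ 0 a.e.
  have hneg : ∀ᵐ s ∂(volume : Measure ℝ), 0 < s → E' s ≤ 0 := by
    filter_upwards [hdiss] with s hd hs
    have hD0 : (0:ℝ) ≤ ∫ ξ, ‖ξ‖ ^ 2 * ‖v s ξ‖ ^ 2 :=
      integral_nonneg fun ξ => by positivity
    nlinarith [hd hs]
  -- key differential inequality
  have key : ∀ᵐ s ∂(volume : Measure ℝ), 0 < s →
      E' s ≤ -(16/(1+s)) * (∫ ξ, ‖v s ξ‖ ^ 2) + B * (1+s) ^ (-(5/2) : ℝ) := by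
    filter_upwards [hDfin, hdiss] with s hD hd hs
    have hDint := hD hs
    have hd' := hd hs
    have hs1 : (0:ℝ) < 1 + s := by linarith
    set ρ : ℝ := a * (1 + s) ^ (-(1/2) : ℝ) with hρ
    have hrp : (0:ℝ) < (1 + s) ^ (-(1/2) : ℝ) := Real.rpow_pos_of_pos hs1 _
    have hρ0 : 0 < ρ := mul_pos ha0 hrp
    have hρa : ρ * (1 + s) ^ ((1:ℝ)/2) = a := by
      rw [hρ, mul_assoc, ← Real.rpow_add hs1]
      norm_num
    -- pointwise a.e. splitting bound
    have point : ∀ᵐ ξ ∂(volume : Measure (EuclideanSpace ℝ (Fin 3))),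
        ‖v s ξ‖ ^ 2 ≤ (closedBall (0 : EuclideanSpace ℝ (Fin 3)) ρ).indicator
            (fun _ => (K * (1 + a)) ^ 2) ξ + (ρ⁻¹) ^ 2 * (‖ξ‖ ^ 2 * ‖v s ξ‖ ^ 2) := by
      filter_upwards [hptw s hs.le] with ξ hξ
      by_cases hmem : ξ ∈ closedBall (0 : EuclideanSpace ℝ (Fin 3)) ρ
      · rw [Set.indicator_of_mem hmem]
        have hξρ : ‖ξ‖ ≤ ρ := by
          have := mem_closedBall.1 hmem
          simpa [dist_eq_norm] using this
        have h1 : ‖v s ξ‖ ≤ K * (1 + a) := by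
          refine hξ.trans ?_
          have h2 : ‖ξ‖ * (1 + s) ^ ((1:ℝ)/2) ≤ a := by
            rw [← hρa]
            exact mul_le_mul_of_nonneg_right hξρ (Real.rpow_nonneg hs1.le _)
          nlinarith [hK.le]
        have h3 := pow_le_pow_left₀ (norm_nonneg _) h1 2
        have h4 : (0:ℝ) ≤ (ρ⁻¹) ^ 2 * (‖ξ‖ ^ 2 * ‖v s ξ‖ ^ 2) := by positivity
        linarith
      · rw [Set.indicator_of_notMem hmem]
        have hξρ : ρ ≤ ‖ξ‖ := by
          have := mem_closedBall.not.1 hmem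
          rw [dist_eq_norm, sub_zero] at this
          linarith [not_le.1 this]
        have hdiv : (1:ℝ) ≤ ‖ξ‖ / ρ := (one_le_div hρ0).2 hξρ
        have h2 : (1:ℝ) ≤ (‖ξ‖ / ρ) ^ 2 := by nlinarith
        calc ‖v s ξ‖ ^ 2 = 1 * ‖v s ξ‖ ^ 2 := (one_mul _).symm
          _ ≤ (‖ξ‖ / ρ) ^ 2 * ‖v s ξ‖ ^ 2 :=
              mul_le_mul_of_nonneg_right h2 (sq_nonneg _)
          _ = 0 + (ρ⁻¹) ^ 2 * (‖ξ‖ ^ 2 * ‖v s ξ‖ ^ 2) := by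
              rw [div_eq_mul_inv, mul_pow]; ring
    -- integrate the splitting bound
    have hIndInt : Integrable ((closedBall (0 : EuclideanSpace ℝ (Fin 3)) ρ).indicator
        (fun _ => (K * (1 + a)) ^ 2)) := by
      rw [integrable_indicator_iff measurableSet_closedBall]
      exact integrableOn_const (ne_of_lt measure_closedBall_lt_top)
    have hMul : Integrable (fun ξ : EuclideanSpace ℝ (Fin 3) =>
        (ρ⁻¹) ^ 2 * (‖ξ‖ ^ 2 * ‖v s ξ‖ ^ 2)) := hDint.const_mul _
    have hEs : (∫ ξ, ‖v s ξ‖ ^ 2)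
        ≤ (volume (closedBall (0 : EuclideanSpace ℝ (Fin 3)) ρ)).toReal * (K * (1 + a)) ^ 2
          + (ρ⁻¹) ^ 2 * ∫ ξ, ‖ξ‖ ^ 2 * ‖v s ξ‖ ^ 2 := by
      have hadd : Integrable (fun ξ : EuclideanSpace ℝ (Fin 3) =>
          (closedBall (0 : EuclideanSpace ℝ (Fin 3)) ρ).indicator
            (fun _ => (K * (1 + a)) ^ 2) ξ + (ρ⁻¹) ^ 2 * (‖ξ‖ ^ 2 * ‖v s ξ‖ ^ 2)) :=
        hIndInt.add hMul
      have h := integral_mono_ae (hL2 s) hadd point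
      rw [integral_add hIndInt hMul, integral_indicator_const _ measurableSet_closedBall,
        integral_const_mul, smul_eq_mul] at h
      exact h
    -- volume of the ball
    have hvol : (volume (closedBall (0 : EuclideanSpace ℝ (Fin 3)) ρ)).toReal
        = ρ ^ 3 * V₁ := by
      rw [Measure.addHaar_closedBall _ _ hρ0.le]
      simp only [finrank_euclideanSpace_fin]
      rw [ENNReal.toReal_mul, ENNReal.toReal_ofReal (by positivity)]
    rw [hvol] at hEs
    -- rpow computations
    have e1 : ((1+s) ^ (-(1/2) : ℝ)) ^ (2:ℕ) = (1+s) ^ (-(1:ℝ)) := by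
      rw [← Real.rpow_natCast ((1+s) ^ (-(1/2) : ℝ)) 2, ← Real.rpow_mul hs1.le]
      norm_num
    have e2 : ((1+s) ^ (-(1/2) : ℝ)) ^ (3:ℕ) = (1+s) ^ (-(3/2) : ℝ) := by
      rw [← Real.rpow_natCast ((1+s) ^ (-(1/2) : ℝ)) 3, ← Real.rpow_mul hs1.le]
      norm_num
    have e4 : (1+s) ^ (-(1:ℝ)) = (1+s)⁻¹ := Real.rpow_neg_one _
    have e3 : (1+s)⁻¹ * (1+s) ^ (-(3/2) : ℝ) = (1+s) ^ (-(5/2) : ℝ) := by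
      rw [← e4, ← Real.rpow_add hs1]
      norm_num
    have hρ2 : ρ ^ 2 = a ^ 2 * (1+s)⁻¹ := by
      rw [hρ, mul_pow, e1, e4]
    have hρ3 : ρ ^ 3 = a ^ 3 * (1+s) ^ (-(3/2) : ℝ) := by
      rw [hρ, mul_pow, e2]
    have hC0ρ2 : C0 * ρ ^ 2 = 16 * (1+s)⁻¹ := by
      rw [hρ2, ha2]
      field_simp
    -- multiply by ρ² and conclude
    have hρ2pos : (0:ℝ) < ρ ^ 2 := by positivity
    have hcancel : ρ ^ 2 * ((ρ⁻¹) ^ 2 * ∫ ξ, ‖ξ‖ ^ 2 * ‖v s ξ‖ ^ 2)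
        = ∫ ξ, ‖ξ‖ ^ 2 * ‖v s ξ‖ ^ 2 := by
      field_simp
    have hDgeq : ρ ^ 2 * ((∫ ξ, ‖v s ξ‖ ^ 2) - ρ ^ 3 * V₁ * (K * (1 + a)) ^ 2)
        ≤ ∫ ξ, ‖ξ‖ ^ 2 * ‖v s ξ‖ ^ 2 := by
      have h := mul_le_mul_of_nonneg_left
        (by linarith [hEs] :
          (∫ ξ, ‖v s ξ‖ ^ 2) - ρ ^ 3 * V₁ * (K * (1 + a)) ^ 2
            ≤ (ρ⁻¹) ^ 2 * ∫ ξ, ‖ξ‖ ^ 2 * ‖v s ξ‖ ^ 2) hρ2pos.le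
      rw [hcancel] at h
      exact h
    have hLval : C0 * ρ ^ 2 * (ρ ^ 3 * V₁ * (K * (1 + a)) ^ 2)
        = B * (1+s) ^ (-(5/2) : ℝ) := by
      rw [hρ3, hC0ρ2, hB]
      calc 16 * (1+s)⁻¹ * (a ^ 3 * (1+s) ^ (-(3/2) : ℝ) * V₁ * (K * (1 + a)) ^ 2)
          = 16 * (K * (1 + a)) ^ 2 * a ^ 3 * V₁ * ((1+s)⁻¹ * (1+s) ^ (-(3/2) : ℝ)) := by
            ring
        _ = 16 * (K * (1 + a)) ^ 2 * a ^ 3 * V₁ * (1+s) ^ (-(5/2) : ℝ) := by rw [e3]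
    have hEterm : C0 * ρ ^ 2 * (∫ ξ, ‖v s ξ‖ ^ 2) = 16 * (1+s)⁻¹ * ∫ ξ, ‖v s ξ‖ ^ 2 := by
      rw [hC0ρ2]
    have hmul := mul_le_mul_of_nonneg_left hDgeq hC0.le
    have hdivinv : -(16/(1+s)) * (∫ ξ, ‖v s ξ‖ ^ 2)
        = -(16 * (1+s)⁻¹ * ∫ ξ, ‖v s ξ‖ ^ 2) := by
      rw [div_eq_mul_inv]
      ring
    have hexpand : C0 * (ρ ^ 2 * ((∫ ξ, ‖v s ξ‖ ^ 2) - ρ ^ 3 * V₁ * (K * (1 + a)) ^ 2))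
        = C0 * ρ ^ 2 * (∫ ξ, ‖v s ξ‖ ^ 2)
          - C0 * ρ ^ 2 * (ρ ^ 3 * V₁ * (K * (1 + a)) ^ 2) := by ring
    rw [hexpand, hEterm, hLval] at hmul
    rw [hdivinv]
    linarith
  obtain ⟨C, hCpos, hCle⟩ := aux_ode (fun t => ∫ ξ, ‖v t ξ‖ ^ 2) E' B hB0 hEnn hE'int hEAC
    hneg key
  exact ⟨C, hCpos, hCle⟩
end

section
/- Let $v : [0,\infty) \times \mathbb{R}^3 \to \mathbb{C}$ be measurable with $v(t,\cdot) \in L^2(\mathbb{R}^3;\mathbb{C})$ for every $t$, set $E(t) = \int_{\mathbb{R}^3} |v(t,\xi)|^2\,d\xi$, and suppose $E$ is locally absolutely continuous, $\int_{\mathbb{R}^3}|\xi|^2 |v(t,\xi)|^2\,d\xi < \infty$ for a.e. $t$, and there is $C_0 > 0$ with $E'(t) + C_0 \int_{\mathbb{R}^3} |\xi|^2 |v(t,\xi)|^2\,d\xi \le 0$ for a.e. $t > 0$. Assume moreover there is $K > 0$ such that for every $t \ge 0$ and almost every $\xi$: $|v(t,\xi)| \le K\Big(1 + |\xi|\big(1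 + \int_0^t E(s)\,ds\big)\Big)$. Then there is a constant $C$, depending only on $K$, $C_0$ and $E(0)$, such that $E(t) \le C (1+t)^{-3/2}$ for all $t \ge 0$. -/
open MeasureTheory

open Real Set Metric

set_option maxHeartbeats 1000000 in
lemma dyadic_decay (E : ℝ → ℝ) (hnn : ∀ t, 0 ≤ E t)
    (hmono : ∀ a b : ℝ, 0 ≤ a → a ≤ b → E b ≤ E a)
    (β A : ℝ) (hβ : 0 < β) (hA : 0 ≤ A) (hβ7 : (2:ℝ) ^ β < 7)
    (hrec : ∀ t : ℝ, 1 ≤ t → E (2 * t) ≤ E t / 7 + A * t ^ (-β)) :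
    ∃ C : ℝ, 0 < C ∧ ∀ t, 0 ≤ t → E t ≤ C * (1 + t) ^ (-β) := by
  have h2β : (0:ℝ) < (2:ℝ) ^ β := rpow_pos_of_pos two_pos β
  have h4β : (0:ℝ) < (4:ℝ) ^ β := rpow_pos_of_pos (by norm_num) β
  have hden : (0:ℝ) < 1 - (2:ℝ) ^ β / 7 := by linarith
  set M : ℝ := max (E 0) (A * (2:ℝ) ^ β / (1 - (2:ℝ) ^ β / 7)) with hM
  have hM0 : 0 ≤ M := le_trans (hnn 0) (le_max_left _ _)
  have hMA : A * (2:ℝ) ^ β ≤ M * (1 - (2:ℝ) ^ β / 7) := by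
    have h := le_max_right (E 0) (A * (2:ℝ) ^ β / (1 - (2:ℝ) ^ β / 7))
    rw [← hM] at h
    calc A * (2:ℝ) ^ β = (A * (2:ℝ) ^ β / (1 - (2:ℝ) ^ β / 7)) * (1 - (2:ℝ) ^ β / 7) :=
          (div_mul_cancel₀ _ hden.ne').symm
      _ ≤ M * (1 - (2:ℝ) ^ β / 7) := mul_le_mul_of_nonneg_right h hden.le
  have key : ∀ n : ℕ, E ((2:ℝ) ^ n) ≤ M * (((2:ℝ) ^ n) ^ (-β)) := by
    intro n
    induction n with
    | zero =>
        simp only [pow_zero, one_rpow, mul_one]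
        exact le_trans (hmono 0 1 le_rfl zero_le_one) (le_max_left _ _)
    | succ n ih =>
        have h2n : (1:ℝ) ≤ (2:ℝ) ^ n := one_le_pow₀ one_le_two
        have h2npos : (0:ℝ) < (2:ℝ) ^ n := by positivity
        have hrpos : (0:ℝ) < ((2:ℝ) ^ n : ℝ) ^ (-β) := rpow_pos_of_pos h2npos _
        have hEn : E ((2:ℝ) ^ (n+1)) ≤ E ((2:ℝ) ^ n) / 7 + A * ((2:ℝ) ^ n) ^ (-β) := by
          have := hrec ((2:ℝ) ^ n) h2n
          rw [pow_succ, mul_comm ((2:ℝ) ^ n) 2]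
          exact this
        have hsplit : (((2:ℝ) ^ (n+1) : ℝ)) ^ (-β) = ((2:ℝ) ^ n : ℝ) ^ (-β) * (2:ℝ) ^ (-β) := by
          rw [pow_succ]
          exact mul_rpow h2npos.le (by norm_num)
        have hcoef : M / 7 + A ≤ M * (2:ℝ) ^ (-β) := by
          have h1 : (M / 7 + A) * (2:ℝ) ^ β ≤ M := by nlinarith
          have : M * (2:ℝ) ^ (-β) = M / (2:ℝ) ^ β := by
            rw [rpow_neg (by norm_num : (0:ℝ) ≤ 2)]; ring
          rw [this, le_div_iff₀ h2β]
          exact h1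
        calc E ((2:ℝ) ^ (n+1)) ≤ E ((2:ℝ) ^ n) / 7 + A * ((2:ℝ) ^ n) ^ (-β) := hEn
          _ ≤ (M * ((2:ℝ) ^ n) ^ (-β)) / 7 + A * ((2:ℝ) ^ n) ^ (-β) := by linarith
          _ = (M / 7 + A) * ((2:ℝ) ^ n) ^ (-β) := by ring
          _ ≤ (M * (2:ℝ) ^ (-β)) * ((2:ℝ) ^ n) ^ (-β) :=
              mul_le_mul_of_nonneg_right hcoef hrpos.le
          _ = M * (((2:ℝ) ^ (n+1) : ℝ)) ^ (-β) := by rw [hsplit]; ring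
  have hE0 : 0 ≤ E 0 * (2:ℝ) ^ β := mul_nonneg (hnn 0) h2β.le
  have hM4 : 0 ≤ M * (4:ℝ) ^ β := mul_nonneg hM0 h4β.le
  refine ⟨M * (4:ℝ) ^ β + E 0 * (2:ℝ) ^ β + 1, by linarith, fun t ht => ?_⟩
  have h1t : (0:ℝ) < 1 + t := by linarith
  have hpow : (0:ℝ) < (1 + t) ^ (-β) := rpow_pos_of_pos h1t _
  rcases le_or_gt t 1 with hle | hlt
  · have h1 : E t ≤ E 0 := hmono 0 t le_rfl ht
    have h2 : (2:ℝ) ^ (-β) ≤ (1 + t) ^ (-β) :=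
      rpow_le_rpow_of_nonpos h1t (by linarith) (by linarith)
    have h3 : E 0 = E 0 * (2:ℝ) ^ β * (2:ℝ) ^ (-β) := by
      rw [mul_assoc, ← rpow_add two_pos]; simp
    have h4 : E t ≤ E 0 * (2:ℝ) ^ β * (1 + t) ^ (-β) := by
      rw [h3] at h1
      exact h1.trans (mul_le_mul_of_nonneg_left h2 hE0)
    refine h4.trans (mul_le_mul_of_nonneg_right (by linarith) hpow.le)
  · set n := ⌊Real.logb 2 t⌋₊ with hn
    have hlogb : 0 ≤ Real.logb 2 t := Real.logb_nonneg one_lt_two hlt.le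
    have htpos : (0:ℝ) < t := by linarith
    have hlow : (2:ℝ) ^ n ≤ t := by
      have h1 : ((n:ℝ)) ≤ Real.logb 2 t := Nat.floor_le hlogb
      calc (2:ℝ) ^ n = (2:ℝ) ^ ((n:ℝ)) := by rw [rpow_natCast]
        _ ≤ (2:ℝ) ^ (Real.logb 2 t) := rpow_le_rpow_of_exponent_le one_le_two h1
        _ = t := rpow_logb two_pos (by norm_num) htpos
    have hhigh : t < (2:ℝ) ^ (n+1) := by
      have h1 : Real.logb 2 t < (n:ℝ) + 1 := Nat.lt_floor_add_one _
      calc t = (2:ℝ) ^ (Real.logb 2 t) := (rpow_logb two_pos (by norm_num) htpos).symm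
        _ < (2:ℝ) ^ ((n:ℝ) + 1) := rpow_lt_rpow_of_exponent_lt one_lt_two h1
        _ = (2:ℝ) ^ (n+1) := by rw [← rpow_natCast (2:ℝ) (n+1)]; push_cast; ring_nf
    have h2npos : (0:ℝ) < (2:ℝ) ^ n := by positivity
    have h1n : (1:ℝ) ≤ (2:ℝ) ^ n := one_le_pow₀ one_le_two
    have hEt : E t ≤ M * ((2:ℝ) ^ n : ℝ) ^ (-β) :=
      le_trans (hmono ((2:ℝ) ^ n) t (by positivity) hlow) (key n)
    have hhigh' : t < 2 * (2:ℝ) ^ n := by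
      have : ((2:ℝ) ^ (n+1)) = 2 * (2:ℝ) ^ n := by rw [pow_succ]; ring
      linarith [hhigh, this.symm.le]
    have hball : (1 + t) / 4 ≤ (2:ℝ) ^ n := by
      rw [div_le_iff₀ (by norm_num : (0:ℝ) < 4)]
      linarith
    have hq : ((2:ℝ) ^ n : ℝ) ^ (-β) ≤ ((1 + t) / 4) ^ (-β) :=
      rpow_le_rpow_of_nonpos (by linarith) hball (by linarith)
    have hfr : ((1 + t) / 4) ^ (-β) = (4:ℝ) ^ β * (1 + t) ^ (-β) := by
      rw [div_rpow h1t.le (by norm_num), rpow_neg (by norm_num : (0:ℝ) ≤ 4)]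
      field_simp
    have hfin : E t ≤ M * ((4:ℝ) ^ β * (1 + t) ^ (-β)) :=
      hEt.trans (by rw [← hfr]; exact mul_le_mul_of_nonneg_left hq hM0)
    calc E t ≤ M * (4:ℝ) ^ β * (1 + t) ^ (-β) := by linarith [hfin]
      _ ≤ (M * (4:ℝ) ^ β + E 0 * (2:ℝ) ^ β + 1) * (1 + t) ^ (-β) :=
          mul_le_mul_of_nonneg_right (by linarith) hpow.le


set_option maxHeartbeats 1000000 in
/-- Abstract form of the main `L²`-decay theorem (case `p⁻ ≥ 3`). If `E(t) = ∫ |v(t,ξ)|² dξ` is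
locally absolutely continuous (encoded by `E t = E 0 + ∫₀ᵗ E'` with `E'` locally integrable),
satisfies the dissipation inequality `E'(t) + C₀ ∫ |ξ|²|v(t,ξ)|² dξ ≤ 0` a.e., and
`|v(t,ξ)| ≤ K (1 + |ξ|(1 + ∫₀ᵗ E(s) ds))` for all `t ≥ 0` and a.e. `ξ`, then
`E(t) ≤ C (1+t)^{-3/2}` for a constant `C = C(K, C₀, E(0))`. -/
theorem decay_main_case1
    (v : ℝ → EuclideanSpace ℝ (Fin 3) → ℂ) (hv : Measurable (Function.uncurry v))
    (hL2 : ∀ t : ℝ, Integrable (fun ξ : EuclideanSpace ℝ (Fin 3) => ‖v t ξ‖ ^ 2))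
    (C0 : ℝ) (hC0 : 0 < C0) (E' : ℝ → ℝ)
    (hE'int : ∀ t : ℝ, 0 ≤ t → IntervalIntegrable E' volume 0 t)
    (hEAC : ∀ t : ℝ, 0 ≤ t →
      (∫ ξ, ‖v t ξ‖ ^ 2) = (∫ ξ, ‖v 0 ξ‖ ^ 2) + ∫ s in (0:ℝ)..t, E' s)
    (hDfin : ∀ᵐ t ∂(volume : Measure ℝ), 0 < t →
      Integrable (fun ξ : EuclideanSpace ℝ (Fin 3) => ‖ξ‖ ^ 2 * ‖v t ξ‖ ^ 2))
    (hdiss : ∀ᵐ t ∂(volume : Measure ℝ), 0 < t →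
      E' t + C0 * ∫ ξ, ‖ξ‖ ^ 2 * ‖v t ξ‖ ^ 2 ≤ 0)
    (K : ℝ) (hK : 0 < K)
    (hptw : ∀ t : ℝ, 0 ≤ t →
      ∀ᵐ ξ ∂(volume : Measure (EuclideanSpace ℝ (Fin 3))),
        ‖v t ξ‖ ≤ K * (1 + ‖ξ‖ * (1 + ∫ s in (0:ℝ)..t, ∫ η, ‖v s η‖ ^ 2))) :
    ∃ C : ℝ, 0 < C ∧ ∀ t : ℝ, 0 ≤ t →
      (∫ ξ, ‖v t ξ‖ ^ 2) ≤ C * (1 + t) ^ (-(3 / 2) : ℝ) := by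
  set E : ℝ → ℝ := fun t => ∫ ξ, ‖v t ξ‖ ^ 2 with hEdef
  set D : ℝ → ℝ := fun t => ∫ ξ : EuclideanSpace ℝ (Fin 3), ‖ξ‖ ^ 2 * ‖v t ξ‖ ^ 2 with hDdef
  set Mf : ℝ → ℝ := fun t => ∫ s in (0:ℝ)..t, E s with hMdef
  -- basic positivity
  have hEnn : ∀ t, 0 ≤ E t := fun t => integral_nonneg (fun ξ => by positivity)
  have hDnn : ∀ t, 0 ≤ D t := fun t => integral_nonneg (fun ξ => by positivity)
  -- E' is a.e. nonpositive on (0,∞)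
  have hE'np : ∀ᵐ t ∂(volume : Measure ℝ), 0 < t → E' t ≤ 0 := by
    filter_upwards [hdiss] with t h ht
    have := h ht
    nlinarith [hDnn t, mul_nonneg hC0.le (hDnn t)]
  have hne0 : ∀ᵐ s : ℝ ∂volume, s ≠ 0 := by
    have : {s : ℝ | ¬ s ≠ 0} = {0} := by ext s; simp
    rw [ae_iff, this]
    exact measure_singleton 0
  -- continuity of E on [0,∞)
  have hEcont : ∀ b : ℝ, 0 ≤ b → ContinuousOn E (Icc 0 b) := by
    intro b hb
    have h1 : ContinuousOn (fun x => (E 0) + ∫ s in (0:ℝ)..x, E' s) (Icc 0 b) := by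
      apply ContinuousOn.add continuousOn_const
      have := intervalIntegral.continuousOn_primitive_interval' (hE'int b hb)
        (by rw [uIcc_of_le hb]; exact ⟨le_rfl, hb⟩)
      rwa [uIcc_of_le hb] at this
    exact h1.congr (fun x hx => hEAC x hx.1)
  have hEii : ∀ a b : ℝ, 0 ≤ a → a ≤ b → IntervalIntegrable E volume a b := by
    intro a b ha hab
    have h0b : ContinuousOn E (Icc 0 b) := hEcont b (ha.trans hab)
    have : ContinuousOn E (uIcc a b) := h0b.mono (by
      rw [uIcc_of_le hab]; exact Icc_subset_Icc ha le_rfl)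
    exact this.intervalIntegrable
  -- interval integrability of E' on subintervals of [0,∞)
  have hE'ii : ∀ a b : ℝ, 0 ≤ a → a ≤ b → IntervalIntegrable E' volume a b := by
    intro a b ha hab
    exact (hE'int b (ha.trans hab)).mono_set (by
      rw [uIcc_of_le hab, uIcc_of_le (ha.trans hab)]; exact Icc_subset_Icc ha le_rfl)
  -- fundamental identity on increments
  have hincr : ∀ a b : ℝ, 0 ≤ a → a ≤ b → E b - E a = ∫ s in a..b, E' s := by
    intro a b ha hab
    have h1 := hEAC a ha
    have h2 := hEAC b (ha.trans hab)
    have h3 := intervalIntegral.integral_add_adjacent_intervals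
      (hE'int a ha) (hE'ii a b ha hab)
    simp only [hEdef]
    rw [h1, h2, ← h3]; ring
  -- monotonicity
  have hmono : ∀ a b : ℝ, 0 ≤ a → a ≤ b → E b ≤ E a := by
    intro a b ha hab
    have h1 := hincr a b ha hab
    have h2 : (∫ s in a..b, E' s) ≤ ∫ s in a..b, (0:ℝ) := by
      apply intervalIntegral.integral_mono_ae_restrict hab (hE'ii a b ha hab)
        intervalIntegrable_const
      have hae : ∀ᵐ s ∂(volume : Measure ℝ), s ∈ Icc a b → E' s ≤ 0 := by
        filter_upwards [hE'np, hne0] with s hs hs0 hmem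
        exact hs (lt_of_le_of_ne (le_trans ha hmem.1) (Ne.symm hs0))
      rw [Filter.EventuallyLE, ae_restrict_iff' measurableSet_Icc]
      exact hae
    simp only [intervalIntegral.integral_zero] at h2
    linarith
  -- Mf facts
  have hMnn : ∀ t, 0 ≤ t → 0 ≤ Mf t := by
    intro t ht
    apply intervalIntegral.integral_nonneg ht (fun s _ => hEnn s)
  have hMmono : ∀ s b : ℝ, 0 ≤ s → s ≤ b → Mf s ≤ Mf b := by
    intro s b hs hsb
    have h3 := intervalIntegral.integral_add_adjacent_intervals
      (hEii 0 s le_rfl hs) (hEii s b hs hsb)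
    have h4 : (0:ℝ) ≤ ∫ x in s..b, E x :=
      intervalIntegral.integral_nonneg hsb (fun x _ => hEnn x)
    simp only [hMdef]
    linarith
  -- measurability of D
  have hDmeas : Measurable D := by
    have h : Measurable (Function.uncurry
        (fun t (ξ : EuclideanSpace ℝ (Fin 3)) => ‖ξ‖ ^ 2 * ‖v t ξ‖ ^ 2)) :=
      (measurable_snd.norm.pow measurable_const).mul ((hv.norm).pow measurable_const)
    exact (h.stronglyMeasurable.integral_prod_right').measurable
  -- interval integrability of D
  have hDii : ∀ a b : ℝ, 0 ≤ a → a ≤ b → IntervalIntegrable D volume a b := by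
    intro a b ha hab
    rw [intervalIntegrable_iff_integrableOn_Ioc_of_le hab]
    apply Integrable.mono' (g := fun s => -(E' s) / C0)
      (((hE'ii a b ha hab).1).neg.div_const C0)
      (hDmeas.aestronglyMeasurable.restrict)
    have hae : ∀ᵐ s ∂(volume : Measure ℝ), s ∈ Ioc a b → ‖D s‖ ≤ -E' s / C0 := by
      filter_upwards [hdiss] with s hs hmem
      have h1 := hs (lt_of_le_of_lt ha hmem.1)
      rw [Real.norm_eq_abs, abs_of_nonneg (hDnn s), le_div_iff₀ hC0]
      simp only [hDdef]
      linarith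
    rw [ae_restrict_iff' measurableSet_Ioc]
    exact hae
  -- key recursion
  have c3pos : (0:ℝ) < (volume (ball (0 : EuclideanSpace ℝ (Fin 3)) 1)).toReal :=
    ENNReal.toReal_pos (ne_of_gt (measure_ball_pos volume 0 one_pos))
      (measure_ball_lt_top).ne
  set c3 : ℝ := (volume (ball (0 : EuclideanSpace ℝ (Fin 3)) 1)).toReal with hc3
  have hrecur : ∀ a b ρ : ℝ, 0 ≤ a → a ≤ b → 0 < ρ →
      E b * (1 + C0 * ρ^2 * (b - a)) ≤
        E a + C0 * ρ^2 * (b - a) * (K^2 * (1 + ρ*(1 + Mf b))^2 * (ρ^3 * c3)) := by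
    intro a b ρ ha hab hρ
    set Bb : ℝ := K^2 * (1 + ρ*(1 + Mf b))^2 * (ρ^3 * c3) with hBb
    have hb0 : (0:ℝ) ≤ b := ha.trans hab
    have hMb : 0 ≤ Mf b := hMnn b hb0
    have hvol : (volume (ball (0 : EuclideanSpace ℝ (Fin 3)) ρ)).toReal = ρ^3 * c3 := by
      rw [Measure.addHaar_ball _ _ hρ.le, ENNReal.toReal_mul,
        ENNReal.toReal_ofReal (by positivity)]
      congr 2
      simp [finrank_euclideanSpace]
    -- pointwise-in-time splitting inequality
    have hsplit : ∀ᵐ s ∂(volume : Measure ℝ), s ∈ Icc a b →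
        ρ^2 * E s ≤ D s + ρ^2 * Bb := by
      filter_upwards [hDfin, hne0] with s hDf hs0 hmem
      have hspos : 0 < s := lt_of_le_of_ne (ha.trans hmem.1) (Ne.symm hs0)
      have hsint : Integrable (fun ξ : EuclideanSpace ℝ (Fin 3) =>
          ‖ξ‖ ^ 2 * ‖v s ξ‖ ^ 2) := hDf hspos
      have hms : Mf s ≤ Mf b := hMmono s b hspos.le hmem.2
      have hms0 : 0 ≤ Mf s := hMnn s hspos.le
      have hpt : ∀ᵐ ξ ∂(volume : Measure (EuclideanSpace ℝ (Fin 3))),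
          ‖v s ξ‖ ≤ K * (1 + ‖ξ‖ * (1 + Mf s)) := hptw s hspos.le
      have hsplitE : E s = (∫ ξ in ball (0 : EuclideanSpace ℝ (Fin 3)) ρ, ‖v s ξ‖^2)
          + (∫ ξ in (ball (0 : EuclideanSpace ℝ (Fin 3)) ρ)ᶜ, ‖v s ξ‖^2) :=
        (integral_add_compl measurableSet_ball (hL2 s)).symm
      have hball : (∫ ξ in ball (0 : EuclideanSpace ℝ (Fin 3)) ρ, ‖v s ξ‖^2)
          ≤ (K * (1 + ρ * (1 + Mf b)))^2 * (ρ^3 * c3) := by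
        have h1 : (∫ ξ in ball (0 : EuclideanSpace ℝ (Fin 3)) ρ, ‖v s ξ‖^2)
            ≤ ∫ _ξ in ball (0 : EuclideanSpace ℝ (Fin 3)) ρ, (K * (1 + ρ * (1 + Mf b)))^2 := by
          apply setIntegral_mono_on_ae ((hL2 s).integrableOn)
            (integrableOn_const measure_ball_lt_top.ne) measurableSet_ball
          filter_upwards [hpt] with ξ hξ hmemS
          have hξρ : ‖ξ‖ < ρ := mem_ball_zero_iff.mp hmemS
          have hub : ‖v s ξ‖ ≤ K * (1 + ρ * (1 + Mf b)) := by
            refine hξ.trans ?_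
            have h2 : ‖ξ‖ * (1 + Mf s) ≤ ρ * (1 + Mf b) :=
              mul_le_mul hξρ.le (by linarith) (by linarith [norm_nonneg ξ]) hρ.le
            nlinarith
          nlinarith [norm_nonneg (v s ξ)]
        rw [setIntegral_const, smul_eq_mul, measureReal_def, hvol] at h1
        linarith [h1, sq_nonneg (K * (1 + ρ * (1 + Mf b))),
          mul_comm (ρ^3 * c3) ((K * (1 + ρ * (1 + Mf b)))^2)]
      have hcompl : ρ^2 * (∫ ξ in (ball (0 : EuclideanSpace ℝ (Fin 3)) ρ)ᶜ, ‖v s ξ‖^2)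
          ≤ D s := by
        have h1 : (∫ ξ in (ball (0 : EuclideanSpace ℝ (Fin 3)) ρ)ᶜ, ρ^2 * ‖v s ξ‖^2)
            ≤ ∫ ξ in (ball (0 : EuclideanSpace ℝ (Fin 3)) ρ)ᶜ, ‖ξ‖^2 * ‖v s ξ‖^2 := by
          apply setIntegral_mono_on (((hL2 s).const_mul _).integrableOn)
            (hsint.integrableOn) measurableSet_ball.compl
          intro ξ hξ
          have hge : ρ ≤ ‖ξ‖ := by
            by_contra hc
            push_neg at hc
            exact hξ (mem_ball_zero_iff.mpr hc)
          have : ρ^2 ≤ ‖ξ‖^2 := by nlinarith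
          nlinarith [sq_nonneg (‖v s ξ‖)]
        have h2 : (∫ ξ in (ball (0 : EuclideanSpace ℝ (Fin 3)) ρ)ᶜ, ‖ξ‖^2 * ‖v s ξ‖^2)
            ≤ D s := setIntegral_le_integral hsint
            (Filter.Eventually.of_forall (fun ξ => by positivity))
        rw [integral_const_mul] at h1
        linarith
      have hKsq : (K * (1 + ρ*(1+Mf b)))^2 * (ρ^3 * c3) = Bb := by rw [hBb]; ring
      have hb2 : ρ^2 * (∫ ξ in ball (0 : EuclideanSpace ℝ (Fin 3)) ρ, ‖v s ξ‖^2)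
          ≤ ρ^2 * Bb := by
        rw [← hKsq]
        exact mul_le_mul_of_nonneg_left hball (sq_nonneg ρ)
      calc ρ^2 * E s = ρ^2 * (∫ ξ in ball (0 : EuclideanSpace ℝ (Fin 3)) ρ, ‖v s ξ‖^2)
            + ρ^2 * (∫ ξ in (ball (0 : EuclideanSpace ℝ (Fin 3)) ρ)ᶜ, ‖v s ξ‖^2) := by
              rw [hsplitE]; ring
        _ ≤ D s + ρ^2 * Bb := by linarith
    -- integrate in time
    have hint1 : (∫ s in a..b, ρ^2 * E s) ≤ ∫ s in a..b, (D s + ρ^2 * Bb) := by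
      apply intervalIntegral.integral_mono_ae_restrict hab
        ((hEii a b ha hab).const_mul _)
        ((hDii a b ha hab).add intervalIntegrable_const)
      rw [Filter.EventuallyLE, ae_restrict_iff' measurableSet_Icc]
      filter_upwards [hsplit] with s h1 h2
      exact h1 h2
    have hconst : (b - a) * E b ≤ ∫ s in a..b, E s := by
      have h1 : (∫ _s in a..b, E b) ≤ ∫ s in a..b, E s :=
        intervalIntegral.integral_mono_on hab intervalIntegrable_const (hEii a b ha hab)
          (fun s hs => hmono s b (ha.trans hs.1) hs.2)
      simpa [intervalIntegral.integral_const, smul_eq_mul, mul_comm] using h1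
    have hdisint : (∫ s in a..b, E' s) ≤ ∫ s in a..b, (-C0 * D s) := by
      apply intervalIntegral.integral_mono_ae_restrict hab (hE'ii a b ha hab)
        ((hDii a b ha hab).const_mul _)
      rw [Filter.EventuallyLE, ae_restrict_iff' measurableSet_Icc]
      filter_upwards [hdiss, hne0] with s h1 h2 hmem
      have hspos : 0 < s := lt_of_le_of_ne (ha.trans hmem.1) (Ne.symm h2)
      have h3 : E' s + C0 * D s ≤ 0 := h1 hspos
      linarith
    have hid1 : (∫ s in a..b, ρ^2 * E s) = ρ^2 * ∫ s in a..b, E s :=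
      intervalIntegral.integral_const_mul _ _
    have hid2 : (∫ s in a..b, (D s + ρ^2 * Bb))
        = (∫ s in a..b, D s) + (b - a) * (ρ^2 * Bb) := by
      rw [intervalIntegral.integral_add (hDii a b ha hab) intervalIntegrable_const,
        intervalIntegral.integral_const, smul_eq_mul]
    have hid3 : (∫ s in a..b, (-C0 * D s)) = -C0 * ∫ s in a..b, D s :=
      intervalIntegral.integral_const_mul _ _
    have hEE' : E b - E a = ∫ s in a..b, E' s := hincr a b ha hab
    -- assemble
    set IE : ℝ := ∫ s in a..b, E s with hIE
    set ID : ℝ := ∫ s in a..b, D s with hID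
    have k1 : ρ^2 * IE ≤ ID + (b - a) * (ρ^2 * Bb) := by
      rw [hid1, hid2] at hint1; exact hint1
    have k2 : E b - E a ≤ -C0 * ID := by
      rw [hid3] at hdisint; linarith [hEE', hdisint]
    have k3 : C0 * (ρ^2 * IE) ≤ C0 * (ID + (b - a) * (ρ^2 * Bb)) :=
      mul_le_mul_of_nonneg_left k1 hC0.le
    have k4 : C0 * (ρ^2 * ((b - a) * E b)) ≤ C0 * (ρ^2 * IE) :=
      mul_le_mul_of_nonneg_left (mul_le_mul_of_nonneg_left hconst (sq_nonneg ρ)) hC0.le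
    have e1 : C0 * (ID + (b - a) * (ρ^2 * Bb)) = C0 * ID + C0 * ρ^2 * (b - a) * Bb := by ring
    have e2 : C0 * (ρ^2 * ((b - a) * E b)) = E b * (C0 * ρ^2 * (b - a)) := by ring
    have e3 : E b * (1 + C0 * ρ^2 * (b - a)) = E b + E b * (C0 * ρ^2 * (b - a)) := by ring
    linarith [k2, k3, k4]
  -- specialized recursion at dyadic scale
  set q : ℝ := Real.sqrt (6 / C0) with hqdef
  have hqpos : 0 < q := Real.sqrt_pos.mpr (by positivity)
  have hstep : ∀ t : ℝ, 1 ≤ t →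
      E (2*t) ≤ E t / 7 + 6 * (K^2 * (1 + (q / Real.sqrt t) * (1 + Mf (2*t)))^2
        * ((q / Real.sqrt t)^3 * c3)) := by
    intro t ht
    have htpos : (0:ℝ) < t := by linarith
    have hu : 0 < Real.sqrt t := Real.sqrt_pos.mpr htpos
    set ρ : ℝ := q / Real.sqrt t with hρdef
    have hρpos : 0 < ρ := by positivity
    have hρ2 : ρ^2 = 6 / (C0 * t) := by
      rw [hρdef, div_pow, hqdef, Real.sq_sqrt (by positivity), Real.sq_sqrt htpos.le]
      field_simp
    have h6 : C0 * ρ^2 * (2*t - t) = 6 := by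
      rw [hρ2]; field_simp; ring
    have hrec := hrecur t (2*t) ρ (by linarith) (by linarith) hρpos
    rw [h6] at hrec
    have hBbnn : 0 ≤ K^2 * (1 + ρ*(1 + Mf (2*t)))^2 * (ρ^3 * c3) := by
      have : (0:ℝ) ≤ ρ^3 * c3 := mul_nonneg (by positivity) c3pos.le
      positivity
    linarith
  -- Round 1 : decay (1+t)^{-1/2}
  have hMlin : ∀ b : ℝ, 0 ≤ b → Mf b ≤ E 0 * b := by
    intro b hb
    have h1 : (∫ s in (0:ℝ)..b, E s) ≤ ∫ _s in (0:ℝ)..b, E 0 :=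
      intervalIntegral.integral_mono_on hb (hEii 0 b le_rfl hb) intervalIntegrable_const
        (fun s hs => hmono 0 s le_rfl hs.1)
    simpa [intervalIntegral.integral_const, smul_eq_mul, mul_comm] using h1
  have hE00 : 0 ≤ E 0 := hEnn 0
  set a1 : ℝ := 1 + q + 2 * E 0 * q with ha1
  have ha1pos : 0 < a1 := by positivity
  set A1 : ℝ := 6 * K^2 * a1^2 * q^3 * c3 with hA1
  have hA1nn : 0 ≤ A1 := by
    have := c3pos.le
    positivity
  have hrec1 : ∀ t : ℝ, 1 ≤ t → E (2*t) ≤ E t / 7 + A1 * t ^ (-(1/2) : ℝ) := by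
    intro t ht
    have htpos : (0:ℝ) < t := by linarith
    have hu : 0 < Real.sqrt t := Real.sqrt_pos.mpr htpos
    have hu1 : 1 ≤ Real.sqrt t := by
      rw [show (1:ℝ) = Real.sqrt 1 by simp]
      exact Real.sqrt_le_sqrt ht
    set u : ℝ := Real.sqrt t with hudef
    have ht2 : t = u^2 := (Real.sq_sqrt htpos.le).symm
    have hMb : Mf (2*t) ≤ 2 * E 0 * t := by
      have := hMlin (2*t) (by linarith)
      linarith
    have hMbnn : 0 ≤ Mf (2*t) := hMnn _ (by linarith)
    have h1 : 1 + (q/u) * (1 + Mf (2*t)) ≤ a1 * u := by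
      have h2 : (q/u) * (1 + Mf (2*t)) ≤ (q/u) * (1 + 2 * E 0 * t) :=
        mul_le_mul_of_nonneg_left (by linarith) (by positivity)
      have h3 : (q/u) * (1 + 2 * E 0 * t) = q/u + 2 * E 0 * q * u := by
        rw [ht2]; field_simp
      have h4 : q/u ≤ q := div_le_self hqpos.le hu1
      have h5 : q ≤ q * u := le_mul_of_one_le_right hqpos.le hu1
      have h6 : 0 ≤ 2 * E 0 * q * u := by positivity
      rw [ha1]
      nlinarith
    have h1nn : 0 ≤ 1 + (q/u) * (1 + Mf (2*t)) := by positivity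
    have hsq : (1 + (q/u) * (1 + Mf (2*t)))^2 ≤ (a1 * u)^2 :=
      pow_le_pow_left₀ h1nn h1 2
    have hX : 6 * (K^2 * (1 + (q/u) * (1 + Mf (2*t)))^2 * ((q/u)^3 * c3))
        ≤ A1 * t ^ (-(1/2) : ℝ) := by
      have hT : (0:ℝ) ≤ (q/u)^3 * c3 := mul_nonneg (by positivity) c3pos.le
      have step : K^2 * (1 + (q/u) * (1 + Mf (2*t)))^2 * ((q/u)^3 * c3)
          ≤ K^2 * (a1 * u)^2 * ((q/u)^3 * c3) :=
        mul_le_mul_of_nonneg_right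
          (mul_le_mul_of_nonneg_left hsq (by positivity)) hT
      have hval : 6 * (K^2 * (a1 * u)^2 * ((q/u)^3 * c3)) = A1 * (1/u) := by
        rw [hA1]; field_simp
      have hpowval : t ^ (-(1/2) : ℝ) = 1/u := by
        rw [Real.rpow_neg htpos.le, ← Real.sqrt_eq_rpow, one_div]
      rw [hpowval, ← hval]
      linarith
    calc E (2*t) ≤ E t / 7 + 6 * (K^2 * (1 + (q/u) * (1 + Mf (2*t)))^2
          * ((q/u)^3 * c3)) := hstep t ht
      _ ≤ E t / 7 + A1 * t ^ (-(1/2) : ℝ) := by linarith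
  have h2half : (2:ℝ) ^ ((1:ℝ)/2) < 7 := by
    have h1 : (2:ℝ) ^ ((1:ℝ)/2) ≤ (2:ℝ) ^ (1:ℝ) :=
      Real.rpow_le_rpow_of_exponent_le one_le_two (by norm_num)
    rw [Real.rpow_one] at h1
    linarith
  obtain ⟨C1, hC1pos, hC1⟩ := dyadic_decay E hEnn hmono (1/2) A1 (by norm_num) hA1nn
    (by norm_num at h2half ⊢; exact h2half) hrec1
  -- bound on Mf using round-1 decay
  have hMf2 : ∀ b : ℝ, 0 ≤ b → Mf b ≤ 2 * C1 * Real.sqrt (1+b) := by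
    intro b hb
    have hcont : ContinuousOn (fun s : ℝ => C1 * (1+s) ^ (-(1/2) : ℝ)) (Icc 0 b) := by
      apply ContinuousOn.mul continuousOn_const
      apply ContinuousOn.rpow_const ((continuous_const.add continuous_id).continuousOn)
      intro x hx
      exact Or.inl (ne_of_gt (by have := hx.1; show (0:ℝ) < 1 + x; linarith))
    have hii : IntervalIntegrable (fun s : ℝ => C1 * (1+s) ^ (-(1/2) : ℝ)) volume 0 b := by
      apply ContinuousOn.intervalIntegrable
      rwa [uIcc_of_le hb]
    have h1 : Mf b ≤ ∫ s in (0:ℝ)..b, C1 * (1+s) ^ (-(1/2) : ℝ) := by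
      apply intervalIntegral.integral_mono_on hb (hEii 0 b le_rfl hb) hii
      intro s hs
      exact hC1 s hs.1
    have hderiv : ∀ x ∈ uIcc (0:ℝ) b, HasDerivAt
        (fun s : ℝ => 2 * C1 * Real.sqrt (1+s)) (C1 * (1+x) ^ (-(1/2) : ℝ)) x := by
      intro x hx
      rw [uIcc_of_le hb] at hx
      have hx1 : (0:ℝ) < 1 + x := by have := hx.1; linarith
      have hs : HasDerivAt (fun s : ℝ => Real.sqrt (1+s)) (1/(2*Real.sqrt (1+x))) x := by
        have h0 : HasDerivAt (fun s : ℝ => 1 + s) 1 x := (hasDerivAt_id x).const_add 1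
        have := (Real.hasDerivAt_sqrt hx1.ne').comp x h0
        simpa [Function.comp_def] using this
      have := hs.const_mul (2 * C1)
      refine this.congr_deriv ?_
      rw [Real.rpow_neg hx1.le, ← Real.sqrt_eq_rpow]
      have hsq : 0 < Real.sqrt (1+x) := Real.sqrt_pos.mpr hx1
      field_simp
    have h2 : (∫ s in (0:ℝ)..b, C1 * (1+s) ^ (-(1/2) : ℝ))
        = 2 * C1 * Real.sqrt (1+b) - 2 * C1 * Real.sqrt (1+0) :=
      intervalIntegral.integral_eq_sub_of_hasDerivAt hderiv hii
    have h3 : 0 ≤ 2 * C1 * Real.sqrt (1+0) := by positivity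
    rw [h2] at h1
    linarith
  -- Round 2 : decay (1+t)^{-3/2}
  set a2 : ℝ := 1 + q + 2 * Real.sqrt 3 * C1 * q with ha2
  have ha2pos : 0 < a2 := by positivity
  set A2 : ℝ := 6 * K^2 * a2^2 * q^3 * c3 with hA2
  have hA2nn : 0 ≤ A2 := by
    have := c3pos.le
    positivity
  have hrec2 : ∀ t : ℝ, 1 ≤ t → E (2*t) ≤ E t / 7 + A2 * t ^ (-(3/2) : ℝ) := by
    intro t ht
    have htpos : (0:ℝ) < t := by linarith
    have hu : 0 < Real.sqrt t := Real.sqrt_pos.mpr htpos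
    have hu1 : 1 ≤ Real.sqrt t := by
      rw [show (1:ℝ) = Real.sqrt 1 by simp]
      exact Real.sqrt_le_sqrt ht
    set u : ℝ := Real.sqrt t with hudef
    have ht2 : t = u^2 := (Real.sq_sqrt htpos.le).symm
    have hMbnn : 0 ≤ Mf (2*t) := hMnn _ (by linarith)
    have hMb : Mf (2*t) ≤ 2 * Real.sqrt 3 * C1 * u := by
      have h1 := hMf2 (2*t) (by linarith)
      have h2 : Real.sqrt (1+2*t) ≤ Real.sqrt 3 * u := by
        rw [hudef, ← Real.sqrt_mul (by norm_num : (0:ℝ) ≤ 3)]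
        exact Real.sqrt_le_sqrt (by linarith)
      nlinarith
    have h1 : 1 + (q/u) * (1 + Mf (2*t)) ≤ a2 := by
      have h2 : (q/u) * (1 + Mf (2*t)) ≤ (q/u) * (1 + 2 * Real.sqrt 3 * C1 * u) :=
        mul_le_mul_of_nonneg_left (by linarith) (by positivity)
      have h3 : (q/u) * (1 + 2 * Real.sqrt 3 * C1 * u) = q/u + 2 * Real.sqrt 3 * C1 * q := by
        field_simp
      have h4 : q/u ≤ q := div_le_self hqpos.le hu1
      rw [ha2]
      nlinarith
    have h1nn : 0 ≤ 1 + (q/u) * (1 + Mf (2*t)) := by positivity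
    have hsq : (1 + (q/u) * (1 + Mf (2*t)))^2 ≤ a2^2 := pow_le_pow_left₀ h1nn h1 2
    have hX : 6 * (K^2 * (1 + (q/u) * (1 + Mf (2*t)))^2 * ((q/u)^3 * c3))
        ≤ A2 * t ^ (-(3/2) : ℝ) := by
      have hT : (0:ℝ) ≤ (q/u)^3 * c3 := mul_nonneg (by positivity) c3pos.le
      have step : K^2 * (1 + (q/u) * (1 + Mf (2*t)))^2 * ((q/u)^3 * c3)
          ≤ K^2 * a2^2 * ((q/u)^3 * c3) :=
        mul_le_mul_of_nonneg_right
          (mul_le_mul_of_nonneg_left hsq (by positivity)) hT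
      have hpowval : t ^ (-(3/2) : ℝ) = 1/u^3 := by
        rw [Real.rpow_neg htpos.le, one_div, hudef]
        congr 1
        rw [show ((3:ℝ)/2) = (1/2 : ℝ) * (3:ℕ) by norm_num,
          Real.rpow_mul htpos.le, Real.rpow_natCast, ← Real.sqrt_eq_rpow]
      have hval : 6 * (K^2 * a2^2 * ((q/u)^3 * c3)) = A2 * (1/u^3) := by
        rw [hA2]; field_simp
      rw [hpowval, ← hval]
      linarith
    calc E (2*t) ≤ E t / 7 + 6 * (K^2 * (1 + (q/u) * (1 + Mf (2*t)))^2
          * ((q/u)^3 * c3)) := hstep t ht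
      _ ≤ E t / 7 + A2 * t ^ (-(3/2) : ℝ) := by linarith
  have h2threehalf : (2:ℝ) ^ ((3:ℝ)/2) < 7 := by
    have h1 : (2:ℝ) ^ ((3:ℝ)/2) ≤ (2:ℝ) ^ (2:ℝ) :=
      Real.rpow_le_rpow_of_exponent_le one_le_two (by norm_num)
    have h2 : (2:ℝ) ^ (2:ℝ) = 4 := by
      rw [show ((2:ℝ):ℝ) = (((2:ℕ)):ℝ) by norm_num, Real.rpow_natCast]
      norm_num
    rw [h2] at h1
    linarith
  obtain ⟨C, hCpos, hC⟩ := dyadic_decay E hEnn hmono (3/2) A2 (by norm_num) hA2nn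
    (by norm_num at h2threehalf ⊢; exact h2threehalf) hrec2
  exact ⟨C, hCpos, hC⟩
end

section
/- Let $v : [0,\infty) \times \mathbb{R}^3 \to \mathbb{C}$ be measurable with $v(t,\cdot) \in L^2(\mathbb{R}^3;\mathbb{C})$ for every $t$, set $E(t) = \int_{\mathbb{R}^3} |v(t,\xi)|^2\,d\xi$, and suppose $E$ is locally absolutely continuous, $\int_{\mathbb{R}^3}|\xi|^2 |v(t,\xi)|^2\,d\xi < \infty$ for a.e. $t$, and there is $C_0 > 0$ with $E'(t) + C_0 \int_{\mathbb{R}^3} |\xi|^2 |v(t,\xi)|^2\,d\xi \le 0$ for a.e. $t > 0$. Let $\alpha \ge 1$ and $\beta \in [0,1)$ satisfy $2\alpha > 2 - \beta$, and assume there is $K > 0$ such that for every $t \ge 0$ and almost every $\xi$: $|v(t,\xi)| \le K\Big(1 + |\xi|\Big(1 + \big(\int_0^t E(s)^{\frac{\alpha}{2-\beta}}\,ds\big)^{\frac{2-\beta}{2}} + \int_0^t E(s)\,ds\Big)\Big)$. Then there is a constant $C$, depending only on $K$, $C_0$, $E(0)$, $\alpha$ and $\beta$, such that $E(t) \le C (1+t)^{-3/2}$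 for all $t \ge 0$. -/
open MeasureTheory
open Set Metric



private lemma two_rpow_32_le : (2:ℝ) ^ ((3:ℝ)/2) ≤ 3 := by
  have h0 : (0:ℝ) ≤ (2:ℝ) ^ ((3:ℝ)/2) := Real.rpow_nonneg (by norm_num) _
  have h1 : ((2:ℝ) ^ ((3:ℝ)/2))^(2:ℕ) = 8 := by
    rw [← Real.rpow_natCast ((2:ℝ) ^ ((3:ℝ)/2)) 2, ← Real.rpow_mul (by norm_num : (0:ℝ) ≤ 2)]
    rw [show ((3:ℝ)/2) * ((2:ℕ):ℝ) = ((3:ℕ):ℝ) by push_cast; ring, Real.rpow_natCast]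
    norm_num
  nlinarith

private lemma aux_prim {m s : ℝ} (hm0 : 0 ≤ m) (hm : m ≤ 1/2) (hs : 0 ≤ s) :
    (∫ u in (0:ℝ)..s, (1+u) ^ (-m)) ≤ 2 * (1+s) ^ (1-m) := by
  have h1m : (0:ℝ) < 1 - m := by linarith
  have hcont : ContinuousOn (fun u : ℝ => (1+u) ^ (-m)) (Set.uIcc 0 s) := by
    apply ContinuousOn.rpow_const (continuousOn_const.add continuousOn_id)
    intro x hx
    rw [Set.uIcc_of_le hs] at hx
    have : (0:ℝ) < 1 + x := by linarith [hx.1]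
    exact Or.inl this.ne'
  have hint : IntervalIntegrable (fun u : ℝ => (1+u) ^ (-m)) volume 0 s :=
    hcont.intervalIntegrable
  have hderiv : ∀ u ∈ Set.uIcc (0:ℝ) s,
      HasDerivAt (fun x : ℝ => (1+x) ^ (1-m) / (1-m)) ((1+u) ^ (-m)) u := by
    intro u hu
    rw [Set.uIcc_of_le hs] at hu
    have hu0 : (0:ℝ) < 1 + u := by linarith [hu.1]
    have h1 : HasDerivAt (fun x : ℝ => 1 + x) 1 u := by
      simpa using (hasDerivAt_id u).const_add (1:ℝ)
    have h2 : HasDerivAt (fun y : ℝ => y ^ (1-m)) ((1-m) * (1+u) ^ (1-m-1)) (1+u) :=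
      Real.hasDerivAt_rpow_const (Or.inl hu0.ne')
    have h3 : HasDerivAt (fun x : ℝ => (1+x) ^ (1-m)) ((1-m) * (1+u) ^ (1-m-1) * 1) u :=
      h2.comp u h1
    have h4 := h3.div_const (1-m)
    have he : 1 - m - 1 = -m := by ring
    rw [he] at h4
    have : (1-m) * (1+u) ^ (-m) * 1 / (1-m) = (1+u) ^ (-m) := by
      field_simp
    rwa [this] at h4
  have heq := intervalIntegral.integral_eq_sub_of_hasDerivAt hderiv hint
  rw [heq]
  have hpos : (0:ℝ) ≤ (1+s) ^ (1-m) := Real.rpow_nonneg (by linarith) _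
  have h10 : ((1:ℝ)+(0:ℝ)) ^ (1-m) = 1 := by
    norm_num
  rw [h10]
  rw [div_sub_div_same, div_le_iff₀ h1m]
  nlinarith



set_option maxHeartbeats 1000000 in
private lemma aux_iter (E : ℝ → ℝ) (C0 Q M g γ : ℝ) (hC0 : 0 < C0) (hQ : 0 ≤ Q) (hM : 0 ≤ M)
    (hγ0 : 0 < γ) (hγ32 : γ ≤ 3/2) (hγg : 2*g ≤ 5/2 - γ)
    (hpos : ∀ t, 0 ≤ t → 0 ≤ E t)
    (hmono : ∀ τ t : ℝ, 0 ≤ τ → τ ≤ t → E t ≤ E τ)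
    (hcore : ∀ ρ τ t : ℝ, 0 < ρ → 0 ≤ τ → τ ≤ t →
      E t * (1 + C0 * ρ^2 * (t - τ)) ≤
        E τ + C0 * ρ^2 * (t-τ) * (Q * ρ^3 * (1 + ρ * (M * (1+t)^g))^2)) :
    ∃ C : ℝ, 0 < C ∧ ∀ t, 0 ≤ t → E t ≤ C * (1+t) ^ (-γ) := by
  have hE0 : 0 ≤ E 0 := hpos 0 le_rfl
  set L : ℝ := 20 / C0 with hLdef
  have hLpos : 0 < L := by positivity
  set sL : ℝ := Real.sqrt L with hsLdef
  have hsL : 0 < sL := Real.sqrt_pos.2 hLpos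
  set D : ℝ := C0 * Q * (sL^5 + sL^7 * M^2) + 1 with hDdef
  have hD : 0 < D := by positivity
  refine ⟨3 * E 0 + 3 * D, by positivity, ?_⟩
  set C : ℝ := 3 * E 0 + 3 * D with hCdef
  have hCpos : 0 < C := by positivity
  have hDC : D ≤ C := by linarith only [hE0, hD, hCdef]
  -- base case
  have base : ∀ t : ℝ, 0 ≤ t → t ≤ 1 → E t ≤ C * (1+t) ^ (-γ) := by
    intro t ht ht1
    have he0 : (0:ℝ) < 1 + t := by linarith
    have h1 : E t ≤ E 0 := hmono 0 t le_rfl ht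
    have h2 : ((2:ℝ)) ^ (-γ) ≤ (1+t) ^ (-γ) :=
      Real.rpow_le_rpow_of_nonpos he0 (by linarith) (by linarith)
    have h3 : ((2:ℝ)) ^ (-(3/2:ℝ)) ≤ (2:ℝ) ^ (-γ) :=
      Real.rpow_le_rpow_of_exponent_le (by norm_num) (by linarith)
    have h4 : (1/3 : ℝ) ≤ (2:ℝ) ^ (-(3/2:ℝ)) := by
      rw [Real.rpow_neg (by norm_num)]
      rw [show (1/3 : ℝ) = 3⁻¹ by norm_num]
      apply inv_anti₀ (by positivity)
      simpa [show ((3:ℝ)/2) = (3/2:ℝ) by norm_num] using two_rpow_32_le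
    have h5 : (1/3 : ℝ) ≤ (1+t) ^ (-γ) := by linarith
    have h6 : E 0 ≤ C / 3 := by rw [hCdef]; linarith only [hD, hDdef]
    calc E t ≤ C / 3 := h1.trans h6
      _ = C * (1/3) := by ring
      _ ≤ C * (1+t) ^ (-γ) := by
          exact mul_le_mul_of_nonneg_left h5 hCpos.le
  -- inductive step
  have step : ∀ t : ℝ, 1 ≤ t → E (t/2) ≤ C * (1+t/2) ^ (-γ) → E t ≤ C * (1+t) ^ (-γ) := by
    intro t ht IH
    have ht0 : (0:ℝ) ≤ t := by linarith
    have he0 : (0:ℝ) < 1 + t := by linarith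
    have he1 : (1:ℝ) ≤ 1 + t := by linarith
    set e : ℝ := 1 + t with hedef
    set r : ℝ := e ^ (-(1/2:ℝ)) with hrdef
    have hr0 : 0 < r := Real.rpow_pos_of_pos he0 _
    set ρ : ℝ := sL * r with hρdef
    have hρ0 : 0 < ρ := by positivity
    have hrk : ∀ k : ℕ, r^(k:ℕ) = e ^ (-(k/2 : ℝ)) := by
      intro k
      rw [hrdef, ← Real.rpow_natCast (e ^ (-(1/2:ℝ))) k, ← Real.rpow_mul he0.le]
      congr 1
      push_cast
      ring
    have hr2 : r^(2:ℕ) = e ^ (-(1:ℝ)) := by rw [hrk 2]; norm_num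
    have hr5 : r^(5:ℕ) = e ^ (-(5/2:ℝ)) := by rw [hrk 5]; norm_num
    have hr7 : r^(7:ℕ) = e ^ (-(7/2:ℝ)) := by rw [hrk 7]; norm_num
    have hsL2 : sL^(2:ℕ) = L := Real.sq_sqrt hLpos.le
    have hρ2 : ρ^(2:ℕ) = L * e ^ (-(1:ℝ)) := by rw [hρdef, mul_pow, hsL2, hr2]
    have heinv : e ^ (-(1:ℝ)) = 1/e := by
      rw [Real.rpow_neg_one]; ring
    -- coefficient bound
    have hcoeff : 5 ≤ C0 * ρ^2 * (t - t/2) := by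
      have hC0L : C0 * L = 20 := by rw [hLdef]; field_simp
      have hmul : e * (C0 * ρ^2 * (t - t/2)) = 10 * t := by
        rw [hρ2, heinv, hLdef]
        field_simp
        ring
      have h5e : 5 * e ≤ 10 * t := by rw [hedef]; linarith
      have h2 : e * 5 ≤ e * (C0 * ρ^2 * (t - t/2)) := by
        rw [hmul]; linarith
      exact le_of_mul_le_mul_left h2 he0
    -- error bound
    have hρ5 : ρ^(5:ℕ) = sL^5 * e ^ (-(5/2:ℝ)) := by rw [hρdef, mul_pow, hr5]
    have hρ7 : ρ^(7:ℕ) = sL^7 * e ^ (-(7/2:ℝ)) := by rw [hρdef, mul_pow, hr7]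
    have heg2 : ((e ^ g)^(2:ℕ) : ℝ) = e ^ (2*g) := by
      rw [← Real.rpow_natCast (e ^ g) 2, ← Real.rpow_mul he0.le]
      congr 1
      push_cast
      ring
    have hte : t ≤ e := by rw [hedef]; linarith
    have h52 : e ^ (-(5/2:ℝ)) * e = e ^ (-(3/2:ℝ)) := by
      rw [← Real.rpow_add_one he0.ne']; norm_num
    have h72 : e ^ (-(7/2:ℝ)) * e ^ (2*g) * e = e ^ (2*g - 5/2) := by
      rw [← Real.rpow_add he0, ← Real.rpow_add_one he0.ne']; ring_nf
    have hmγ : e ^ (-(3/2:ℝ)) ≤ e ^ (-γ) :=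
      Real.rpow_le_rpow_of_exponent_le he1 (by linarith)
    have hmγ2 : e ^ (2*g - 5/2) ≤ e ^ (-γ) :=
      Real.rpow_le_rpow_of_exponent_le he1 (by linarith)
    have hermneg : (0:ℝ) ≤ e ^ (-γ) := (Real.rpow_pos_of_pos he0 _).le
    have herr : C0 * ρ^2 * (t - t/2) * (Q * ρ^3 * (1 + ρ * (M * e^g))^2) ≤ (D - 1) * e ^ (-γ) := by
      have hx2 : (1 + ρ * (M * e^g))^2 ≤ 2 + 2 * (ρ^2 * (M^2 * (e^g)^2)) := by
        linarith only [sq_nonneg (1 - ρ * (M * e^g))]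
      have hfac : (0:ℝ) ≤ C0 * ρ^2 * (t - t/2) * (Q * ρ^3) := by positivity
      have step1 : C0 * ρ^2 * (t - t/2) * (Q * ρ^3 * (1 + ρ * (M * e^g))^2)
          ≤ C0 * ρ^2 * (t - t/2) * (Q * ρ^3) * (2 + 2 * (ρ^2 * (M^2 * (e^g)^2))) := by
        calc C0 * ρ^2 * (t - t/2) * (Q * ρ^3 * (1 + ρ * (M * e^g))^2)
            = C0 * ρ^2 * (t - t/2) * (Q * ρ^3) * ((1 + ρ * (M * e^g))^2) := by ring
          _ ≤ C0 * ρ^2 * (t - t/2) * (Q * ρ^3) * (2 + 2 * (ρ^2 * (M^2 * (e^g)^2))) :=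
              mul_le_mul_of_nonneg_left hx2 hfac
      have expand : C0 * ρ^2 * (t - t/2) * (Q * ρ^3) * (2 + 2 * (ρ^2 * (M^2 * (e^g)^2)))
          = C0 * Q * (ρ^5 * t) + C0 * Q * M^2 * ((ρ^7 * (e^g)^2) * t) := by ring
      have hterm1 : ρ^(5:ℕ) * t ≤ sL^5 * e ^ (-γ) := by
        rw [hρ5]
        calc sL^5 * e ^ (-(5/2:ℝ)) * t ≤ sL^5 * e ^ (-(5/2:ℝ)) * e := by
              apply mul_le_mul_of_nonneg_left hte (by positivity)
          _ = sL^5 * (e ^ (-(5/2:ℝ)) * e) := by ring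
          _ = sL^5 * e ^ (-(3/2:ℝ)) := by rw [h52]
          _ ≤ sL^5 * e ^ (-γ) := mul_le_mul_of_nonneg_left hmγ (by positivity)
      have hterm2 : (ρ^(7:ℕ) * (e^g)^(2:ℕ)) * t ≤ sL^7 * e ^ (-γ) := by
        rw [hρ7, heg2]
        calc sL^7 * e ^ (-(7/2:ℝ)) * e ^ (2*g) * t
            ≤ sL^7 * e ^ (-(7/2:ℝ)) * e ^ (2*g) * e := by
              apply mul_le_mul_of_nonneg_left hte (by positivity)
          _ = sL^7 * (e ^ (-(7/2:ℝ)) * e ^ (2*g) * e) := by ring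
          _ = sL^7 * e ^ (2*g - 5/2) := by rw [h72]
          _ ≤ sL^7 * e ^ (-γ) := mul_le_mul_of_nonneg_left hmγ2 (by positivity)
      have hC0Q : (0:ℝ) ≤ C0 * Q := by positivity
      have hC0QM : (0:ℝ) ≤ C0 * Q * M^2 := by positivity
      calc C0 * ρ^2 * (t - t/2) * (Q * ρ^3 * (1 + ρ * (M * e^g))^2)
          ≤ C0 * Q * (ρ^5 * t) + C0 * Q * M^2 * ((ρ^7 * (e^g)^2) * t) := by
            rw [← expand]; exact step1
        _ ≤ C0 * Q * (sL^5 * e ^ (-γ)) + C0 * Q * M^2 * (sL^7 * e ^ (-γ)) := by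
            exact add_le_add (mul_le_mul_of_nonneg_left hterm1 hC0Q)
              (mul_le_mul_of_nonneg_left hterm2 hC0QM)
        _ = (D - 1) * e ^ (-γ) := by rw [hDdef]; ring
    -- previous-time bound
    have hprev : E (t/2) ≤ 3 * C * e ^ (-γ) := by
      have h1 : (1 + t/2 : ℝ) ^ (-γ) ≤ (e/2) ^ (-γ) := by
        apply Real.rpow_le_rpow_of_nonpos (by positivity) (by rw [hedef]; linarith) (by linarith)
      have h2 : ((e/2:ℝ)) ^ (-γ) = e ^ (-γ) * (2:ℝ)^γ := by
        rw [Real.div_rpow he0.le (by norm_num : (0:ℝ) ≤ 2)]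
        rw [Real.rpow_neg (by norm_num : (0:ℝ) ≤ 2), div_eq_mul_inv, inv_inv]
      have h3 : ((2:ℝ))^γ ≤ 3 := by
        calc ((2:ℝ))^γ ≤ (2:ℝ) ^ ((3:ℝ)/2) :=
              Real.rpow_le_rpow_of_exponent_le (by norm_num) (by linarith)
          _ ≤ 3 := two_rpow_32_le
      calc E (t/2) ≤ C * (1 + t/2) ^ (-γ) := IH
        _ ≤ C * (e/2) ^ (-γ) := mul_le_mul_of_nonneg_left h1 hCpos.le
        _ = C * ((2:ℝ)^γ) * e ^ (-γ) := by rw [h2]; ring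
        _ ≤ C * 3 * e ^ (-γ) := by
            apply mul_le_mul_of_nonneg_right _ hermneg
            exact mul_le_mul_of_nonneg_left h3 hCpos.le
        _ = 3 * C * e ^ (-γ) := by ring
    -- combine
    have hcoreT := hcore ρ (t/2) t hρ0 (by linarith) (by linarith)
    have hEt : 0 ≤ E t := hpos t ht0
    have h6Et : 6 * E t ≤ E t * (1 + C0 * ρ^2 * (t - t/2)) := by
      calc 6 * E t = E t * 6 := by ring
        _ ≤ E t * (1 + C0 * ρ^2 * (t - t/2)) :=
            mul_le_mul_of_nonneg_left (by linarith) hEt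
    have hfinal : 6 * E t ≤ 3 * C * e ^ (-γ) + (D - 1) * e ^ (-γ) := by
      calc 6 * E t ≤ E t * (1 + C0 * ρ^2 * (t - t/2)) := h6Et
        _ ≤ E (t/2) + C0 * ρ^2 * (t - t/2) * (Q * ρ^3 * (1 + ρ * (M * (1+t)^g))^2) := hcoreT
        _ ≤ 3 * C * e ^ (-γ) + (D - 1) * e ^ (-γ) := add_le_add hprev (by rw [hedef] at herr ⊢; exact herr)
    have hDC' : (D - 1) * e ^ (-γ) ≤ C * e ^ (-γ) :=
      mul_le_mul_of_nonneg_right (by linarith) hermneg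
    have : 6 * E t ≤ 4 * (C * e ^ (-γ)) := by linarith
    have hCe : 0 ≤ C * e ^ (-γ) := by positivity
    linarith
  -- induction
  have main : ∀ n : ℕ, ∀ t : ℝ, 0 ≤ t → t ≤ n + 1 → E t ≤ C * (1+t) ^ (-γ) := by
    intro n
    induction n with
    | zero => intro t ht h1; exact base t ht (by push_cast at h1; linarith)
    | succ n ih =>
      intro t ht h1
      rcases le_or_gt t 1 with h | h
      · exact base t ht h
      · refine step t h.le (ih (t/2) (by linarith) ?_)
        have : (n:ℝ) + 1 + 1 = (n:ℝ) + 2 := by ring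
        push_cast at h1 ⊢
        linarith
  intro t ht
  refine main ⌈t⌉₊ t ht ?_
  have := Nat.le_ceil t
  push_cast
  linarith

private lemma aux_G (E : ℝ → ℝ) (θ q Cp γp g : ℝ)
    (hθ0 : 0 < θ) (hq0 : 0 ≤ q) (hq1 : q ≤ 1) (hCp : 0 < Cp) (hγp : 0 ≤ γp)
    (hEnn : ∀ u, 0 ≤ E u)
    (hIntθ : ∀ s, 0 ≤ s → IntervalIntegrable (fun u => E u ^ θ) volume 0 s)
    (hIntE : ∀ s, 0 ≤ s → IntervalIntegrable E volume 0 s)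
    (hga : (1 - min (γp*θ) (1/2)) * q ≤ g) (hgb : 1 - min γp (1/2) ≤ g)
    (hdecay : ∀ u, 0 ≤ u → E u ≤ Cp * (1+u) ^ (-γp)) :
    ∃ M : ℝ, 0 ≤ M ∧ ∀ s, 0 ≤ s →
      1 + (∫ u in (0:ℝ)..s, E u ^ θ) ^ q + (∫ u in (0:ℝ)..s, E u) ≤ M * (1+s) ^ g := by
  have hg0 : 0 ≤ g := by
    have : min γp (1/2) ≤ 1/2 := min_le_right _ _
    linarith
  set m : ℝ := min (γp*θ) (1/2) with hmdef
  set m' : ℝ := min γp (1/2) with hm'def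
  have hm0 : 0 ≤ m := le_min (by positivity) (by norm_num)
  have hm12 : m ≤ 1/2 := min_le_right _ _
  have hm'0 : 0 ≤ m' := le_min hγp (by norm_num)
  have hm'12 : m' ≤ 1/2 := min_le_right _ _
  refine ⟨1 + (2 * Cp ^ θ) ^ q + 2 * Cp, by positivity, ?_⟩
  intro s hs
  have he1 : ∀ u : ℝ, 0 ≤ u → (1:ℝ) ≤ 1 + u := fun u hu => by linarith
  -- pointwise bound for E^θ
  have hptθ : ∀ u ∈ Icc (0:ℝ) s, E u ^ θ ≤ Cp ^ θ * (1+u) ^ (-m) := by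
    intro u hu
    have hu0 : (0:ℝ) ≤ u := hu.1
    have h1 : E u ^ θ ≤ (Cp * (1+u) ^ (-γp)) ^ θ :=
      Real.rpow_le_rpow (hEnn u) (hdecay u hu0) hθ0.le
    have h2 : (Cp * (1+u) ^ (-γp)) ^ θ = Cp ^ θ * (1+u) ^ (-(γp*θ)) := by
      rw [Real.mul_rpow hCp.le (Real.rpow_nonneg (by linarith) _),
        ← Real.rpow_mul (by linarith : (0:ℝ) ≤ 1+u)]
      ring_nf
    have h3 : ((1+u):ℝ) ^ (-(γp*θ)) ≤ (1+u) ^ (-m) :=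
      Real.rpow_le_rpow_of_exponent_le (he1 u hu0) (by
        have : m ≤ γp*θ := min_le_left _ _
        linarith)
    calc E u ^ θ ≤ Cp ^ θ * (1+u) ^ (-(γp*θ)) := by rw [← h2]; exact h1
      _ ≤ Cp ^ θ * (1+u) ^ (-m) := mul_le_mul_of_nonneg_left h3 (by positivity)
  -- bound on A-integral
  have hintm : IntervalIntegrable (fun u : ℝ => Cp ^ θ * (1+u) ^ (-m)) volume 0 s := by
    apply ContinuousOn.intervalIntegrable
    apply ContinuousOn.mul continuousOn_const
    apply ContinuousOn.rpow_const (continuousOn_const.add continuousOn_id)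
    intro x hx
    rw [Set.uIcc_of_le hs] at hx
    exact Or.inl (by have := hx.1; intro h; linarith [hx.1] : (1+x:ℝ) ≠ 0)
  have hA1 : (∫ u in (0:ℝ)..s, E u ^ θ) ≤ Cp ^ θ * (2 * (1+s) ^ (1-m)) := by
    calc (∫ u in (0:ℝ)..s, E u ^ θ) ≤ ∫ u in (0:ℝ)..s, Cp ^ θ * (1+u) ^ (-m) :=
          intervalIntegral.integral_mono_on hs (hIntθ s hs) hintm hptθ
      _ = Cp ^ θ * ∫ u in (0:ℝ)..s, (1+u) ^ (-m) := by
          rw [← intervalIntegral.integral_const_mul]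
      _ ≤ Cp ^ θ * (2 * (1+s) ^ (1-m)) := by
          apply mul_le_mul_of_nonneg_left (aux_prim hm0 hm12 hs) (by positivity)
  have hAnn : (0:ℝ) ≤ ∫ u in (0:ℝ)..s, E u ^ θ :=
    intervalIntegral.integral_nonneg hs (fun u _ => Real.rpow_nonneg (hEnn u) _)
  have hA : (∫ u in (0:ℝ)..s, E u ^ θ) ^ q ≤ (2 * Cp ^ θ) ^ q * (1+s) ^ g := by
    have h1 : (∫ u in (0:ℝ)..s, E u ^ θ) ^ q ≤ (2 * Cp ^ θ * (1+s) ^ (1-m)) ^ q :=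
      Real.rpow_le_rpow hAnn (by linarith) hq0
    have h2 : ((2 * Cp ^ θ * (1+s) ^ (1-m)) : ℝ) ^ q
        = (2 * Cp ^ θ) ^ q * (1+s) ^ ((1-m)*q) := by
      rw [Real.mul_rpow (by positivity) (Real.rpow_nonneg (by linarith) _),
        ← Real.rpow_mul (by linarith : (0:ℝ) ≤ 1+s)]
    have h3 : ((1+s):ℝ) ^ ((1-m)*q) ≤ (1+s) ^ g :=
      Real.rpow_le_rpow_of_exponent_le (he1 s hs) hga
    calc (∫ u in (0:ℝ)..s, E u ^ θ) ^ q ≤ (2 * Cp ^ θ) ^ q * (1+s) ^ ((1-m)*q) := by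
          rw [← h2]; exact h1
      _ ≤ (2 * Cp ^ θ) ^ q * (1+s) ^ g := mul_le_mul_of_nonneg_left h3 (by positivity)
  -- B-integral
  have hptE : ∀ u ∈ Icc (0:ℝ) s, E u ≤ Cp * (1+u) ^ (-m') := by
    intro u hu
    have h3 : ((1+u):ℝ) ^ (-γp) ≤ (1+u) ^ (-m') :=
      Real.rpow_le_rpow_of_exponent_le (he1 u hu.1) (by
        have : m' ≤ γp := min_le_left _ _
        linarith)
    calc E u ≤ Cp * (1+u) ^ (-γp) := hdecay u hu.1
      _ ≤ Cp * (1+u) ^ (-m') := mul_le_mul_of_nonneg_left h3 hCp.le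
  have hintm' : IntervalIntegrable (fun u : ℝ => Cp * (1+u) ^ (-m')) volume 0 s := by
    apply ContinuousOn.intervalIntegrable
    apply ContinuousOn.mul continuousOn_const
    apply ContinuousOn.rpow_const (continuousOn_const.add continuousOn_id)
    intro x hx
    rw [Set.uIcc_of_le hs] at hx
    exact Or.inl (by intro h; linarith [hx.1] : (1+x:ℝ) ≠ 0)
  have hB : (∫ u in (0:ℝ)..s, E u) ≤ 2 * Cp * (1+s) ^ g := by
    have h1 : (∫ u in (0:ℝ)..s, E u) ≤ Cp * (2 * (1+s) ^ (1-m')) := by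
      calc (∫ u in (0:ℝ)..s, E u) ≤ ∫ u in (0:ℝ)..s, Cp * (1+u) ^ (-m') :=
            intervalIntegral.integral_mono_on hs (hIntE s hs) hintm' hptE
        _ = Cp * ∫ u in (0:ℝ)..s, (1+u) ^ (-m') := by
            rw [← intervalIntegral.integral_const_mul]
        _ ≤ Cp * (2 * (1+s) ^ (1-m')) := by
            apply mul_le_mul_of_nonneg_left (aux_prim hm'0 hm'12 hs) (by positivity)
    have h3 : ((1+s):ℝ) ^ (1-m') ≤ (1+s) ^ g :=
      Real.rpow_le_rpow_of_exponent_le (he1 s hs) hgb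
    calc (∫ u in (0:ℝ)..s, E u) ≤ Cp * (2 * (1+s) ^ (1-m')) := h1
      _ = 2 * Cp * (1+s) ^ (1-m') := by ring
      _ ≤ 2 * Cp * (1+s) ^ g := mul_le_mul_of_nonneg_left h3 (by positivity)
  have hone : (1:ℝ) ≤ (1+s) ^ g := by
    calc (1:ℝ) = 1 ^ g := (Real.one_rpow g).symm
      _ ≤ (1+s) ^ g := Real.rpow_le_rpow zero_le_one (he1 s hs) hg0
  calc 1 + (∫ u in (0:ℝ)..s, E u ^ θ) ^ q + (∫ u in (0:ℝ)..s, E u)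
      ≤ (1+s) ^ g + (2 * Cp ^ θ) ^ q * (1+s) ^ g + 2 * Cp * (1+s) ^ g :=
        add_le_add (add_le_add hone hA) hB
    _ = (1 + (2 * Cp ^ θ) ^ q + 2 * Cp) * (1+s) ^ g := by ring


set_option maxHeartbeats 1000000 in
/-- Abstract form of the main `L²`-decay theorem in the case `11/5 ≤ p⁻ < 3`. If
`E(t) = ∫ |v(t,ξ)|² dξ` is locally absolutely continuous (encoded by `E t = E 0 + ∫₀ᵗ E'`
with `E'` locally integrable), satisfies the dissipation inequality
`E'(t) + C₀ ∫ |ξ|²|v(t,ξ)|² dξ ≤ 0` a.e., `α ≥ 1`, `β ∈ [0,1)`, `2α > 2 - β`, and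
`|v(t,ξ)| ≤ K (1 + |ξ|(1 + (∫₀ᵗ E(s)^{α/(2-β)} ds)^{(2-β)/2} + ∫₀ᵗ E(s) ds))` for all
`t ≥ 0` and a.e. `ξ`, then `E(t) ≤ C (1+t)^{-3/2}` for a constant
`C = C(K, C₀, E(0), α, β)`. -/
theorem decay_main_case2
    (v : ℝ → EuclideanSpace ℝ (Fin 3) → ℂ) (hv : Measurable (Function.uncurry v))
    (hL2 : ∀ t : ℝ, Integrable (fun ξ : EuclideanSpace ℝ (Fin 3) => ‖v t ξ‖ ^ 2))
    (C0 : ℝ) (hC0 : 0 < C0) (E' : ℝ → ℝ)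
    (hE'int : ∀ t : ℝ, 0 ≤ t → IntervalIntegrable E' volume 0 t)
    (hEAC : ∀ t : ℝ, 0 ≤ t →
      (∫ ξ, ‖v t ξ‖ ^ 2) = (∫ ξ, ‖v 0 ξ‖ ^ 2) + ∫ s in (0:ℝ)..t, E' s)
    (hDfin : ∀ᵐ t ∂(volume : Measure ℝ), 0 < t →
      Integrable (fun ξ : EuclideanSpace ℝ (Fin 3) => ‖ξ‖ ^ 2 * ‖v t ξ‖ ^ 2))
    (hdiss : ∀ᵐ t ∂(volume : Measure ℝ), 0 < t →
      E' t + C0 * ∫ ξ, ‖ξ‖ ^ 2 * ‖v t ξ‖ ^ 2 ≤ 0)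
    (α β : ℝ) (hα : 1 ≤ α) (hβ0 : 0 ≤ β) (hβ1 : β < 1) (hαβ : 2 - β < 2 * α)
    (K : ℝ) (hK : 0 < K)
    (hptw : ∀ t : ℝ, 0 ≤ t →
      ∀ᵐ ξ ∂(volume : Measure (EuclideanSpace ℝ (Fin 3))),
        ‖v t ξ‖ ≤ K * (1 + ‖ξ‖ *
          (1 + (∫ s in (0:ℝ)..t, (∫ η, ‖v s η‖ ^ 2) ^ (α / (2 - β))) ^ ((2 - β) / 2)
             + ∫ s in (0:ℝ)..t, ∫ η, ‖v s η‖ ^ 2))) :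
    ∃ C : ℝ, 0 < C ∧ ∀ t : ℝ, 0 ≤ t →
      (∫ ξ, ‖v t ξ‖ ^ 2) ≤ C * (1 + t) ^ (-(3 / 2) : ℝ) := by
  have hβ2 : (0:ℝ) < 2 - β := by linarith
  set E : ℝ → ℝ := fun t => ∫ ξ, ‖v t ξ‖ ^ 2 with hEdef
  set θ : ℝ := α / (2 - β) with hθdef
  set q : ℝ := (2 - β) / 2 with hqdef
  set G : ℝ → ℝ :=
    fun s => 1 + (∫ u in (0:ℝ)..s, E u ^ θ) ^ q + ∫ u in (0:ℝ)..s, E u with hGdef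
  have hθpos : 0 < θ := div_pos (by linarith) hβ2
  have hθhalf : 1/2 < θ := by rw [hθdef, lt_div_iff₀ hβ2]; linarith
  have hq0 : 0 < q := by rw [hqdef]; linarith
  have hq1 : q ≤ 1 := by rw [hqdef]; linarith
  have hθq : θ * q = α / 2 := by
    rw [hθdef, hqdef]; field_simp
  have hEnn : ∀ t, 0 ≤ E t := fun t => integral_nonneg fun ξ => by positivity
  have hDnn : ∀ s : ℝ, (0:ℝ) ≤ ∫ ξ, ‖ξ‖ ^ 2 * ‖v s ξ‖ ^ 2 :=
    fun s => integral_nonneg fun ξ => by positivity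
  have hEAC' : ∀ t : ℝ, 0 ≤ t → E t = E 0 + ∫ s in (0:ℝ)..t, E' s := hEAC
  have hptw' : ∀ t : ℝ, 0 ≤ t → ∀ᵐ ξ ∂(volume : Measure (EuclideanSpace ℝ (Fin 3))),
      ‖v t ξ‖ ≤ K * (1 + ‖ξ‖ * G t) := hptw
  have hne0 : ∀ᵐ s ∂(volume : Measure ℝ), s ≠ (0:ℝ) := by
    rw [ae_iff]
    simp only [ne_eq, not_not, setOf_eq_eq_singleton]
    exact measure_singleton 0
  have hE'sub : ∀ τ t : ℝ, 0 ≤ τ → τ ≤ t → IntervalIntegrable E' volume τ t := by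
    intro τ t hτ hτt
    refine (hE'int t (hτ.trans hτt)).mono_set ?_
    rw [Set.uIcc_of_le hτt, Set.uIcc_of_le (hτ.trans hτt)]
    exact Set.Icc_subset_Icc hτ le_rfl
  have hE'rep : ∀ τ t : ℝ, 0 ≤ τ → τ ≤ t → E t = E τ + ∫ s in τ..t, E' s := by
    intro τ t hτ hτt
    have h3 := intervalIntegral.integral_add_adjacent_intervals (hE'int τ hτ)
      (hE'sub τ t hτ hτt)
    have h1 := hEAC' t (hτ.trans hτt)
    have h2 := hEAC' τ hτ
    linarith
  have hE'np : ∀ᵐ s ∂(volume : Measure ℝ), 0 < s → E' s ≤ 0 := by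
    filter_upwards [hdiss] with s h hs
    have h2 := h hs
    have h3 := mul_nonneg hC0.le (hDnn s)
    linarith
  have hmono : ∀ τ t : ℝ, 0 ≤ τ → τ ≤ t → E t ≤ E τ := by
    intro τ t hτ hτt
    have hrep := hE'rep τ t hτ hτt
    have hint : (∫ s in τ..t, E' s) ≤ ∫ s in τ..t, (0:ℝ) := by
      apply intervalIntegral.integral_mono_ae_restrict hτt (hE'sub τ t hτ hτt)
        intervalIntegrable_const
      filter_upwards [ae_restrict_of_ae hE'np, ae_restrict_of_ae hne0,
        ae_restrict_mem measurableSet_Icc] with s h1 h2 h3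
      exact h1 (lt_of_le_of_ne (hτ.trans h3.1) (Ne.symm h2))
    simp only [intervalIntegral.integral_zero] at hint
    linarith
  -- continuity / integrability
  have hEcont : ∀ T : ℝ, 0 ≤ T → ContinuousOn E (Set.Icc 0 T) := by
    intro T hT
    have hi : IntegrableOn E' (Set.uIcc 0 T) volume := by
      rw [Set.uIcc_of_le hT]
      exact (intervalIntegrable_iff_integrableOn_Icc_of_le hT).1 (hE'int T hT)
    have h1 : ContinuousOn (fun x => ∫ s in (0:ℝ)..x, E' s) (Set.uIcc 0 T) :=
      intervalIntegral.continuousOn_primitive_interval hi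
    rw [Set.uIcc_of_le hT] at h1
    exact (continuousOn_const.add h1).congr (fun x hx => hEAC' x hx.1)
  have hIntE : ∀ s : ℝ, 0 ≤ s → IntervalIntegrable E volume 0 s := by
    intro s hs
    apply ContinuousOn.intervalIntegrable
    rw [Set.uIcc_of_le hs]
    exact hEcont s hs
  have hIntθ : ∀ s : ℝ, 0 ≤ s → IntervalIntegrable (fun u => E u ^ θ) volume 0 s := by
    intro s hs
    apply ContinuousOn.intervalIntegrable
    rw [Set.uIcc_of_le hs]
    exact (hEcont s hs).rpow_const (fun x _ => Or.inr hθpos.le)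
  have hGnn : ∀ s : ℝ, 0 ≤ s → 0 ≤ G s := by
    intro s hs
    have h1 : (0:ℝ) ≤ (∫ u in (0:ℝ)..s, E u ^ θ) ^ q :=
      Real.rpow_nonneg (intervalIntegral.integral_nonneg hs
        (fun u _ => Real.rpow_nonneg (hEnn u) _)) _
    have h2 : (0:ℝ) ≤ ∫ u in (0:ℝ)..s, E u :=
      intervalIntegral.integral_nonneg hs (fun u _ => hEnn u)
    simp only [hGdef]
    linarith
  -- volume constants
  set V : ℝ := (volume (Metric.ball (0:EuclideanSpace ℝ (Fin 3)) 1)).toReal with hVdef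
  have hV : 0 < V := by
    rw [hVdef]
    exact ENNReal.toReal_pos (measure_ball_pos volume 0 one_pos).ne' measure_ball_lt_top.ne
  set Qc : ℝ := K^2 * V with hQcdef
  have hQc : 0 < Qc := by rw [hQcdef]; positivity
  -- key pointwise differential inequality
  have hkey : ∀ ρ : ℝ, 0 < ρ → ∀ s : ℝ, 0 < s →
      Integrable (fun ξ : EuclideanSpace ℝ (Fin 3) => ‖ξ‖^2 * ‖v s ξ‖^2) →
      (E' s + C0 * ∫ ξ, ‖ξ‖^2 * ‖v s ξ‖^2 ≤ 0) →
      E' s ≤ -(C0*ρ^2) * E s + C0*ρ^2 * (Qc * ρ^3 * (1 + ρ * G s)^2) := by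
    intro ρ hρ s hs hInt hDi
    have hGs : 0 ≤ G s := hGnn s hs.le
    set cb : Set (EuclideanSpace ℝ (Fin 3)) := Metric.closedBall 0 ρ with hcb
    have hsplit : (∫ ξ in cb, ‖v s ξ‖^2) + (∫ ξ in cbᶜ, ‖v s ξ‖^2) = E s :=
      integral_add_compl measurableSet_closedBall (hL2 s)
    have hlow : (∫ ξ in cb, ‖v s ξ‖^2) ≤ (K * (1 + ρ * G s))^2 * (ρ^3 * V) := by
      have hb : (∫ ξ in cb, ‖v s ξ‖^2) ≤ ∫ _ξ in cb, (K * (1 + ρ * G s))^2 := by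
        refine integral_mono_ae ((hL2 s).restrict)
          (integrableOn_const measure_closedBall_lt_top.ne) ?_
        filter_upwards [ae_restrict_of_ae (hptw' s hs.le),
          ae_restrict_mem measurableSet_closedBall] with ξ h1 h2
        have hξ : ‖ξ‖ ≤ ρ := mem_closedBall_zero_iff.1 h2
        have h3 : ‖v s ξ‖ ≤ K * (1 + ρ * G s) := by
          refine h1.trans ?_
          have h4 : ‖ξ‖ * G s ≤ ρ * G s := mul_le_mul_of_nonneg_right hξ hGs
          exact mul_le_mul_of_nonneg_left (by linarith) hK.le
        exact pow_le_pow_left₀ (norm_nonneg _) h3 2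
      rw [setIntegral_const, smul_eq_mul] at hb
      have hvol : (volume cb).toReal = ρ^3 * V := by
        rw [hcb, MeasureTheory.Measure.addHaar_closedBall volume 0 hρ.le,
          ENNReal.toReal_mul, ENNReal.toReal_ofReal (by positivity)]
        simp [finrank_euclideanSpace_fin, hVdef]
      rw [measureReal_def, hvol] at hb
      linarith [hb]
    have hhigh : ρ^2 * (∫ ξ in cbᶜ, ‖v s ξ‖^2) ≤ ∫ ξ, ‖ξ‖^2 * ‖v s ξ‖^2 := by
      have h1 : (∫ ξ in cbᶜ, ρ^2 * ‖v s ξ‖^2) ≤ ∫ ξ in cbᶜ, ‖ξ‖^2 * ‖v s ξ‖^2 := by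
        refine integral_mono_ae (((hL2 s).const_mul (ρ^2)).restrict) (hInt.restrict) ?_
        filter_upwards [ae_restrict_mem measurableSet_closedBall.compl] with ξ hξ
        have h2 : ρ ≤ ‖ξ‖ := by
          by_contra h
          push_neg at h
          exact hξ (mem_closedBall_zero_iff.2 h.le)
        have h3 : ρ^2 ≤ ‖ξ‖^2 := pow_le_pow_left₀ hρ.le h2 2
        exact mul_le_mul_of_nonneg_right h3 (by positivity)
      have h2 : (∫ ξ in cbᶜ, ‖ξ‖^2 * ‖v s ξ‖^2) ≤ ∫ ξ, ‖ξ‖^2 * ‖v s ξ‖^2 :=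
        setIntegral_le_integral hInt (Filter.Eventually.of_forall fun ξ => by positivity)
      have h3 : (∫ ξ in cbᶜ, ρ^2 * ‖v s ξ‖^2) = ρ^2 * ∫ ξ in cbᶜ, ‖v s ξ‖^2 :=
        integral_const_mul _ _
      linarith
    have e1 : E s - (K * (1 + ρ * G s))^2 * (ρ^3 * V) ≤ ∫ ξ in cbᶜ, ‖v s ξ‖^2 := by
      linarith
    have e2 : ρ^2 * (E s - (K * (1 + ρ * G s))^2 * (ρ^3 * V)) ≤ ∫ ξ, ‖ξ‖^2 * ‖v s ξ‖^2 := by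
      have := mul_le_mul_of_nonneg_left e1 (by positivity : (0:ℝ) ≤ ρ^2)
      linarith
    have e3 : (K * (1 + ρ * G s))^2 * (ρ^3 * V) = Qc * ρ^3 * (1 + ρ * G s)^2 := by
      rw [hQcdef]; ring
    rw [e3] at e2
    have e5 := mul_le_mul_of_nonneg_left e2 hC0.le
    linarith only [e5, hDi]
  -- good set
  have hGood : ∀ᵐ s ∂(volume : Measure ℝ), 0 < s →
      (Integrable (fun ξ : EuclideanSpace ℝ (Fin 3) => ‖ξ‖^2 * ‖v s ξ‖^2) ∧
        E' s + C0 * ∫ ξ, ‖ξ‖^2 * ‖v s ξ‖^2 ≤ 0) := by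
    filter_upwards [hDfin, hdiss] with s h1 h2 hs
    exact ⟨h1 hs, h2 hs⟩
  -- integrated core inequality
  have hcoreW : ∀ ρ W τ t : ℝ, 0 < ρ → 0 ≤ W → 0 ≤ τ → τ ≤ t →
      (∀ s, τ ≤ s → s ≤ t → G s ≤ W) →
      E t * (1 + C0 * ρ^2 * (t - τ)) ≤
        E τ + C0 * ρ^2 * (t - τ) * (Qc * ρ^3 * (1 + ρ*W)^2) := by
    intro ρ W τ t hρ hW hτ hτt hGW
    have hrep := hE'rep τ t hτ hτt
    have hmle : (∫ s in τ..t, E' s) ≤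
        (t - τ) * (-(C0*ρ^2) * E t + C0*ρ^2 * (Qc * ρ^3 * (1 + ρ*W)^2)) := by
      have h1 : (∫ s in τ..t, E' s) ≤
          ∫ _s in τ..t, (-(C0*ρ^2) * E t + C0*ρ^2 * (Qc * ρ^3 * (1 + ρ*W)^2)) := by
        apply intervalIntegral.integral_mono_ae_restrict hτt (hE'sub τ t hτ hτt)
          intervalIntegrable_const
        filter_upwards [ae_restrict_of_ae hGood, ae_restrict_of_ae hne0,
          ae_restrict_mem measurableSet_Icc] with s hg h2 h3
        have hs0 : 0 < s := lt_of_le_of_ne (hτ.trans h3.1) (Ne.symm h2)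
        obtain ⟨hint, hdi⟩ := hg hs0
        have hk := hkey ρ hρ s hs0 hint hdi
        have hEst : E t ≤ E s := hmono s t hs0.le h3.2
        have hGsW : G s ≤ W := hGW s h3.1 h3.2
        have hb1 : 1 + ρ * G s ≤ 1 + ρ * W := by
          have := mul_le_mul_of_nonneg_left hGsW hρ.le
          linarith only [this]
        have hb0 : (0:ℝ) ≤ 1 + ρ * G s := by
          have := mul_nonneg hρ.le (hGnn s hs0.le)
          linarith only [this]
        have hsq : (1 + ρ * G s)^2 ≤ (1 + ρ*W)^2 := pow_le_pow_left₀ hb0 hb1 2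
        have hQρ : (0:ℝ) ≤ C0 * ρ^2 * (Qc * ρ^3) :=
          mul_nonneg (by positivity) (mul_nonneg hQc.le (by positivity))
        linarith only [hk, mul_le_mul_of_nonneg_left hsq hQρ,
          mul_le_mul_of_nonneg_left hEst (by positivity : (0:ℝ) ≤ C0*ρ^2)]
      rw [intervalIntegral.integral_const, smul_eq_mul] at h1
      exact h1
    linarith only [hrep, hmle]
  -- stage machinery
  have stage : ∀ (M g : ℝ), 0 ≤ M → 0 ≤ g → (∀ s, 0 ≤ s → G s ≤ M * (1+s)^g) →
      ∀ γ : ℝ, 0 < γ → γ ≤ 3/2 → 2*g ≤ 5/2 - γ →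
      ∃ C : ℝ, 0 < C ∧ ∀ t, 0 ≤ t → E t ≤ C * (1+t)^(-γ) := by
    intro M g hM hg hGM γ h1 h2 h3
    apply aux_iter E C0 Qc M g γ hC0 hQc.le hM h1 h2 h3 (fun t _ => hEnn t) hmono
    intro ρ τ t hρ hτ hτt
    have ht0 : 0 ≤ t := hτ.trans hτt
    apply hcoreW ρ (M*(1+t)^g) τ t hρ
      (mul_nonneg hM (Real.rpow_nonneg (by linarith) g)) hτ hτt
    intro s hs1 hs2
    have hs0 : 0 ≤ s := hτ.trans hs1
    calc G s ≤ M * (1+s)^g := hGM s hs0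
      _ ≤ M * (1+t)^g := mul_le_mul_of_nonneg_left
          (Real.rpow_le_rpow (by linarith) (by linarith) hg) hM
  have gbound : ∀ (Cp γp g : ℝ), 0 < Cp → 0 ≤ γp →
      ((1 - min (γp*θ) (1/2)) * q ≤ g) → (1 - min γp (1/2) ≤ g) →
      (∀ u, 0 ≤ u → E u ≤ Cp * (1+u)^(-γp)) →
      ∃ M, 0 ≤ M ∧ ∀ s, 0 ≤ s → G s ≤ M * (1+s)^g := by
    intro Cp γp g h1 h2 h3 h4 h5
    obtain ⟨M, hM, h⟩ := aux_G E θ q Cp γp g hθpos hq0.le hq1 h1 h2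
      hEnn hIntθ hIntE h3 h4 h5
    exact ⟨M, hM, fun s hs => h s hs⟩
  -- stage 1 : γp = 0, g = 1, γ = 1/2
  have hE01 : (0:ℝ) < E 0 + 1 := by linarith [hEnn 0]
  have dec0 : ∀ u : ℝ, 0 ≤ u → E u ≤ (E 0 + 1) * (1+u) ^ (-(0:ℝ)) := by
    intro u hu
    have h1 : ((1+u:ℝ)) ^ (-(0:ℝ)) = 1 := by
      rw [neg_zero, Real.rpow_zero]
    rw [h1, mul_one]
    linarith [hmono 0 u le_rfl hu]
  obtain ⟨M1, hM1, hG1⟩ := gbound (E 0 + 1) 0 1 hE01 le_rfl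
    (by
      rw [zero_mul, min_eq_left (by norm_num : (0:ℝ) ≤ 1/2)]
      linarith)
    (by rw [min_eq_left (by norm_num : (0:ℝ) ≤ 1/2)]; norm_num)
    dec0
  obtain ⟨C1, hC1, hdec1⟩ := stage M1 1 hM1 (by norm_num) hG1 (1/2)
    (by norm_num) (by norm_num) (by norm_num)
  -- stage 2 : γp = 1/2, g = 3/4, γ = 1
  obtain ⟨M2, hM2, hG2⟩ := gbound C1 (1/2) (3/4) hC1 (by norm_num)
    (by
      rcases le_total ((1/2)*θ) (1/2) with h | h
      · rw [min_eq_left h]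
        linarith only [hq1, hθq, hα]
      · rw [min_eq_right h]
        linarith only [hq1])
    (by norm_num)
    hdec1
  obtain ⟨C2, hC2, hdec2⟩ := stage M2 (3/4) hM2 (by norm_num) hG2 1
    one_pos (by norm_num) (by norm_num)
  -- stage 3 : γp = 1, g = 1/2, γ = 3/2
  obtain ⟨M3, hM3, hG3⟩ := gbound C2 1 (1/2) hC2 (by norm_num)
    (by
      rw [one_mul, min_eq_right hθhalf.le]
      linarith only [hq1])
    (by norm_num)
    hdec2
  obtain ⟨C3, hC3, hdec3⟩ := stage M3 (1/2) hM3 (by norm_num) hG3 (3/2)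
    (by norm_num) le_rfl (by norm_num)
  exact ⟨C3, hC3, fun t ht => hdec3 t ht⟩
end

section
/- For each $t \ge 0$ let $v(t,\cdot) \in L^2(\mathbb{R}^3;\mathbb{C})$, and set $E(t) = \int_{\mathbb{R}^3} |v(t,\xi)|^2\,d\xi$, $y(t) = \int_{\mathbb{R}^3} |\xi|^2 |v(t,\xi)|^2\,d\xi$ and $z(t) = \int_{\mathbb{R}^3} |\xi|^4 |v(t,\xi)|^2\,d\xi$, assumed finite for every $t$. Suppose $y$ is locally absolutely continuous on $[0,\infty)$ with $y'(t) + z(t) \le 0$ for almost every $t > 0$, and that there is $K > 0$ with $E(t) \le K (1+t)^{-3/2}$ for all $t \ge 0$. Then there is a constant $C$, depending only on $y(0)$ and $K$, such that $y(t) \le C (1+t)^{-5/2}$ for all $t \ge 0$. -/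
open MeasureTheory

/-- Abstract (Fourier-side) form of the second main theorem. With
`E(t) = ∫ |v(t,ξ)|² dξ`, `y(t) = ∫ |ξ|²|v(t,ξ)|² dξ`, `z(t) = ∫ |ξ|⁴|v(t,ξ)|² dξ`
all finite, if `y` is locally absolutely continuous (encoded by `y t = y 0 + ∫₀ᵗ y'`
with `y'` locally integrable) with `y'(t) + z(t) ≤ 0` a.e., and
`E(t) ≤ K (1+t)^{-3/2}`, then `y(t) ≤ C (1+t)^{-5/2}` for a constant
`C = C(y(0), K)`. -/
theorem gradient_decay_abstract
    (v : ℝ → EuclideanSpace ℝ (Fin 3) → ℂ)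
    (hL2 : ∀ t : ℝ, Integrable (fun ξ : EuclideanSpace ℝ (Fin 3) => ‖v t ξ‖ ^ 2))
    (hy : ∀ t : ℝ, Integrable (fun ξ : EuclideanSpace ℝ (Fin 3) => ‖ξ‖ ^ 2 * ‖v t ξ‖ ^ 2))
    (hz : ∀ t : ℝ, Integrable (fun ξ : EuclideanSpace ℝ (Fin 3) => ‖ξ‖ ^ 4 * ‖v t ξ‖ ^ 2))
    (y' : ℝ → ℝ)
    (hy'int : ∀ t : ℝ, 0 ≤ t → IntervalIntegrable y' volume 0 t)
    (hyAC : ∀ t : ℝ, 0 ≤ t →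
      (∫ ξ, ‖ξ‖ ^ 2 * ‖v t ξ‖ ^ 2) = (∫ ξ, ‖ξ‖ ^ 2 * ‖v 0 ξ‖ ^ 2) + ∫ s in (0:ℝ)..t, y' s)
    (hdiss : ∀ᵐ t ∂(volume : Measure ℝ), 0 < t →
      y' t + (∫ ξ, ‖ξ‖ ^ 4 * ‖v t ξ‖ ^ 2) ≤ 0)
    (K : ℝ) (hK : 0 < K)
    (hE : ∀ t : ℝ, 0 ≤ t → (∫ ξ, ‖v t ξ‖ ^ 2) ≤ K * (1 + t) ^ (-(3 / 2) : ℝ)) :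
    ∃ C : ℝ, 0 < C ∧ ∀ t : ℝ, 0 ≤ t →
      (∫ ξ, ‖ξ‖ ^ 2 * ‖v t ξ‖ ^ 2) ≤ C * (1 + t) ^ (-(5 / 2) : ℝ) := by
  have hYnn : ∀ t : ℝ, 0 ≤ ∫ ξ, ‖ξ‖ ^ 2 * ‖v t ξ‖ ^ 2 := fun t =>
    integral_nonneg fun ξ => by positivity
  have hZnn : ∀ t : ℝ, 0 ≤ ∫ ξ, ‖ξ‖ ^ 4 * ‖v t ξ‖ ^ 2 := fun t =>
    integral_nonneg fun ξ => by positivity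
  -- frequency splitting inequality: c·y ≤ z + c²·E
  have hsplit : ∀ (t c : ℝ), 0 ≤ c →
      c * (∫ ξ, ‖ξ‖ ^ 2 * ‖v t ξ‖ ^ 2) ≤
        (∫ ξ, ‖ξ‖ ^ 4 * ‖v t ξ‖ ^ 2) + c ^ 2 * ∫ ξ, ‖v t ξ‖ ^ 2 := by
    intro t c hc
    calc c * (∫ ξ, ‖ξ‖ ^ 2 * ‖v t ξ‖ ^ 2)
        = ∫ ξ, c * (‖ξ‖ ^ 2 * ‖v t ξ‖ ^ 2) := (integral_const_mul c _).symm
      _ ≤ ∫ ξ, (‖ξ‖ ^ 4 * ‖v t ξ‖ ^ 2 + c ^ 2 * ‖v t ξ‖ ^ 2) := by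
          refine integral_mono ((hy t).const_mul c)
            ((hz t).add ((hL2 t).const_mul _)) fun ξ => ?_
          nlinarith [mul_nonneg (sq_nonneg (‖ξ‖ ^ 2 - c)) (sq_nonneg ‖v t ξ‖),
            mul_nonneg (mul_nonneg hc (sq_nonneg ‖ξ‖)) (sq_nonneg ‖v t ξ‖)]
      _ = _ := by rw [integral_add (hz t) ((hL2 t).const_mul _), integral_const_mul]
  have hne : ∀ᵐ s : ℝ ∂(volume : Measure ℝ), s ≠ 0 := by
    rw [ae_iff]
    simpa using measure_singleton (0 : ℝ)
  have hy'ab : ∀ a b : ℝ, 0 ≤ a → a ≤ b → IntervalIntegrable y' volume a b := by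
    intro a b ha hab
    refine (hy'int b (ha.trans hab)).mono_set ?_
    rw [Set.uIcc_of_le hab, Set.uIcc_of_le (ha.trans hab)]
    exact Set.Icc_subset_Icc ha le_rfl
  have hYdiff : ∀ a b : ℝ, 0 ≤ a → a ≤ b →
      (∫ ξ, ‖ξ‖ ^ 2 * ‖v b ξ‖ ^ 2) = (∫ ξ, ‖ξ‖ ^ 2 * ‖v a ξ‖ ^ 2) + ∫ s in a..b, y' s := by
    intro a b ha hab
    have hadd := intervalIntegral.integral_add_adjacent_intervals
      (hy'int a ha) (hy'ab a b ha hab)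
    rw [hyAC b (ha.trans hab), hyAC a ha, ← hadd]
    ring
  have hYmono : ∀ a b : ℝ, 0 ≤ a → a ≤ b →
      (∫ ξ, ‖ξ‖ ^ 2 * ‖v b ξ‖ ^ 2) ≤ ∫ ξ, ‖ξ‖ ^ 2 * ‖v a ξ‖ ^ 2 := by
    intro a b ha hab
    have h0 : (∫ s in a..b, y' s) ≤ ∫ s in a..b, (0 : ℝ) := by
      refine intervalIntegral.integral_mono_ae_restrict hab (hy'ab a b ha hab)
        intervalIntegrable_const ?_
      filter_upwards [ae_restrict_of_ae hdiss, ae_restrict_of_ae hne,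
        ae_restrict_mem measurableSet_Icc] with s h1 h2 hs
      have hs0 : 0 < s := lt_of_le_of_ne (ha.trans hs.1) (Ne.symm h2)
      linarith [h1 hs0, hZnn s]
    simp only [intervalIntegral.integral_zero] at h0
    rw [hYdiff a b ha hab]
    linarith
  -- key step on an interval with fixed splitting level c
  have hkey : ∀ a b c : ℝ, 0 ≤ a → a ≤ b → 0 ≤ c →
      (∫ ξ, ‖ξ‖ ^ 2 * ‖v b ξ‖ ^ 2) * (1 + c * (b - a)) ≤
        (∫ ξ, ‖ξ‖ ^ 2 * ‖v a ξ‖ ^ 2) +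
          c ^ 2 * K * ((b - a) * (1 + a) ^ (-(3 / 2) : ℝ)) := by
    intro a b c ha hab hc
    have hbd : (∫ s in a..b, y' s) ≤
        ∫ s in a..b, (-(c * ∫ ξ, ‖ξ‖ ^ 2 * ‖v b ξ‖ ^ 2) +
          c ^ 2 * (K * (1 + a) ^ (-(3 / 2) : ℝ))) := by
      refine intervalIntegral.integral_mono_ae_restrict hab (hy'ab a b ha hab)
        intervalIntegrable_const ?_
      filter_upwards [ae_restrict_of_ae hdiss, ae_restrict_of_ae hne,
        ae_restrict_mem measurableSet_Icc] with s h1 h2 hs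
      have hs0 : 0 < s := lt_of_le_of_ne (ha.trans hs.1) (Ne.symm h2)
      have hd := h1 hs0
      have hsp := hsplit s c hc
      have hYs := hYmono s b hs0.le hs.2
      have h5 : c * (∫ ξ, ‖ξ‖ ^ 2 * ‖v b ξ‖ ^ 2) ≤
          c * ∫ ξ, ‖ξ‖ ^ 2 * ‖v s ξ‖ ^ 2 := mul_le_mul_of_nonneg_left hYs hc
      have hEs := hE s hs0.le
      have hrp : (1 + s) ^ (-(3 / 2) : ℝ) ≤ (1 + a) ^ (-(3 / 2) : ℝ) :=
        Real.rpow_le_rpow_of_nonpos (by linarith) (by linarith [hs.1]) (by norm_num)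
      have h6 : c ^ 2 * (∫ ξ, ‖v s ξ‖ ^ 2) ≤ c ^ 2 * (K * (1 + s) ^ (-(3 / 2) : ℝ)) :=
        mul_le_mul_of_nonneg_left hEs (sq_nonneg c)
      have h7 : c ^ 2 * (K * (1 + s) ^ (-(3 / 2) : ℝ)) ≤
          c ^ 2 * (K * (1 + a) ^ (-(3 / 2) : ℝ)) :=
        mul_le_mul_of_nonneg_left (mul_le_mul_of_nonneg_left hrp hK.le) (sq_nonneg c)
      linarith
    rw [intervalIntegral.integral_const, smul_eq_mul] at hbd
    have hYd := hYdiff a b ha hab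
    rw [hYd] at hbd ⊢
    nlinarith [hbd]
  -- constants
  set θ : ℝ := (2 : ℝ) ^ (-(5 / 2) : ℝ) with hθdef
  have hθpos : 0 < θ := Real.rpow_pos_of_pos two_pos _
  have hθsq : θ ^ 2 = 1 / 32 := by
    rw [hθdef, ← Real.rpow_natCast ((2 : ℝ) ^ (-(5 / 2) : ℝ)) 2,
      ← Real.rpow_mul (by norm_num : (0:ℝ) ≤ 2)]
    norm_num
  have hθlt : 1 / 11 < θ := by
    apply lt_of_pow_lt_pow_left₀ 2 hθpos.le
    rw [hθsq]; norm_num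
  have hθle : θ ≤ 2 / 11 := by
    apply le_of_pow_le_pow_left₀ (by norm_num : (2:ℕ) ≠ 0) (by norm_num)
    rw [hθsq]; norm_num
  have hpow2 : ∀ m : ℕ, ((2 : ℝ) ^ m) ^ (-(5 / 2) : ℝ) = θ ^ m := by
    intro m
    rw [hθdef, ← Real.rpow_natCast (2 : ℝ) m,
      ← Real.rpow_natCast ((2 : ℝ) ^ (-(5 / 2) : ℝ)) m,
      ← Real.rpow_mul (by norm_num : (0:ℝ) ≤ 2),
      ← Real.rpow_mul (by norm_num : (0:ℝ) ≤ 2), mul_comm]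
  have hpow1 : ∀ m : ℕ, ((2 : ℝ) ^ m)⁻¹ * ((2 : ℝ) ^ m) ^ (-(3 / 2) : ℝ) = θ ^ m := by
    intro m
    rw [← hpow2 m, ← Real.rpow_neg_one ((2 : ℝ) ^ m),
      ← Real.rpow_add (by positivity)]
    norm_num
  set M : ℝ := ((∫ ξ, ‖ξ‖ ^ 2 * ‖v 0 ξ‖ ^ 2) + 100 * K) / (11 * θ - 1) with hMdef
  have hden : 0 < 11 * θ - 1 := by linarith
  have hMpos : 0 < M := div_pos (by linarith [hYnn 0]) hden
  have hMge : (∫ ξ, ‖ξ‖ ^ 2 * ‖v 0 ξ‖ ^ 2) ≤ M := by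
    rw [hMdef, le_div_iff₀ hden]
    nlinarith [hYnn 0, hK.le, mul_nonneg (hYnn 0) (by linarith : (0:ℝ) ≤ 2 - 11 * θ)]
  have hMrec : M + 100 * K ≤ 11 * θ * M := by
    have hid : M * (11 * θ - 1) = (∫ ξ, ‖ξ‖ ^ 2 * ‖v 0 ξ‖ ^ 2) + 100 * K := by
      rw [hMdef]; field_simp
    nlinarith [hYnn 0]
  -- dyadic induction
  have hind : ∀ n : ℕ, (∫ ξ, ‖ξ‖ ^ 2 * ‖v ((2 : ℝ) ^ n - 1) ξ‖ ^ 2) ≤ M * θ ^ n := by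
    intro n
    induction n with
    | zero => simpa using hMge
    | succ n ih =>
      have h2n : (0:ℝ) < 2 ^ n := by positivity
      have ha : (0:ℝ) ≤ 2 ^ n - 1 := by
        have : (1:ℝ) ≤ 2 ^ n := one_le_pow₀ (by norm_num)
        linarith
      have hab : (2:ℝ) ^ n - 1 ≤ 2 ^ (n + 1) - 1 := by
        have : (2:ℝ) ^ n ≤ 2 ^ (n + 1) := by
          apply pow_le_pow_right₀ (by norm_num) (Nat.le_succ n)
        linarith
      have hc : (0:ℝ) ≤ 10 / 2 ^ n := by positivity
      have h := hkey ((2:ℝ) ^ n - 1) ((2:ℝ) ^ (n + 1) - 1) (10 / 2 ^ n) ha hab hc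
      have hba : (2:ℝ) ^ (n + 1) - 1 - ((2:ℝ) ^ n - 1) = 2 ^ n := by
        rw [pow_succ]; ring
      have h11 : 1 + 10 / (2:ℝ) ^ n * ((2:ℝ) ^ (n + 1) - 1 - ((2:ℝ) ^ n - 1)) = 11 := by
        rw [hba]; field_simp
        norm_num
      have hrhs : (10 / (2:ℝ) ^ n) ^ 2 * K *
          (((2:ℝ) ^ (n + 1) - 1 - ((2:ℝ) ^ n - 1)) *
            (1 + ((2:ℝ) ^ n - 1)) ^ (-(3 / 2) : ℝ)) = 100 * K * θ ^ n := by
        have e1 : (1 : ℝ) + ((2:ℝ) ^ n - 1) = 2 ^ n := by ring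
        rw [hba, e1, ← hpow1 n]
        field_simp
        ring
      rw [h11, hrhs] at h
      have hθn : (0:ℝ) ≤ θ ^ n := by positivity
      have h2 : M * θ ^ n + 100 * K * θ ^ n ≤ 11 * (M * θ ^ (n + 1)) := by
        have hm := mul_le_mul_of_nonneg_right hMrec hθn
        calc M * θ ^ n + 100 * K * θ ^ n = (M + 100 * K) * θ ^ n := by ring
          _ ≤ 11 * θ * M * θ ^ n := hm
          _ = 11 * (M * θ ^ (n + 1)) := by ring
      nlinarith [ih]
  -- conclusion
  refine ⟨M / θ, div_pos hMpos hθpos, fun t ht => ?_⟩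
  set n := Nat.log 2 ⌊1 + t⌋₊ with hn
  have hfl : 1 ≤ ⌊1 + t⌋₊ := Nat.le_floor (by push_cast; linarith)
  have h1 : (2:ℝ) ^ n ≤ 1 + t := by
    have h := Nat.pow_log_le_self 2 (by omega : ⌊1 + t⌋₊ ≠ 0)
    calc (2:ℝ) ^ n = ((2 ^ n : ℕ) : ℝ) := by push_cast; ring
      _ ≤ (⌊1 + t⌋₊ : ℝ) := by exact_mod_cast h
      _ ≤ 1 + t := Nat.floor_le (by linarith)
  have h2 : 1 + t < (2:ℝ) ^ (n + 1) := by
    have h := Nat.lt_pow_succ_log_self (by norm_num : 1 < 2) ⌊1 + t⌋₊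
    have h' : (⌊1 + t⌋₊ : ℝ) + 1 ≤ (2:ℝ) ^ (n + 1) := by
      exact_mod_cast Nat.succ_le_of_lt h
    have hlt := Nat.lt_floor_add_one (1 + t)
    linarith
  have ha : (0:ℝ) ≤ (2:ℝ) ^ n - 1 := by
    have : (1:ℝ) ≤ 2 ^ n := one_le_pow₀ (by norm_num)
    linarith
  have hmt : (2:ℝ) ^ n - 1 ≤ t := by linarith
  calc (∫ ξ, ‖ξ‖ ^ 2 * ‖v t ξ‖ ^ 2)
      ≤ ∫ ξ, ‖ξ‖ ^ 2 * ‖v ((2:ℝ) ^ n - 1) ξ‖ ^ 2 := hYmono _ t ha hmt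
    _ ≤ M * θ ^ n := hind n
    _ = M / θ * θ ^ (n + 1) := by
        field_simp
        ring
    _ = M / θ * ((2:ℝ) ^ (n + 1)) ^ (-(5 / 2) : ℝ) := by rw [hpow2]
    _ ≤ M / θ * (1 + t) ^ (-(5 / 2) : ℝ) := by
        refine mul_le_mul_of_nonneg_left ?_ (div_pos hMpos hθpos).le
        exact Real.rpow_le_rpow_of_nonpos (by linarith) h2.le (by norm_num)
end
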